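/- arXiv:1707.07981 — 3 statements merged into one kernel-verified Lean document; each statement's English description precedes it below -/
import Mathlib

section
/- If Ψ is a maximal closed subroot system of Φ, the affine root system of type D_{n+1}^{(2)}, such that Gr(Ψ) is not closed in Gr(Φ) (i.e., there exist u, v ∈ Gr(Ψ) with u + v ∈ Gr(Φ) ∖ Gr(Ψ)), then Ψ = Ψ_I for some proper subset I ⊊ {1, …, n}. -/
noncomputable section

variable {V : Type*} [NormedAddCommGroup V] [InnerProductSpace ℝ V]

/-- The Cartan pairing `⟨β, α∨⟩ = 2(β,α)/(α,α)`. -/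
def cartanPair (α β : V) : ℝ := 2 * (inner ℝ β α : ℝ) / (inner ℝ α α : ℝ)

/-- The reflection `s_α` on `V`: `s_α(β) = β - ⟨β,α∨⟩ α`. -/
def reflV (α β : V) : V := β - cartanPair α β • α

/-- The affine reflection `s_x` on `V × ℝ` with respect to the bilinear form
`B((x,a),(y,b)) = (x,y)`. -/
def reflA (x y : V × ℝ) : V × ℝ :=
  y - (2 * (inner ℝ y.1 x.1 : ℝ) / (inner ℝ x.1 x.1 : ℝ)) • x

/-- A finite irreducible reduced crystallographic root system in `V`. -/
structure IsIrreducibleRootSystem (R : Set V) : Prop where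
  finite : R.Finite
  spans : Submodule.span ℝ R = ⊤
  zero_notMem : (0 : V) ∉ R
  reduced : ∀ α ∈ R, ∀ c : ℝ, c • α ∈ R → c = 1 ∨ c = -1
  cartan_int : ∀ α ∈ R, ∀ β ∈ R, ∃ n : ℤ, cartanPair α β = (n : ℝ)
  refl_mem : ∀ α ∈ R, ∀ β ∈ R, reflV α β ∈ R
  irred : ∀ A B : Set V, R = A ∪ B → A.Nonempty → B.Nonempty →
    ∃ a ∈ A, ∃ b ∈ B, (inner ℝ a b : ℝ) ≠ 0

/-- A subroot system of a set `Φ` of affine roots: a nonempty proper subset stable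
under the reflections `s_x`, `x ∈ Ψ`. -/
def IsSubrootSystem (Φ Ψ : Set (V × ℝ)) : Prop :=
  Ψ.Nonempty ∧ Ψ ⊆ Φ ∧ Ψ ≠ Φ ∧ ∀ x ∈ Ψ, ∀ y ∈ Ψ, reflA x y ∈ Ψ

/-- `Ψ` is closed in `Φ`. -/
def IsClosedIn (Φ Ψ : Set (V × ℝ)) : Prop := ∀ x ∈ Ψ, ∀ y ∈ Ψ, x + y ∈ Φ → x + y ∈ Ψ

def IsClosedSubrootSystem (Φ Ψ : Set (V × ℝ)) : Prop :=
  IsSubrootSystem Φ Ψ ∧ IsClosedIn Φ Ψ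

/-- A maximal closed subroot system of `Φ`: any closed subroot system of `Φ`
containing it equals it. -/
def IsMaximalClosedSubrootSystem (Φ Ψ : Set (V × ℝ)) : Prop :=
  IsClosedSubrootSystem Φ Ψ ∧ ∀ Δ, IsClosedSubrootSystem Φ Δ → Ψ ⊆ Δ → Δ = Ψ

/-- A subroot system of a finite root system `R`. -/
def IsSubrootSystemF (R S : Set V) : Prop :=
  S.Nonempty ∧ S ⊆ R ∧ S ≠ R ∧ ∀ α ∈ S, ∀ β ∈ S, reflV α β ∈ S

/-- `S` is closed in the finite root system `R`. -/
def IsClosedInF (R S : Set V) : Prop := ∀ α ∈ S, ∀ β ∈ S, α + β ∈ R → α + β ∈ S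

def IsMaximalClosedSubrootSystemF (R S : Set V) : Prop :=
  (IsSubrootSystemF R S ∧ IsClosedInF R S) ∧
    ∀ T, IsSubrootSystemF R T → IsClosedInF R T → S ⊆ T → T = S

/-- A `ℤ`-linear function on `S`: the restriction to `S` of an additive group
homomorphism from the subgroup of `V` generated by `S` to `ℤ`. -/
def IsZLinearOn (S : Set V) (p : V → ℤ) : Prop :=
  ∃ f : AddSubgroup.closure S →+ ℤ,
    ∀ α, ∀ h : α ∈ S, p α = f ⟨α, AddSubgroup.subset_closure h⟩

/-- An irreducible subset: nonempty and not a union of two nonempty mutually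
orthogonal subsets. -/
def IsIrreducibleSubset (S : Set V) : Prop :=
  S.Nonempty ∧ ∀ A B : Set V, S = A ∪ B → A.Nonempty → B.Nonempty →
    ∃ a ∈ A, ∃ b ∈ B, (inner ℝ a b : ℝ) ≠ 0

/-- Euclidean space `ℝ^n`. -/
abbrev Euc (n : ℕ) := EuclideanSpace ℝ (Fin n)

/-- The standard basis vector `ε_i`. -/
def eps {n : ℕ} (i : Fin n) : Euc n := EuclideanSpace.single i 1

/-- `σ` is a sign. -/
def PM (σ : ℝ) : Prop := σ = 1 ∨ σ = -1

/-- The gradient of a set of affine roots (concrete case): vectors appearing as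
the `ℝ^n`-component. -/
def GrC {n : ℕ} (Ψ : Set (Euc n × ℝ)) : Set (Euc n) := {v | ∃ c : ℝ, (v, c) ∈ Ψ}

/-- The affine root system of type `D_{n+1}^{(2)}`. -/
def PhiD2 (n : ℕ) : Set (Euc n × ℝ) :=
  {x | (∃ i : Fin n, ∃ σ : ℝ, PM σ ∧ ∃ r : ℤ, x = (σ • eps i, (r : ℝ))) ∨
       (∃ i j : Fin n, i ≠ j ∧ ∃ σ τ : ℝ, PM σ ∧ PM τ ∧ ∃ r : ℤ,
          x = (σ • eps i + τ • eps j, ((2 * r : ℤ) : ℝ)))}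

/-- The subset `Ψ_I` of `D_{n+1}^{(2)}` attached to `I ⊆ {1,…,n}`. -/
def PsiID2 (n : ℕ) (I : Set (Fin n)) : Set (Euc n × ℝ) :=
  {x | (∃ s ∈ I, ∃ σ : ℝ, PM σ ∧ ∃ r : ℤ, x = (σ • eps s, ((2 * r : ℤ) : ℝ))) ∨
       (∃ s : Fin n, s ∉ I ∧ ∃ σ : ℝ, PM σ ∧ ∃ r : ℤ,
          x = (σ • eps s, ((2 * r + 1 : ℤ) : ℝ))) ∨
       (∃ s t : Fin n, s ≠ t ∧ ((s ∈ I ∧ t ∈ I) ∨ (s ∉ I ∧ t ∉ I)) ∧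
          ∃ σ τ : ℝ, PM σ ∧ PM τ ∧ ∃ r : ℤ,
            x = (σ • eps s + τ • eps t, ((2 * r : ℤ) : ℝ)))}

namespace S13
variable {n : ℕ}

/-! ### Sign lemmas -/

lemma pm_one : PM (1:ℝ) := Or.inl rfl
lemma pm_neg {σ : ℝ} (h : PM σ) : PM (-σ) := by rcases h with h|h <;> simp [h, PM]
lemma pm_mul {σ τ : ℝ} (h : PM σ) (h' : PM τ) : PM (σ*τ) := by
  rcases h with h|h <;> rcases h' with h'|h' <;> simp [h,h',PM]
lemma pm_ne_zero {σ : ℝ} (h : PM σ) : σ ≠ 0 := by rcases h with h|h <;> simp [h]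
lemma pm_sq {σ : ℝ} (h : PM σ) : σ * σ = 1 := by rcases h with h|h <;> simp [h]
lemma pm_cases {σ τ : ℝ} (h : PM σ) (h' : PM τ) : τ = σ ∨ τ = -σ := by
  rcases h with h|h <;> rcases h' with h'|h' <;> simp [h,h']

/-! ### Coordinates -/

lemma eps_apply (i k : Fin n) : eps i k = if k = i then 1 else 0 :=
  EuclideanSpace.single_apply i 1 k

lemma coord_s (σ : ℝ) (i k : Fin n) : (σ • eps i) k = if k = i then σ else 0 := by
  rw [PiLp.smul_apply, eps_apply]; split <;> simp

lemma coord_l (σ τ : ℝ) (i j k : Fin n) :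
    (σ • eps i + τ • eps j) k = (if k = i then σ else 0) + (if k = j then τ else 0) := by
  rw [PiLp.add_apply, coord_s, coord_s]

lemma inner_eps (i j : Fin n) : (inner ℝ (eps i) (eps j) : ℝ) = if i = j then 1 else 0 := by
  rw [eps, eps, EuclideanSpace.inner_single_left]
  simp [EuclideanSpace.single_apply, eq_comm]

lemma inner_ss (σ τ : ℝ) (s t : Fin n) :
    (inner ℝ (σ • eps s) (τ • eps t) : ℝ) = σ * τ * (if s = t then 1 else 0) := by
  rw [real_inner_smul_left, real_inner_smul_right, inner_eps]; ring

lemma inner_self_short {σ : ℝ} (hσ : PM σ) (s : Fin n) :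
    (inner ℝ (σ • eps s) (σ • eps s) : ℝ) = 1 := by
  rw [inner_ss]; simp [pm_sq hσ]

lemma inner_ls (σ τ ρ : ℝ) (s t u : Fin n) :
    (inner ℝ (σ • eps s + τ • eps t) (ρ • eps u) : ℝ) =
      σ * ρ * (if s = u then 1 else 0) + τ * ρ * (if t = u then 1 else 0) := by
  rw [inner_add_left, inner_ss, inner_ss]

lemma inner_sl (σ τ ρ : ℝ) (s t u : Fin n) :
    (inner ℝ (ρ • eps u) (σ • eps s + τ • eps t) : ℝ) =
      σ * ρ * (if s = u then 1 else 0) + τ * ρ * (if t = u then 1 else 0) := by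
  rw [real_inner_comm]; exact inner_ls σ τ ρ s t u

lemma inner_ll (σ τ σ' τ' : ℝ) (s t u v : Fin n) :
    (inner ℝ (σ • eps s + τ • eps t) (σ' • eps u + τ' • eps v) : ℝ) =
      σ * σ' * (if s = u then 1 else 0) + σ * τ' * (if s = v then 1 else 0) +
      (τ * σ' * (if t = u then 1 else 0) + τ * τ' * (if t = v then 1 else 0)) := by
  rw [inner_add_right, inner_ls, inner_ls]; ring

lemma inner_self_long {σ τ : ℝ} (hσ : PM σ) (hτ : PM τ) {s t : Fin n} (h : s ≠ t) :
    (inner ℝ (σ • eps s + τ • eps t) (σ • eps s + τ • eps t) : ℝ) = 2 := by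
  rw [inner_ll]; simp [h, h.symm, pm_sq hσ, pm_sq hτ]; norm_num

/-! ### reflA computation -/

lemma reflA_pair {v w : Euc n} {a b c : ℝ}
    (h : 2 * (inner ℝ w v : ℝ) / (inner ℝ v v : ℝ) = c) :
    reflA (v, a) (w, b) = (w - c • v, b - c * a) := by
  simp only [reflA, h]; rfl

lemma reflA_short {σ : ℝ} (hσ : PM σ) (s : Fin n) (w : Euc n) (a b : ℝ) :
    reflA (σ • eps s, a) (w, b) =
      (w - (2 * (inner ℝ w (σ • eps s) : ℝ)) • (σ • eps s),
        b - (2 * (inner ℝ w (σ • eps s) : ℝ)) * a) := by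
  refine reflA_pair ?_
  rw [inner_self_short hσ, div_one]

lemma reflA_long {σ τ : ℝ} (hσ : PM σ) (hτ : PM τ) {s t : Fin n} (hst : s ≠ t)
    (w : Euc n) (a b : ℝ) :
    reflA (σ • eps s + τ • eps t, a) (w, b) =
      (w - (inner ℝ w (σ • eps s + τ • eps t) : ℝ) • (σ • eps s + τ • eps t),
        b - (inner ℝ w (σ • eps s + τ • eps t) : ℝ) * a) := by
  refine reflA_pair ?_
  rw [inner_self_long hσ hτ hst]
  ring

/-! ### Shape lemmas for Φ -/

lemma short_mem_phi {v : Euc n} {c σ : ℝ} {i : Fin n} (hσ : PM σ) (r : ℤ)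
    (hv : v = σ • eps i) (hc : c = (r : ℝ)) : (v, c) ∈ PhiD2 n :=
  Or.inl ⟨i, σ, hσ, r, by rw [hv, hc]⟩

lemma long_mem_phi {v : Euc n} {c σ τ : ℝ} {i j : Fin n} (hij : i ≠ j)
    (hσ : PM σ) (hτ : PM τ) (r : ℤ)
    (hv : v = σ • eps i + τ • eps j) (hc : c = ((2 * r : ℤ) : ℝ)) : (v, c) ∈ PhiD2 n :=
  Or.inr ⟨i, j, hij, σ, τ, hσ, hτ, r, by rw [hv, hc]⟩

lemma mem_grc {Ψ : Set (Euc n × ℝ)} {v : Euc n} {c : ℝ} (h : (v, c) ∈ Ψ) : v ∈ GrC Ψ :=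
  ⟨c, h⟩

lemma grc_coords {v : Euc n} (h : v ∈ GrC (PhiD2 n)) (k : Fin n) :
    v k = 0 ∨ v k = 1 ∨ v k = -1 := by
  obtain ⟨c, h⟩ := h
  rcases h with ⟨i, σ, hσ, r, hx⟩ | ⟨i, j, hij, σ, τ, hσ, hτ, r, hx⟩ <;>
    rw [Prod.mk.injEq] at hx <;> rw [hx.1]
  · rw [coord_s]
    rcases hσ with h1|h1 <;> split <;> simp [h1]
  · rw [coord_l]
    rcases hσ with h1|h1 <;> rcases hτ with h2|h2 <;> split <;> split <;>
      first
        | (exfalso; subst_vars; exact hij rfl)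
        | simp [h1, h2]

lemma grc_nonzero {v : Euc n} (h : v ∈ GrC (PhiD2 n)) : ∃ k, v k ≠ 0 := by
  obtain ⟨c, h⟩ := h
  rcases h with ⟨i, σ, hσ, r, hx⟩ | ⟨i, j, hij, σ, τ, hσ, hτ, r, hx⟩ <;>
    rw [Prod.mk.injEq] at hx
  · exact ⟨i, by rw [hx.1, coord_s]; simpa using pm_ne_zero hσ⟩
  · refine ⟨i, ?_⟩
    rw [hx.1, coord_l]
    simp [hij]
    simpa using pm_ne_zero hσ

lemma grc_support {v : Euc n} (h : v ∈ GrC (PhiD2 n)) :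
    ∃ i j : Fin n, ∀ k, k ≠ i → k ≠ j → v k = 0 := by
  obtain ⟨c, h⟩ := h
  rcases h with ⟨i, σ, hσ, r, hx⟩ | ⟨i, j, hij, σ, τ, hσ, hτ, r, hx⟩ <;>
    rw [Prod.mk.injEq] at hx
  · exact ⟨i, i, fun k hk _ => by rw [hx.1, coord_s, if_neg hk]⟩
  · exact ⟨i, j, fun k hk hk' => by rw [hx.1, coord_l, if_neg hk, if_neg hk', add_zero]⟩

lemma three_avoid {α : Type*} {k l m i j : α} (h1 : k ≠ l) (h2 : k ≠ m) (h3 : l ≠ m) :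
    (k ≠ i ∧ k ≠ j) ∨ (l ≠ i ∧ l ≠ j) ∨ (m ≠ i ∧ m ≠ j) := by
  by_cases hki : k = i
  · subst hki
    by_cases hlj : l = j
    · subst hlj
      exact Or.inr (Or.inr ⟨Ne.symm h2, Ne.symm h3⟩)
    · exact Or.inr (Or.inl ⟨Ne.symm h1, hlj⟩)
  · by_cases hkj : k = j
    · subst hkj
      by_cases hli : l = i
      · subst hli
        exact Or.inr (Or.inr ⟨Ne.symm h3, Ne.symm h2⟩)
      · exact Or.inr (Or.inl ⟨hli, Ne.symm h1⟩)
    · exact Or.inl ⟨hki, hkj⟩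

lemma grc_two {v : Euc n} (h : v ∈ GrC (PhiD2 n)) {k l m : Fin n}
    (h1 : k ≠ l) (h2 : k ≠ m) (h3 : l ≠ m) : v k = 0 ∨ v l = 0 ∨ v m = 0 := by
  obtain ⟨i, j, hs⟩ := grc_support h
  rcases three_avoid h1 h2 h3 with ⟨a, b⟩ | ⟨a, b⟩ | ⟨a, b⟩
  · exact Or.inl (hs _ a b)
  · exact Or.inr (Or.inl (hs _ a b))
  · exact Or.inr (Or.inr (hs _ a b))

end S13

namespace S13
variable {n : ℕ}

/-! ### Equality decodes -/

lemma short_eq_short {σ τ : ℝ} {s t : Fin n} (hσ : PM σ) (h : σ • eps s = τ • eps t) :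
    s = t ∧ σ = τ := by
  have hs := congrArg (fun v => v s) h
  rw [coord_s, coord_s, if_pos rfl] at hs
  by_cases hst : s = t
  · subst hst; rw [if_pos rfl] at hs; exact ⟨rfl, hs⟩
  · rw [if_neg hst] at hs; exact absurd hs (pm_ne_zero hσ)

lemma long_ne_short {σ τ ρ : ℝ} {s t u : Fin n} (hst : s ≠ t) (hσ : PM σ) (hτ : PM τ) :
    σ • eps s + τ • eps t ≠ ρ • eps u := by
  intro h
  have hs := congrArg (fun v => v s) h
  have ht := congrArg (fun v => v t) h
  rw [coord_l, coord_s, if_pos rfl, if_neg hst, add_zero] at hs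
  rw [coord_l, coord_s, if_pos rfl, if_neg (Ne.symm hst), zero_add] at ht
  by_cases hsu : s = u
  · rw [if_neg (fun h' => hst (hsu.trans h'.symm))] at ht
    exact pm_ne_zero hτ ht
  · rw [if_neg hsu] at hs
    exact pm_ne_zero hσ hs

lemma long_level_even {σ τ : ℝ} {s t : Fin n} {c : ℝ} (hst : s ≠ t) (hσ : PM σ) (hτ : PM τ)
    (h : (σ • eps s + τ • eps t, c) ∈ PhiD2 n) : ∃ r : ℤ, c = ((2 * r : ℤ) : ℝ) := by
  rcases h with ⟨i, σ', hσ', r, hx⟩ | ⟨i, j, hij, σ', τ', hσ', hτ', r, hx⟩ <;>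
    rw [Prod.mk.injEq] at hx
  · exact absurd hx.1 (long_ne_short hst hσ hτ)
  · exact ⟨r, hx.2⟩

/-! ### PsiID2 intro/elim -/

lemma psi_mem_long {I : Set (Fin n)} {v : Euc n} {c σ τ : ℝ} (s t : Fin n) (hst : s ≠ t)
    (hside : (s ∈ I ∧ t ∈ I) ∨ (s ∉ I ∧ t ∉ I)) (hσ : PM σ) (hτ : PM τ) (r : ℤ)
    (hv : v = σ • eps s + τ • eps t) (hc : c = ((2 * r : ℤ) : ℝ)) : (v, c) ∈ PsiID2 n I :=
  Or.inr (Or.inr ⟨s, t, hst, hside, σ, τ, hσ, hτ, r, by rw [hv, hc]⟩)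

lemma psi_mem_short {I : Set (Fin n)} {v : Euc n} {c σ : ℝ} (s : Fin n) (hσ : PM σ) (a : ℤ)
    (hv : v = σ • eps s) (hc : c = (a : ℝ))
    (hs : (s ∈ I ∧ a % 2 = 0) ∨ (s ∉ I ∧ a % 2 = 1)) : (v, c) ∈ PsiID2 n I := by
  rcases hs with ⟨hs, hp⟩ | ⟨hs, hp⟩
  · have ha : ((a : ℤ) : ℝ) = ((2 * (a / 2) : ℤ) : ℝ) := by
      exact_mod_cast congrArg (fun z : ℤ => (z : ℝ)) (show a = 2 * (a / 2) by omega)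
    exact Or.inl ⟨s, hs, σ, hσ, a / 2, by rw [hv, hc, ha]⟩
  · have ha : ((a : ℤ) : ℝ) = ((2 * (a / 2) + 1 : ℤ) : ℝ) := by
      exact_mod_cast congrArg (fun z : ℤ => (z : ℝ)) (show a = 2 * (a / 2) + 1 by omega)
    exact Or.inr (Or.inl ⟨s, hs, σ, hσ, a / 2, by rw [hv, hc, ha]⟩)

lemma psi_elim {I : Set (Fin n)} {x : Euc n × ℝ} (h : x ∈ PsiID2 n I) :
    (∃ s : Fin n, ∃ σ : ℝ, ∃ a : ℤ, PM σ ∧ x = (σ • eps s, (a : ℝ)) ∧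
      ((s ∈ I ∧ a % 2 = 0) ∨ (s ∉ I ∧ a % 2 = 1))) ∨
    (∃ s t : Fin n, ∃ σ τ : ℝ, ∃ r : ℤ, s ≠ t ∧ ((s ∈ I ∧ t ∈ I) ∨ (s ∉ I ∧ t ∉ I)) ∧
      PM σ ∧ PM τ ∧ x = (σ • eps s + τ • eps t, ((2 * r : ℤ) : ℝ))) := by
  rcases h with ⟨s, hs, σ, hσ, r, hx⟩ | ⟨s, hs, σ, hσ, r, hx⟩ |
    ⟨s, t, hst, hside, σ, τ, hσ, hτ, r, hx⟩
  · exact Or.inl ⟨s, σ, 2 * r, hσ, by exact_mod_cast hx, Or.inl ⟨hs, by omega⟩⟩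
  · exact Or.inl ⟨s, σ, 2 * r + 1, hσ, by exact_mod_cast hx, Or.inr ⟨hs, by omega⟩⟩
  · exact Or.inr ⟨s, t, σ, τ, r, hst, hside, hσ, hτ, hx⟩

lemma psi_sub_phi {I : Set (Fin n)} : PsiID2 n I ⊆ PhiD2 n := by
  rintro x hx
  rcases psi_elim hx with ⟨s, σ, a, hσ, hx, _⟩ | ⟨s, t, σ, τ, r, hst, _, hσ, hτ, hx⟩
  · rw [hx]; exact short_mem_phi hσ a rfl rfl
  · rw [hx]; exact long_mem_phi hst hσ hτ r rfl rfl

end S13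

namespace S13
variable {n : ℕ}

lemma pm_int {σ : ℝ} (h : PM σ) : ∃ k : ℤ, (k : ℝ) = σ := by
  rcases h with rfl | rfl
  · exact ⟨1, by norm_num⟩
  · exact ⟨-1, by norm_num⟩

lemma side_trans {I : Set (Fin n)} {a b c : Fin n}
    (h1 : (a ∈ I ∧ b ∈ I) ∨ (a ∉ I ∧ b ∉ I)) (h2 : (a ∈ I ∧ c ∈ I) ∨ (a ∉ I ∧ c ∉ I)) :
    (b ∈ I ∧ c ∈ I) ∨ (b ∉ I ∧ c ∉ I) := by tauto

lemma side_symm {I : Set (Fin n)} {a b : Fin n}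
    (h1 : (a ∈ I ∧ b ∈ I) ∨ (a ∉ I ∧ b ∉ I)) :
    (b ∈ I ∧ a ∈ I) ∨ (b ∉ I ∧ a ∉ I) := by tauto

lemma par_sub {b k c : ℤ} : (b - k * (2 * c)) % 2 = b % 2 := by
  rw [show b - k * (2 * c) = b + 2 * (-(k * c)) by ring, Int.add_mul_emod_self_left]

lemma par_sub' {b k a : ℤ} : (b - 2 * (k * a)) % 2 = b % 2 := by
  rw [show b - 2 * (k * a) = b + 2 * (-(k * a)) by ring, Int.add_mul_emod_self_left]

lemma psi_refl (I : Set (Fin n)) :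
    ∀ x ∈ PsiID2 n I, ∀ y ∈ PsiID2 n I, reflA x y ∈ PsiID2 n I := by
  rintro x hx y hy
  rcases psi_elim hx with ⟨s, σ, a, hσ, rfl, hparx⟩ |
    ⟨s, t, σ, τ, rx, hst, hsidex, hσ, hτ, rfl⟩
  · rcases psi_elim hy with ⟨t, τ, b, hτ, rfl, hpary⟩ |
      ⟨t, u, τ, ρ, ry, htu, hsidey, hτ, hρ, rfl⟩
    · -- short reflector, short target
      rw [reflA_short hσ s _ _ _, inner_ss]
      by_cases hts : t = s
      · subst hts
        rw [if_pos rfl]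
        obtain ⟨k, hk⟩ := pm_int (pm_mul hτ hσ)
        refine psi_mem_short t (pm_neg hτ) (b - 2 * (k * a))
          (by rcases hσ with rfl | rfl <;> rcases hτ with rfl | rfl <;>
              match_scalars <;> norm_num)
          (by push_cast; rw [hk]; ring) ?_
        rcases hpary with ⟨h1, h2⟩ | ⟨h1, h2⟩
        · exact Or.inl ⟨h1, by rw [par_sub']; exact h2⟩
        · exact Or.inr ⟨h1, by rw [par_sub']; exact h2⟩
      · rw [if_neg hts]
        exact psi_mem_short t hτ b (by match_scalars <;> ring) (by push_cast; ring) hpary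
    · -- short reflector, long target
      rw [reflA_short hσ s _ _ _, inner_ls]
      by_cases hts : t = s
      · subst hts
        rw [if_pos rfl, if_neg (Ne.symm htu)]
        obtain ⟨k, hk⟩ := pm_int (pm_mul hτ hσ)
        exact psi_mem_long t u htu hsidey (pm_neg hτ) hρ (ry - k * a)
          (by rcases hσ with rfl | rfl <;> rcases hτ with rfl | rfl <;>
              rcases hρ with rfl | rfl <;> match_scalars <;> norm_num)
          (by push_cast; rw [hk]; ring)
      · rw [if_neg hts]
        by_cases hus : u = s
        · subst hus
          rw [if_pos rfl]
          obtain ⟨k, hk⟩ := pm_int (pm_mul hρ hσ)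
          exact psi_mem_long t u htu hsidey hτ (pm_neg hρ) (ry - k * a)
            (by rcases hσ with rfl | rfl <;> rcases hτ with rfl | rfl <;>
                rcases hρ with rfl | rfl <;> match_scalars <;> norm_num)
            (by push_cast; rw [hk]; ring)
        · rw [if_neg hus]
          exact psi_mem_long t u htu hsidey hτ hρ ry (by match_scalars <;> ring)
            (by push_cast; ring)
  · rcases psi_elim hy with ⟨u, ρ, b, hρ, rfl, hpary⟩ |
      ⟨u, v, σ', ρ, ry, huv, hsidey, hσ', hρ, rfl⟩
    · -- long reflector, short target
      rw [reflA_long hσ hτ hst _ _ _, inner_sl]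
      by_cases hsu : s = u
      · subst hsu
        rw [if_pos rfl, if_neg (Ne.symm hst)]
        obtain ⟨k, hk⟩ := pm_int (pm_mul hσ hρ)
        refine psi_mem_short t (pm_neg (pm_mul (pm_mul hσ hρ) hτ)) (b - k * (2 * rx))
          (by rcases hσ with rfl | rfl <;> rcases hτ with rfl | rfl <;>
              rcases hρ with rfl | rfl <;> match_scalars <;> norm_num)
          (by push_cast; rw [hk]; ring) ?_
        rcases hsidex with ⟨h1, h2⟩ | ⟨h1, h2⟩ <;> rcases hpary with ⟨h3, h4⟩ | ⟨h3, h4⟩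
        · exact Or.inl ⟨h2, by rw [par_sub]; exact h4⟩
        · exact absurd h1 h3
        · exact absurd h3 h1
        · exact Or.inr ⟨h2, by rw [par_sub]; exact h4⟩
      · rw [if_neg hsu]
        by_cases htu : t = u
        · subst htu
          rw [if_pos rfl]
          obtain ⟨k, hk⟩ := pm_int (pm_mul hτ hρ)
          refine psi_mem_short s (pm_neg (pm_mul (pm_mul hτ hρ) hσ)) (b - k * (2 * rx))
            (by rcases hσ with rfl | rfl <;> rcases hτ with rfl | rfl <;>
                rcases hρ with rfl | rfl <;> match_scalars <;> norm_num)
            (by push_cast; rw [hk]; ring) ?_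
          rcases hsidex with ⟨h1, h2⟩ | ⟨h1, h2⟩ <;> rcases hpary with ⟨h3, h4⟩ | ⟨h3, h4⟩
          · exact Or.inl ⟨h1, by rw [par_sub]; exact h4⟩
          · exact absurd h2 h3
          · exact absurd h3 h2
          · exact Or.inr ⟨h1, by rw [par_sub]; exact h4⟩
        · rw [if_neg htu]
          exact psi_mem_short u hρ b (by match_scalars <;> ring) (by push_cast; ring) hpary
    · -- long reflector, long target
      rw [reflA_long hσ hτ hst _ _ _, inner_ll]
      by_cases hsu : s = u
      · subst hsu
        by_cases htv : t = v
        · subst htv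
          rw [if_pos rfl, if_neg hst, if_neg (Ne.symm hst), if_pos rfl]
          rcases pm_cases hσ hσ' with rfl | rfl <;> rcases pm_cases hτ hρ with rfl | rfl
          · exact psi_mem_long s t hst hsidex (pm_neg hσ) (pm_neg hτ) (ry - 2 * rx)
              (by rcases hσ with rfl | rfl <;> rcases hτ with rfl | rfl <;>
                  match_scalars <;> norm_num)
              (by rcases hσ with rfl | rfl <;> rcases hτ with rfl | rfl <;>
                  push_cast <;> ring)
          · exact psi_mem_long s t hst hsidey hσ (pm_neg hτ) ry
              (by rcases hσ with rfl | rfl <;> rcases hτ with rfl | rfl <;>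
                  match_scalars <;> norm_num)
              (by rcases hσ with rfl | rfl <;> rcases hτ with rfl | rfl <;>
                  push_cast <;> ring)
          · exact psi_mem_long s t hst hsidey (pm_neg hσ) hτ ry
              (by rcases hσ with rfl | rfl <;> rcases hτ with rfl | rfl <;>
                  match_scalars <;> norm_num)
              (by rcases hσ with rfl | rfl <;> rcases hτ with rfl | rfl <;>
                  push_cast <;> ring)
          · exact psi_mem_long s t hst hsidex hσ hτ (ry + 2 * rx)
              (by rcases hσ with rfl | rfl <;> rcases hτ with rfl | rfl <;>
                  match_scalars <;> norm_num)
              (by rcases hσ with rfl | rfl <;> rcases hτ with rfl | rfl <;>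
                  push_cast <;> ring)
        · rw [if_pos rfl, if_neg hst, if_neg (fun h : v = s => huv h.symm),
            if_neg (fun h : v = t => htv h.symm)]
          have htv' : t ≠ v := fun h => htv h
          have hside : (t ∈ I ∧ v ∈ I) ∨ (t ∉ I ∧ v ∉ I) := side_trans hsidex hsidey
          rcases pm_cases hσ hσ' with rfl | rfl
          · exact psi_mem_long t v htv' hside (pm_neg hτ) hρ (ry - rx)
              (by rcases hσ with rfl | rfl <;> rcases hτ with rfl | rfl <;>
                  rcases hρ with rfl | rfl <;> match_scalars <;> norm_num)
              (by rcases hσ with rfl | rfl <;> push_cast <;> ring)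
          · exact psi_mem_long t v htv' hside hτ hρ (ry + rx)
              (by rcases hσ with rfl | rfl <;> rcases hτ with rfl | rfl <;>
                  rcases hρ with rfl | rfl <;> match_scalars <;> norm_num)
              (by rcases hσ with rfl | rfl <;> push_cast <;> ring)
      · by_cases hsv : s = v
        · subst hsv
          by_cases htu : t = u
          · subst htu
            rw [if_neg (Ne.symm hst), if_pos rfl, if_pos rfl, if_neg hst]
            rcases pm_cases hτ hσ' with rfl | rfl <;> rcases pm_cases hσ hρ with rfl | rfl
            · exact psi_mem_long s t hst hsidex (pm_neg hσ) (pm_neg hτ) (ry - 2 * rx)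
                (by rcases hσ with rfl | rfl <;> rcases hτ with rfl | rfl <;>
                    match_scalars <;> norm_num)
                (by rcases hσ with rfl | rfl <;> rcases hτ with rfl | rfl <;>
                    push_cast <;> ring)
            · exact psi_mem_long t s (Ne.symm hst) hsidey hτ (pm_neg hσ) ry
                (by rcases hσ with rfl | rfl <;> rcases hτ with rfl | rfl <;>
                    match_scalars <;> norm_num)
                (by rcases hσ with rfl | rfl <;> rcases hτ with rfl | rfl <;>
                    push_cast <;> ring)
            · exact psi_mem_long t s (Ne.symm hst) hsidey (pm_neg hτ) hσ ry
                (by rcases hσ with rfl | rfl <;> rcases hτ with rfl | rfl <;>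
                    match_scalars <;> norm_num)
                (by rcases hσ with rfl | rfl <;> rcases hτ with rfl | rfl <;>
                    push_cast <;> ring)
            · exact psi_mem_long s t hst hsidex hσ hτ (ry + 2 * rx)
                (by rcases hσ with rfl | rfl <;> rcases hτ with rfl | rfl <;>
                    match_scalars <;> norm_num)
                (by rcases hσ with rfl | rfl <;> rcases hτ with rfl | rfl <;>
                    push_cast <;> ring)
          · rw [if_neg (fun h : u = s => hsu h.symm), if_neg (fun h : u = t => htu h.symm),
              if_pos rfl, if_neg hst]
            have hut : u ≠ t := fun h => htu h.symm
            have hside : (u ∈ I ∧ t ∈ I) ∨ (u ∉ I ∧ t ∉ I) :=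
              side_trans (side_symm hsidey) hsidex
            rcases pm_cases hσ hρ with rfl | rfl
            · exact psi_mem_long u t hut hside hσ' (pm_neg hτ) (ry - rx)
                (by rcases hσ with rfl | rfl <;> rcases hτ with rfl | rfl <;>
                    rcases hσ' with rfl | rfl <;> match_scalars <;> norm_num)
                (by rcases hσ with rfl | rfl <;> push_cast <;> ring)
            · exact psi_mem_long u t hut hside hσ' hτ (ry + rx)
                (by rcases hσ with rfl | rfl <;> rcases hτ with rfl | rfl <;>
                    rcases hσ' with rfl | rfl <;> match_scalars <;> norm_num)
                (by rcases hσ with rfl | rfl <;> push_cast <;> ring)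
        · by_cases htu : t = u
          · subst htu
            rw [if_neg (Ne.symm hst), if_pos rfl, if_neg (fun h : v = s => hsv h.symm),
              if_neg (fun h : v = t => huv h.symm)]
            have hside : (s ∈ I ∧ v ∈ I) ∨ (s ∉ I ∧ v ∉ I) :=
              side_trans (side_symm hsidex) hsidey
            rcases pm_cases hτ hσ' with rfl | rfl
            · exact psi_mem_long s v hsv hside (pm_neg hσ) hρ (ry - rx)
                (by rcases hσ with rfl | rfl <;> rcases hτ with rfl | rfl <;>
                    rcases hρ with rfl | rfl <;> match_scalars <;> norm_num)
                (by rcases hτ with rfl | rfl <;> push_cast <;> ring)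
            · exact psi_mem_long s v hsv hside hσ hρ (ry + rx)
                (by rcases hσ with rfl | rfl <;> rcases hτ with rfl | rfl <;>
                    rcases hρ with rfl | rfl <;> match_scalars <;> norm_num)
                (by rcases hτ with rfl | rfl <;> push_cast <;> ring)
          · by_cases htv : t = v
            · subst htv
              rw [if_neg (fun h : u = s => hsu h.symm), if_neg (fun h : u = t => htu h.symm),
                if_neg (Ne.symm hst), if_pos rfl]
              have hus' : u ≠ s := fun h => hsu h.symm
              have hside : (u ∈ I ∧ s ∈ I) ∨ (u ∉ I ∧ s ∉ I) :=
                side_trans (side_symm hsidey) (side_symm hsidex)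
              rcases pm_cases hτ hρ with rfl | rfl
              · exact psi_mem_long u s hus' hside hσ' (pm_neg hσ) (ry - rx)
                  (by rcases hσ with rfl | rfl <;> rcases hτ with rfl | rfl <;>
                      rcases hσ' with rfl | rfl <;> match_scalars <;> norm_num)
                  (by rcases hτ with rfl | rfl <;> push_cast <;> ring)
              · exact psi_mem_long u s hus' hside hσ' hσ (ry + rx)
                  (by rcases hσ with rfl | rfl <;> rcases hτ with rfl | rfl <;>
                      rcases hσ' with rfl | rfl <;> match_scalars <;> norm_num)
                  (by rcases hτ with rfl | rfl <;> push_cast <;> ring)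
            · rw [if_neg (fun h : u = s => hsu h.symm), if_neg (fun h : u = t => htu h.symm),
                if_neg (fun h : v = s => hsv h.symm), if_neg (fun h : v = t => htv h.symm)]
              exact psi_mem_long u v huv hsidey hσ' hρ ry (by match_scalars <;> ring)
                (by push_cast; ring)

end S13

namespace S13
variable {n : ℕ}

lemma coord3 (σ τ ρ : ℝ) (s t u k : Fin n) :
    (σ • eps s + (τ • eps t + ρ • eps u)) k =
      (if k = s then σ else 0) + ((if k = t then τ else 0) + (if k = u then ρ else 0)) := by
  rw [PiLp.add_apply, coord_s, coord_l]

lemma coord4 (σ τ σ' ρ : ℝ) (s t u v k : Fin n) :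
    ((σ • eps s + τ • eps t) + (σ' • eps u + ρ • eps v)) k =
      ((if k = s then σ else 0) + (if k = t then τ else 0)) +
      ((if k = u then σ' else 0) + (if k = v then ρ else 0)) := by
  rw [PiLp.add_apply, coord_l, coord_l]

lemma closed_sl {I : Set (Fin n)} {s t u : Fin n} {σ τ ρ : ℝ} {a ry : ℤ}
    (hσ : PM σ) (hτ : PM τ) (hρ : PM ρ) (htu : t ≠ u)
    (hsidey : (t ∈ I ∧ u ∈ I) ∨ (t ∉ I ∧ u ∉ I))
    (hparx : (s ∈ I ∧ a % 2 = 0) ∨ (s ∉ I ∧ a % 2 = 1))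
    (hphi : (σ • eps s + (τ • eps t + ρ • eps u), (a : ℝ) + ((2 * ry : ℤ) : ℝ)) ∈ PhiD2 n) :
    (σ • eps s + (τ • eps t + ρ • eps u), (a : ℝ) + ((2 * ry : ℤ) : ℝ)) ∈ PsiID2 n I := by
  by_cases hst : s = t
  · subst hst
    rcases pm_cases hσ hτ with rfl | rfl
    · exfalso
      have h := grc_coords (mem_grc hphi) s
      simp only [coord3, if_pos rfl, if_neg htu] at h
      rcases hσ with rfl | rfl <;> norm_num at h
    · refine psi_mem_short u hρ (a + 2 * ry) (by match_scalars <;> ring) (by push_cast; ring) ?_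
      rcases hsidey with ⟨h1, h2⟩ | ⟨h1, h2⟩ <;> rcases hparx with ⟨h3, h4⟩ | ⟨h3, h4⟩
      · exact Or.inl ⟨h2, by omega⟩
      · exact absurd h1 h3
      · exact absurd h3 h1
      · exact Or.inr ⟨h2, by omega⟩
  · by_cases hsu : s = u
    · subst hsu
      rcases pm_cases hσ hρ with rfl | rfl
      · exfalso
        have h := grc_coords (mem_grc hphi) s
        simp only [coord3, if_pos rfl, if_neg hst, if_pos rfl] at h
        rcases hσ with rfl | rfl <;> norm_num at h
      · refine psi_mem_short t hτ (a + 2 * ry) (by match_scalars <;> ring) (by push_cast; ring) ?_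
        rcases hsidey with ⟨h1, h2⟩ | ⟨h1, h2⟩ <;> rcases hparx with ⟨h3, h4⟩ | ⟨h3, h4⟩
        · exact Or.inl ⟨h1, by omega⟩
        · exact absurd h2 h3
        · exact absurd h3 h2
        · exact Or.inr ⟨h1, by omega⟩
    · exfalso
      rcases grc_two (mem_grc hphi) hst hsu htu with h | h | h
      · simp only [coord3, if_pos rfl, if_neg hst, if_neg hsu] at h
        rcases hσ with rfl | rfl <;> norm_num at h
      · simp only [coord3, if_neg (Ne.symm hst), if_pos rfl, if_neg htu] at h
        rcases hτ with rfl | rfl <;> norm_num at h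
      · simp only [coord3, if_neg (Ne.symm hsu), if_neg (Ne.symm htu), if_pos rfl] at h
        rcases hρ with rfl | rfl <;> norm_num at h

lemma psi_closedIn (I : Set (Fin n)) : IsClosedIn (PhiD2 n) (PsiID2 n I) := by
  rintro x hx y hy hphi
  rcases psi_elim hx with ⟨s, σ, a, hσ, rfl, hparx⟩ |
    ⟨s, t, σ, τ, rx, hst, hsidex, hσ, hτ, rfl⟩
  · rcases psi_elim hy with ⟨t, τ, b, hτ, rfl, hpary⟩ |
      ⟨t, u, τ, ρ, ry, htu, hsidey, hτ, hρ, rfl⟩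
    · -- short + short
      rw [Prod.mk_add_mk] at hphi ⊢
      by_cases hst : s = t
      · subst hst
        exfalso
        rcases pm_cases hσ hτ with rfl | rfl
        · have h := grc_coords (mem_grc hphi) s
          simp only [PiLp.add_apply, coord_s, if_pos rfl] at h
          rcases hσ with rfl | rfl <;> norm_num at h
        · obtain ⟨k, hk⟩ := grc_nonzero (mem_grc hphi)
          apply hk
          simp only [PiLp.add_apply, coord_s]
          split_ifs <;> ring
      · obtain ⟨r, hr⟩ := long_level_even hst hσ hτ hphi
        have hab : a + b = 2 * r := by exact_mod_cast hr
        rcases hparx with ⟨h1, h2⟩ | ⟨h1, h2⟩ <;> rcases hpary with ⟨h3, h4⟩ | ⟨h3, h4⟩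
        · exact psi_mem_long s t hst (Or.inl ⟨h1, h3⟩) hσ hτ r rfl hr
        · omega
        · omega
        · exact psi_mem_long s t hst (Or.inr ⟨h1, h3⟩) hσ hτ r rfl hr
    · -- short + long
      rw [Prod.mk_add_mk] at hphi ⊢
      exact closed_sl hσ hτ hρ htu hsidey hparx hphi
  · rcases psi_elim hy with ⟨u, ρ, b, hρ, rfl, hpary⟩ |
      ⟨u, v, σ', ρ, ry, huv, hsidey, hσ', hρ, rfl⟩
    · -- long + short
      rw [Prod.mk_add_mk] at hphi ⊢
      have hswap : ((σ • eps s + τ • eps t) + ρ • eps u, ((2 * rx : ℤ) : ℝ) + (b : ℝ)) =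
          (ρ • eps u + (σ • eps s + τ • eps t), (b : ℝ) + ((2 * rx : ℤ) : ℝ)) := by
        rw [add_comm (σ • eps s + τ • eps t) (ρ • eps u), add_comm ((2 * rx : ℤ) : ℝ) (b : ℝ)]
      rw [hswap] at hphi ⊢
      exact closed_sl hρ hσ hτ hst hsidex hpary hphi
    · -- long + long
      rw [Prod.mk_add_mk] at hphi ⊢
      have hlvl : ((2 * rx : ℤ) : ℝ) + ((2 * ry : ℤ) : ℝ) = ((2 * (rx + ry) : ℤ) : ℝ) := by
        push_cast; ring
      by_cases hsu : s = u
      · subst hsu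
        by_cases htv : t = v
        · subst htv
          exfalso
          rcases pm_cases hσ hσ' with rfl | rfl
          · have h := grc_coords (mem_grc hphi) s
            simp only [coord4, if_pos rfl, if_neg hst] at h
            rcases hσ with rfl | rfl <;> norm_num at h
          · rcases pm_cases hτ hρ with rfl | rfl
            · have h := grc_coords (mem_grc hphi) t
              simp only [coord4, if_neg (Ne.symm hst), if_pos rfl] at h
              rcases hτ with rfl | rfl <;> norm_num at h
            · obtain ⟨k, hk⟩ := grc_nonzero (mem_grc hphi)
              apply hk
              simp only [coord4]
              split_ifs <;> ring
        · rcases pm_cases hσ hσ' with rfl | rfl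
          · exfalso
            have h := grc_coords (mem_grc hphi) s
            simp only [coord4, if_pos rfl, if_neg hst, if_neg huv] at h
            rcases hσ with rfl | rfl <;> norm_num at h
          · exact psi_mem_long t v (fun h => htv h) (side_trans hsidex hsidey) hτ hρ (rx + ry)
              (by match_scalars <;> ring) hlvl
      · by_cases hsv : s = v
        · subst hsv
          by_cases htu : t = u
          · subst htu
            exfalso
            rcases pm_cases hσ hρ with rfl | rfl
            · have h := grc_coords (mem_grc hphi) s
              simp only [coord4, if_pos rfl, if_neg hst] at h
              rcases hσ with rfl | rfl <;> norm_num at h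
            · rcases pm_cases hτ hσ' with rfl | rfl
              · have h := grc_coords (mem_grc hphi) t
                simp only [coord4, if_neg (Ne.symm hst), if_pos rfl] at h
                rcases hτ with rfl | rfl <;> norm_num at h
              · obtain ⟨k, hk⟩ := grc_nonzero (mem_grc hphi)
                apply hk
                simp only [coord4]
                split_ifs <;> ring
          · rcases pm_cases hσ hρ with rfl | rfl
            · exfalso
              have h := grc_coords (mem_grc hphi) s
              simp only [coord4, if_pos rfl, if_neg hst, if_neg hsu] at h
              rcases hσ with rfl | rfl <;> norm_num at h
            · exact psi_mem_long t u (fun h => htu h)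
                (side_trans hsidex (side_symm hsidey)) hτ hσ' (rx + ry)
                (by match_scalars <;> ring) hlvl
        · by_cases htu : t = u
          · subst htu
            rcases pm_cases hτ hσ' with rfl | rfl
            · exfalso
              have h := grc_coords (mem_grc hphi) t
              simp only [coord4, if_neg (Ne.symm hst), if_pos rfl, if_neg huv] at h
              rcases hτ with rfl | rfl <;> norm_num at h
            · exact psi_mem_long s v hsv (side_trans (side_symm hsidex) hsidey) hσ hρ (rx + ry)
                (by match_scalars <;> ring) hlvl
          · by_cases htv : t = v
            · subst htv
              rcases pm_cases hτ hρ with rfl | rfl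
              · exfalso
                have h := grc_coords (mem_grc hphi) t
                simp only [coord4, if_neg (Ne.symm hst), if_pos rfl,
                  if_neg (fun h' : t = u => huv h'.symm)] at h
                rcases hτ with rfl | rfl <;> norm_num at h
              · exact psi_mem_long s u hsu (side_trans (side_symm hsidex) (side_symm hsidey))
                  hσ hσ' (rx + ry) (by match_scalars <;> ring) hlvl
            · exfalso
              rcases grc_two (mem_grc hphi) hst hsu (fun h : t = u => htu h) with h | h | h
              · simp only [coord4, if_pos rfl, if_neg hst, if_neg hsu, if_neg hsv] at h
                rcases hσ with rfl | rfl <;> norm_num at h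
              · simp only [coord4, if_neg (Ne.symm hst), if_pos rfl, if_neg htu, if_neg htv] at h
                rcases hτ with rfl | rfl <;> norm_num at h
              · simp only [coord4, if_neg (Ne.symm hsu), if_neg (Ne.symm htu), if_pos rfl,
                  if_neg huv] at h
                rcases hσ' with rfl | rfl <;> norm_num at h

lemma psi_nonempty (hn : 2 ≤ n) (I : Set (Fin n)) : (PsiID2 n I).Nonempty := by
  have h0 : 0 < n := by omega
  by_cases hs : (⟨0, h0⟩ : Fin n) ∈ I
  · exact ⟨((1 : ℝ) • eps ⟨0, h0⟩, ((2 * 0 : ℤ) : ℝ)), Or.inl ⟨_, hs, 1, pm_one, 0, rfl⟩⟩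
  · exact ⟨((1 : ℝ) • eps ⟨0, h0⟩, ((2 * 0 + 1 : ℤ) : ℝ)),
      Or.inr (Or.inl ⟨_, hs, 1, pm_one, 0, rfl⟩)⟩

lemma psi_ne (hn : 2 ≤ n) (I : Set (Fin n)) : PsiID2 n I ≠ PhiD2 n := by
  have h0 : 0 < n := by omega
  set s : Fin n := ⟨0, h0⟩ with hsdef
  intro hEq
  by_cases hs : s ∈ I
  · have hmem : ((1 : ℝ) • eps s, ((1 : ℤ) : ℝ)) ∈ PhiD2 n := short_mem_phi pm_one 1 rfl rfl
    rw [← hEq] at hmem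
    rcases psi_elim hmem with ⟨t, τ, a, hτ, hx, hpar⟩ | ⟨t, u, τ, ρ, r, htu, _, hτ, hρ, hx⟩ <;>
      rw [Prod.mk.injEq] at hx
    · have ha : a = 1 := by exact_mod_cast hx.2.symm
      obtain ⟨hts, -⟩ := short_eq_short pm_one hx.1
      rcases hpar with ⟨h1, h2⟩ | ⟨h1, h2⟩
      · omega
      · exact h1 (hts ▸ hs)
    · have : (1 : ℤ) = 2 * r := by exact_mod_cast hx.2
      omega
  · have hmem : ((1 : ℝ) • eps s, ((0 : ℤ) : ℝ)) ∈ PhiD2 n := short_mem_phi pm_one 0 rfl rfl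
    rw [← hEq] at hmem
    rcases psi_elim hmem with ⟨t, τ, a, hτ, hx, hpar⟩ | ⟨t, u, τ, ρ, r, htu, _, hτ, hρ, hx⟩ <;>
      rw [Prod.mk.injEq] at hx
    · have ha : a = 0 := by exact_mod_cast hx.2.symm
      obtain ⟨hts, -⟩ := short_eq_short pm_one hx.1
      rcases hpar with ⟨h1, h2⟩ | ⟨h1, h2⟩
      · exact hs (hts ▸ h1)
      · omega
    · exact long_ne_short htu hτ hρ hx.1.symm

lemma psi_closed_subroot (hn : 2 ≤ n) (I : Set (Fin n)) :
    IsClosedSubrootSystem (PhiD2 n) (PsiID2 n I) :=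
  ⟨⟨psi_nonempty hn I, psi_sub_phi, psi_ne hn I, psi_refl I⟩, psi_closedIn I⟩

end S13

namespace S13
variable {n : ℕ} {Ψ : Set (Euc n × ℝ)}

lemma pair_eq {v w : Euc n} {a b : ℝ} (h1 : v = w) (h2 : a = b) : (v, a) = (w, b) := by
  rw [h1, h2]

lemma mem_eq {x y : Euc n × ℝ} (h : x ∈ Ψ) (he : x = y) : y ∈ Ψ := he ▸ h

lemma coord3' (σ τ ρ : ℝ) (s t u k : Fin n) :
    ((σ • eps s + τ • eps t) + ρ • eps u) k =
      ((if k = s then σ else 0) + (if k = t then τ else 0)) + (if k = u then ρ else 0) := by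
  rw [PiLp.add_apply, coord_l, coord_s]

lemma inner_l1 (σ τ : ℝ) (i j s : Fin n) :
    (inner ℝ (σ • eps i + τ • eps j) (eps s) : ℝ) =
      σ * (if i = s then 1 else 0) + τ * (if j = s then 1 else 0) := by
  rw [inner_add_left, real_inner_smul_left, real_inner_smul_left, inner_eps, inner_eps]

lemma reflA_eps (s : Fin n) (w : Euc n) (a b : ℝ) :
    reflA (eps s, a) (w, b) = (w - (2 * (inner ℝ w (eps s) : ℝ)) • eps s,
      b - (2 * (inner ℝ w (eps s) : ℝ)) * a) := by
  refine reflA_pair ?_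
  rw [inner_eps, if_pos rfl, div_one]

lemma mem_cases (hsub : Ψ ⊆ PhiD2 n) {x : Euc n × ℝ} (h : x ∈ Ψ) :
    (∃ i : Fin n, ∃ σ : ℝ, ∃ a : ℤ, PM σ ∧ x = (σ • eps i, (a : ℝ))) ∨
    (∃ i j : Fin n, ∃ σ τ : ℝ, ∃ r : ℤ, i ≠ j ∧ PM σ ∧ PM τ ∧
      x = (σ • eps i + τ • eps j, ((2 * r : ℤ) : ℝ))) := by
  rcases hsub h with ⟨i, σ, hσ, r, hx⟩ | ⟨i, j, hij, σ, τ, hσ, hτ, r, hx⟩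
  · exact Or.inl ⟨i, σ, r, hσ, hx⟩
  · exact Or.inr ⟨i, j, σ, τ, r, hij, hσ, hτ, hx⟩

lemma neg_mem (hsub : Ψ ⊆ PhiD2 n) (hrefl : ∀ x ∈ Ψ, ∀ y ∈ Ψ, reflA x y ∈ Ψ)
    {v : Euc n} {c : ℝ} (h : (v, c) ∈ Ψ) : (-v, -c) ∈ Ψ := by
  have hv : v ≠ 0 := by
    obtain ⟨k, hk⟩ := grc_nonzero (mem_grc (hsub h))
    intro h0
    rw [h0] at hk
    exact hk rfl
  have hinner : (inner ℝ v v : ℝ) ≠ 0 := inner_self_ne_zero.mpr hv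
  have h2 : 2 * (inner ℝ v v : ℝ) / (inner ℝ v v : ℝ) = 2 := by
    rw [mul_div_assoc, div_self hinner, mul_one]
  have hr := hrefl _ h _ h
  rw [reflA_pair h2] at hr
  exact mem_eq hr (pair_eq (by match_scalars; ring) (by ring))

lemma as1 {s : Fin n} {c : ℝ} (h : (eps s, c) ∈ Ψ) : ((1 : ℝ) • eps s, c) ∈ Ψ :=
  mem_eq h (pair_eq (by module) rfl)

lemma short_norm (hsub : Ψ ⊆ PhiD2 n) (hrefl : ∀ x ∈ Ψ, ∀ y ∈ Ψ, reflA x y ∈ Ψ)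
    {σ : ℝ} {i : Fin n} {a : ℤ} (hσ : PM σ)
    (h : (σ • eps i, (a : ℝ)) ∈ Ψ) : ∃ b : ℤ, b % 2 = a % 2 ∧ (eps i, (b : ℝ)) ∈ Ψ := by
  rcases hσ with rfl | rfl
  · exact ⟨a, rfl, by rwa [one_smul] at h⟩
  · refine ⟨-a, by omega, ?_⟩
    exact mem_eq (neg_mem hsub hrefl h) (pair_eq (by match_scalars; ring) (by push_cast; ring))

lemma close_ss' (hcl : IsClosedIn (PhiD2 n) Ψ) {σ τ : ℝ} (hσ : PM σ) (hτ : PM τ)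
    {s t : Fin n} (hst : s ≠ t) {α β : ℤ}
    (h1 : (σ • eps s, (α : ℝ)) ∈ Ψ) (h2 : (τ • eps t, (β : ℝ)) ∈ Ψ)
    (hpar : (α + β) % 2 = 0) :
    (σ • eps s + τ • eps t, (α : ℝ) + (β : ℝ)) ∈ Ψ := by
  have hΦ : ((σ • eps s, (α : ℝ)) + (τ • eps t, (β : ℝ))) ∈ PhiD2 n := by
    rw [Prod.mk_add_mk]
    refine long_mem_phi hst hσ hτ ((α + β) / 2) rfl ?_
    exact_mod_cast congrArg (fun z : ℤ => (z : ℝ)) (show α + β = 2 * ((α + β) / 2) by omega)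
  have h := hcl _ h1 _ h2 hΦ
  rwa [Prod.mk_add_mk] at h

lemma flip_i (hrefl : ∀ x ∈ Ψ, ∀ y ∈ Ψ, reflA x y ∈ Ψ) {σ τ : ℝ} {i j : Fin n}
    (hij : i ≠ j) {c d : ℝ} (hi : (eps i, d) ∈ Ψ) (h : (σ • eps i + τ • eps j, c) ∈ Ψ) :
    ∃ c' : ℝ, ((-σ) • eps i + τ • eps j, c') ∈ Ψ := by
  have hr := hrefl _ hi _ h
  rw [reflA_eps, inner_l1, if_pos rfl, if_neg (Ne.symm hij)] at hr
  exact ⟨_, mem_eq hr (pair_eq (by match_scalars <;> ring) rfl)⟩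

lemma flip_j (hrefl : ∀ x ∈ Ψ, ∀ y ∈ Ψ, reflA x y ∈ Ψ) {σ τ : ℝ} {i j : Fin n}
    (hij : i ≠ j) {c d : ℝ} (hj : (eps j, d) ∈ Ψ) (h : (σ • eps i + τ • eps j, c) ∈ Ψ) :
    ∃ c' : ℝ, (σ • eps i + (-τ) • eps j, c') ∈ Ψ := by
  have hr := hrefl _ hj _ h
  rw [reflA_eps, inner_l1, if_neg hij, if_pos rfl] at hr
  exact ⟨_, mem_eq hr (pair_eq (by match_scalars <;> ring) rfl)⟩

lemma transfer (hsub : Ψ ⊆ PhiD2 n) (hrefl : ∀ x ∈ Ψ, ∀ y ∈ Ψ, reflA x y ∈ Ψ)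
    (hcl : IsClosedIn (PhiD2 n) Ψ) {s t : Fin n} (hst : s ≠ t) {σ τ : ℝ}
    (hσ : PM σ) (hτ : PM τ) {d : ℤ} (hx : (σ • eps s + τ • eps t, (d : ℝ)) ∈ Ψ)
    {b : ℤ} (hb : (eps t, (b : ℝ)) ∈ Ψ) :
    ∃ e : ℤ, e % 2 = (d + b) % 2 ∧ (σ • eps s, (e : ℝ)) ∈ Ψ := by
  rcases hτ with rfl | rfl
  · have hnb : ((-1 : ℝ) • eps t, ((-b : ℤ) : ℝ)) ∈ Ψ :=
      mem_eq (neg_mem hsub hrefl hb) (pair_eq (by match_scalars; ring) (by push_cast; ring))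
    have hΦ : ((σ • eps s + (1 : ℝ) • eps t, (d : ℝ)) + ((-1 : ℝ) • eps t, ((-b : ℤ) : ℝ)))
        ∈ PhiD2 n := by
      rw [Prod.mk_add_mk]
      exact short_mem_phi hσ (d - b) (by match_scalars <;> ring) (by push_cast; ring)
    have h := hcl _ hx _ hnb hΦ
    rw [Prod.mk_add_mk] at h
    exact ⟨d - b, by omega,
      mem_eq h (pair_eq (by match_scalars <;> ring) (by push_cast; ring))⟩
  · have hΦ : ((σ • eps s + (-1 : ℝ) • eps t, (d : ℝ)) + (eps t, (b : ℝ))) ∈ PhiD2 n := by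
      rw [Prod.mk_add_mk]
      exact short_mem_phi hσ (d + b) (by match_scalars <;> ring) (by push_cast; ring)
    have h := hcl _ hx _ hb hΦ
    rw [Prod.mk_add_mk] at h
    exact ⟨d + b, rfl, mem_eq h (pair_eq (by match_scalars <;> ring) (by push_cast; ring))⟩

lemma no_mixed (hsub : Ψ ⊆ PhiD2 n) (hrefl : ∀ x ∈ Ψ, ∀ y ∈ Ψ, reflA x y ∈ Ψ)
    (hcl : IsClosedIn (PhiD2 n) Ψ) {i j : Fin n} (hij : i ≠ j) {ci cj : ℤ}
    (hi : (eps i, (ci : ℝ)) ∈ Ψ) (hj : (eps j, (cj : ℝ)) ∈ Ψ)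
    (Hno : ∀ σ τ : ℝ, PM σ → PM τ → ∀ c : ℝ, (σ • eps i + τ • eps j, c) ∉ Ψ)
    {s : Fin n} {σ τ : ℝ} {a b : ℤ} (hσ : PM σ) (hτ : PM τ)
    (ha : (σ • eps s, (a : ℝ)) ∈ Ψ) (hb : (τ • eps s, (b : ℝ)) ∈ Ψ)
    (hab : (a + b) % 2 = 1) : False := by
  obtain ⟨a', hpa, ha'⟩ := short_norm hsub hrefl hσ ha
  obtain ⟨b', hpb, hb'⟩ := short_norm hsub hrefl hτ hb
  by_cases hsi : s = i
  · subst hsi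
    have : (a' + cj) % 2 = 0 ∨ (b' + cj) % 2 = 0 := by omega
    rcases this with hpar | hpar
    · exact Hno 1 1 pm_one pm_one _ (close_ss' hcl pm_one pm_one hij (as1 ha') (as1 hj) hpar)
    · exact Hno 1 1 pm_one pm_one _ (close_ss' hcl pm_one pm_one hij (as1 hb') (as1 hj) hpar)
  · by_cases hsj : s = j
    · subst hsj
      have : (a' + ci) % 2 = 0 ∨ (b' + ci) % 2 = 0 := by omega
      rcases this with hpar | hpar
      · exact Hno 1 1 pm_one pm_one _
          (mem_eq (close_ss' hcl pm_one pm_one (Ne.symm hij) (as1 ha') (as1 hi) hpar)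
            (pair_eq (by module) rfl))
      · exact Hno 1 1 pm_one pm_one _
          (mem_eq (close_ss' hcl pm_one pm_one (Ne.symm hij) (as1 hb') (as1 hi) hpar)
            (pair_eq (by module) rfl))
    · -- s distinct from i and j
      have hna' : ((-1 : ℝ) • eps s, ((-a' : ℤ) : ℝ)) ∈ Ψ :=
        mem_eq (neg_mem hsub hrefl ha') (pair_eq (by match_scalars; ring) (by push_cast; ring))
      have hnb' : ((-1 : ℝ) • eps s, ((-b' : ℤ) : ℝ)) ∈ Ψ :=
        mem_eq (neg_mem hsub hrefl hb') (pair_eq (by match_scalars; ring) (by push_cast; ring))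
      -- choose α with (α + ci) even among a', b'; β with (β + cj) even among -a', -b'
      obtain ⟨α, hα, hparα⟩ : ∃ α : ℤ, ((1 : ℝ) • eps s, (α : ℝ)) ∈ Ψ ∧ (α + ci) % 2 = 0 := by
        rcases show (a' + ci) % 2 = 0 ∨ (b' + ci) % 2 = 0 by omega with h' | h'
        · exact ⟨a', as1 ha', h'⟩
        · exact ⟨b', as1 hb', h'⟩
      obtain ⟨β, hβ, hparβ⟩ : ∃ β : ℤ, ((-1 : ℝ) • eps s, (β : ℝ)) ∈ Ψ ∧ (β + cj) % 2 = 0 := by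
        rcases show ((-a' : ℤ) + cj) % 2 = 0 ∨ ((-b' : ℤ) + cj) % 2 = 0 by omega with h' | h'
        · exact ⟨-a', hna', h'⟩
        · exact ⟨-b', hnb', h'⟩
      have z1 : ((1 : ℝ) • eps s + (1 : ℝ) • eps i, (α : ℝ) + (ci : ℝ)) ∈ Ψ :=
        close_ss' hcl pm_one pm_one hsi hα (as1 hi) hparα
      have z2 : ((-1 : ℝ) • eps s + (1 : ℝ) • eps j, (β : ℝ) + (cj : ℝ)) ∈ Ψ :=
        close_ss' hcl (Or.inr rfl) pm_one hsj hβ (as1 hj) hparβ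
      have hΦ : (((1 : ℝ) • eps s + (1 : ℝ) • eps i, (α : ℝ) + (ci : ℝ)) +
          ((-1 : ℝ) • eps s + (1 : ℝ) • eps j, (β : ℝ) + (cj : ℝ))) ∈ PhiD2 n := by
        rw [Prod.mk_add_mk]
        refine long_mem_phi hij pm_one pm_one ((α + ci + β + cj) / 2) (by module) ?_
        exact_mod_cast congrArg (fun z : ℤ => (z : ℝ))
          (show α + ci + (β + cj) = 2 * ((α + ci + β + cj) / 2) by omega)
      have z3 := hcl _ z1 _ z2 hΦ
      rw [Prod.mk_add_mk] at z3
      exact Hno 1 1 pm_one pm_one _ (mem_eq z3 (pair_eq (by module) rfl))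

end S13

namespace S13
variable {n : ℕ} {Ψ : Set (Euc n × ℝ)}

lemma witness (hsub : Ψ ⊆ PhiD2 n) (hrefl : ∀ x ∈ Ψ, ∀ y ∈ Ψ, reflA x y ∈ Ψ)
    (hGr : ∃ u ∈ GrC Ψ, ∃ v ∈ GrC Ψ, u + v ∈ GrC (PhiD2 n) \ GrC Ψ) :
    ∃ i j : Fin n, i ≠ j ∧ (∃ a : ℤ, (eps i, (a : ℝ)) ∈ Ψ) ∧ (∃ b : ℤ, (eps j, (b : ℝ)) ∈ Ψ) ∧
      ∀ σ τ : ℝ, PM σ → PM τ → ∀ c : ℝ, (σ • eps i + τ • eps j, c) ∉ Ψ := by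
  obtain ⟨u, ⟨cu, hu⟩, v, ⟨cv, hv⟩, hsum, hnsum⟩ := hGr
  rcases mem_cases hsub hu with ⟨i, σ, au, hσ, hxu⟩ | ⟨k, l, σ, τ', ru, hkl, hσ, hτ', hxu⟩ <;>
    rw [Prod.mk.injEq] at hxu <;> obtain ⟨rfl, rfl⟩ := hxu
  · rcases mem_cases hsub hv with ⟨j, τ, bv, hτ, hxv⟩ | ⟨k, l, τ, ρ, rv, hkl, hτ, hρ, hxv⟩ <;>
      rw [Prod.mk.injEq] at hxv <;> obtain ⟨rfl, rfl⟩ := hxv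
    · -- short + short
      by_cases hij : i = j
      · subst hij
        exfalso
        rcases pm_cases hσ hτ with rfl | rfl
        · have h := grc_coords hsum i
          simp only [coord_l, if_pos rfl] at h
          rcases hσ with rfl | rfl <;> norm_num at h
        · obtain ⟨k, hk⟩ := grc_nonzero hsum
          apply hk
          simp only [coord_l]
          split_ifs <;> ring
      · obtain ⟨ai, hpi, hi⟩ := short_norm hsub hrefl hσ hu
        obtain ⟨bj, hpj, hj⟩ := short_norm hsub hrefl hτ hv
        refine ⟨i, j, hij, ⟨ai, hi⟩, ⟨bj, hj⟩, ?_⟩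
        intro π κ hπ hκ c hmem
        have h1 : ∃ c', (σ • eps i + κ • eps j, c') ∈ Ψ := by
          rcases pm_cases hπ hσ with rfl | rfl
          · exact ⟨c, hmem⟩
          · exact flip_i hrefl hij hi hmem
        obtain ⟨c1, h1⟩ := h1
        have h2 : ∃ c', (σ • eps i + τ • eps j, c') ∈ Ψ := by
          rcases pm_cases hκ hτ with rfl | rfl
          · exact ⟨c1, h1⟩
          · exact flip_j hrefl hij hj h1
        obtain ⟨c2, h2⟩ := h2
        exact hnsum (mem_grc h2)
    · -- short + long : always contradiction
      exfalso
      by_cases hik : i = k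
      · subst hik
        rcases pm_cases hσ hτ with rfl | rfl
        · have h := grc_coords hsum i
          simp only [coord3, if_pos rfl, if_neg hkl] at h
          rcases hσ with rfl | rfl <;> norm_num at h
        · have hr := hrefl _ hv _ hu
          rw [reflA_long (pm_neg hσ) hρ hkl _ _ _, inner_sl, if_pos rfl,
            if_neg (Ne.symm hkl)] at hr
          refine hnsum (mem_grc (mem_eq hr (pair_eq ?_ rfl)))
          rcases hσ with rfl | rfl <;> rcases hρ with rfl | rfl <;>
            match_scalars <;> norm_num
      · by_cases hil : i = l
        · subst hil
          rcases pm_cases hσ hρ with rfl | rfl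
          · have h := grc_coords hsum i
            simp only [coord3, if_pos rfl, if_neg hik] at h
            rcases hσ with rfl | rfl <;> norm_num at h
          · have hr := hrefl _ hv _ hu
            rw [reflA_long hτ (pm_neg hσ) hkl _ _ _, inner_sl, if_neg (Ne.symm hik),
              if_pos rfl] at hr
            refine hnsum (mem_grc (mem_eq hr (pair_eq ?_ rfl)))
            rcases hσ with rfl | rfl <;> rcases hτ with rfl | rfl <;>
              match_scalars <;> norm_num
        · rcases grc_two hsum hik hil hkl with h | h | h
          · simp only [coord3, if_pos rfl, if_neg hik, if_neg hil] at h
            rcases hσ with rfl | rfl <;> norm_num at h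
          · simp only [coord3, if_neg (Ne.symm hik), if_pos rfl, if_neg hkl] at h
            rcases hτ with rfl | rfl <;> norm_num at h
          · simp only [coord3, if_neg (Ne.symm hil), if_neg (Ne.symm hkl), if_pos rfl] at h
            rcases hρ with rfl | rfl <;> norm_num at h
  · rcases mem_cases hsub hv with ⟨i, ρ, bv, hρ, hxv⟩ | ⟨p, q, σ', ρ, rv, hpq, hσ', hρ, hxv⟩ <;>
      rw [Prod.mk.injEq] at hxv <;> obtain ⟨rfl, rfl⟩ := hxv
    · -- long + short : always contradiction
      exfalso
      by_cases hik : i = k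
      · subst hik
        rcases pm_cases hρ hσ with rfl | rfl
        · have h := grc_coords hsum i
          simp only [coord3', if_pos rfl, if_neg hkl] at h
          rcases hρ with rfl | rfl <;> norm_num at h
        · have hr := hrefl _ hu _ hv
          rw [reflA_long (pm_neg hρ) hτ' hkl _ _ _, inner_sl, if_pos rfl,
            if_neg (Ne.symm hkl)] at hr
          refine hnsum (mem_grc (mem_eq hr (pair_eq ?_ rfl)))
          rcases hρ with rfl | rfl <;> rcases hτ' with rfl | rfl <;>
            match_scalars <;> norm_num
      · by_cases hil : i = l
        · subst hil
          rcases pm_cases hρ hτ' with rfl | rfl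
          · have h := grc_coords hsum i
            simp only [coord3', if_neg hik, if_pos rfl] at h
            rcases hρ with rfl | rfl <;> norm_num at h
          · have hr := hrefl _ hu _ hv
            rw [reflA_long hσ (pm_neg hρ) hkl _ _ _, inner_sl, if_neg (Ne.symm hik),
              if_pos rfl] at hr
            refine hnsum (mem_grc (mem_eq hr (pair_eq ?_ rfl)))
            rcases hρ with rfl | rfl <;> rcases hσ with rfl | rfl <;>
              match_scalars <;> norm_num
        · rcases grc_two hsum hkl (fun h => hik h.symm) (fun h => hil h.symm) with h | h | h
          · simp only [coord3', if_pos rfl, if_neg hkl, if_neg (Ne.symm hik)] at h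
            rcases hσ with rfl | rfl <;> norm_num at h
          · simp only [coord3', if_neg (Ne.symm hkl), if_pos rfl, if_neg (Ne.symm hil)] at h
            rcases hτ' with rfl | rfl <;> norm_num at h
          · simp only [coord3', if_neg hik, if_neg hil, if_pos rfl] at h
            rcases hρ with rfl | rfl <;> norm_num at h
    · -- long + long : always contradiction
      exfalso
      by_cases hkp : k = p
      · subst hkp
        by_cases hlq : l = q
        · subst hlq
          rcases pm_cases hσ hσ' with rfl | rfl
          · have h := grc_coords hsum k
            simp only [coord4, if_pos rfl, if_neg hkl] at h
            rcases hσ with rfl | rfl <;> norm_num at h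
          · rcases pm_cases hτ' hρ with rfl | rfl
            · have h := grc_coords hsum l
              simp only [coord4, if_neg (Ne.symm hkl), if_pos rfl] at h
              rcases hτ' with rfl | rfl <;> norm_num at h
            · obtain ⟨m, hm⟩ := grc_nonzero hsum
              apply hm
              simp only [coord4]
              split_ifs <;> ring
        · rcases pm_cases hσ hσ' with rfl | rfl
          · have h := grc_coords hsum k
            simp only [coord4, if_pos rfl, if_neg hkl, if_neg hpq] at h
            rcases hσ with rfl | rfl <;> norm_num at h
          · have hr := hrefl _ hv _ hu
            rw [reflA_long (pm_neg hσ) hρ hpq _ _ _, inner_ll, if_pos rfl, if_neg hpq,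
              if_neg (Ne.symm hkl), if_neg hlq] at hr
            refine hnsum (mem_grc (mem_eq hr (pair_eq ?_ rfl)))
            rcases hσ with rfl | rfl <;> rcases hτ' with rfl | rfl <;>
              rcases hρ with rfl | rfl <;> match_scalars <;> norm_num
      · by_cases hkq : k = q
        · subst hkq
          by_cases hlp : l = p
          · subst hlp
            rcases pm_cases hσ hρ with rfl | rfl
            · have h := grc_coords hsum k
              simp only [coord4, if_pos rfl, if_neg hkl] at h
              rcases hσ with rfl | rfl <;> norm_num at h
            · rcases pm_cases hτ' hσ' with rfl | rfl
              · have h := grc_coords hsum l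
                simp only [coord4, if_neg (Ne.symm hkl), if_pos rfl] at h
                rcases hτ' with rfl | rfl <;> norm_num at h
              · obtain ⟨m, hm⟩ := grc_nonzero hsum
                apply hm
                simp only [coord4]
                split_ifs <;> ring
          · rcases pm_cases hσ hρ with rfl | rfl
            · have h := grc_coords hsum k
              simp only [coord4, if_pos rfl, if_neg hkl, if_neg hkp] at h
              rcases hσ with rfl | rfl <;> norm_num at h
            · have hr := hrefl _ hv _ hu
              rw [reflA_long hσ' (pm_neg hσ) hpq _ _ _, inner_ll, if_neg hkp, if_pos rfl,
                if_neg hlp, if_neg (Ne.symm hkl)] at hr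
              refine hnsum (mem_grc (mem_eq hr (pair_eq ?_ rfl)))
              rcases hσ with rfl | rfl <;> rcases hτ' with rfl | rfl <;>
                rcases hσ' with rfl | rfl <;> match_scalars <;> norm_num
        · by_cases hlp : l = p
          · subst hlp
            rcases pm_cases hτ' hσ' with rfl | rfl
            · have h := grc_coords hsum l
              simp only [coord4, if_neg (Ne.symm hkl), if_pos rfl, if_neg hpq] at h
              rcases hτ' with rfl | rfl <;> norm_num at h
            · have hr := hrefl _ hv _ hu
              rw [reflA_long (pm_neg hτ') hρ hpq _ _ _, inner_ll, if_neg hkl, if_neg hkq,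
                if_pos rfl, if_neg hpq] at hr
              refine hnsum (mem_grc (mem_eq hr (pair_eq ?_ rfl)))
              rcases hσ with rfl | rfl <;> rcases hτ' with rfl | rfl <;>
                rcases hρ with rfl | rfl <;> match_scalars <;> norm_num
          · by_cases hlq : l = q
            · subst hlq
              rcases pm_cases hτ' hρ with rfl | rfl
              · have h := grc_coords hsum l
                simp only [coord4, if_neg (Ne.symm hkl), if_pos rfl, if_neg hlp] at h
                rcases hτ' with rfl | rfl <;> norm_num at h
              · have hr := hrefl _ hv _ hu
                rw [reflA_long hσ' (pm_neg hτ') hpq _ _ _, inner_ll, if_neg hkp, if_neg hkl,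
                  if_neg hlp, if_pos rfl] at hr
                refine hnsum (mem_grc (mem_eq hr (pair_eq ?_ rfl)))
                rcases hσ with rfl | rfl <;> rcases hτ' with rfl | rfl <;>
                  rcases hσ' with rfl | rfl <;> match_scalars <;> norm_num
            · rcases grc_two hsum hkl hkp hlp with h | h | h
              · simp only [coord4, if_pos rfl, if_neg hkl, if_neg hkp, if_neg hkq] at h
                rcases hσ with rfl | rfl <;> norm_num at h
              · simp only [coord4, if_neg (Ne.symm hkl), if_pos rfl, if_neg hlp,
                  if_neg hlq] at h
                rcases hτ' with rfl | rfl <;> norm_num at h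
              · simp only [coord4, if_neg (Ne.symm hkp), if_neg (Ne.symm hlp), if_pos rfl,
                  if_neg hpq] at h
                rcases hσ' with rfl | rfl <;> norm_num at h

end S13


open S13

/-- A maximal closed subroot system of the affine root system of
type `D_{n+1}^{(2)}` whose gradient is not closed in the gradient root system equals
some `Ψ_I` with `I ⊊ {1,…,n}`. -/
theorem statement13 (n : ℕ) (hn : 2 ≤ n) (Ψ : Set (Euc n × ℝ))
    (hΨ : IsMaximalClosedSubrootSystem (PhiD2 n) Ψ)
    (hGr : ∃ u ∈ GrC Ψ, ∃ v ∈ GrC Ψ, u + v ∈ GrC (PhiD2 n) \ GrC Ψ) :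
    ∃ I : Set (Fin n), I ≠ Set.univ ∧ Ψ = PsiID2 n I := by
  obtain ⟨⟨⟨hne, hsub, hnePhi, hrefl⟩, hcl⟩, hmax⟩ := hΨ
  obtain ⟨i, j, hij, ⟨ci, hi⟩, ⟨cj, hj⟩, Hno⟩ := witness hsub hrefl hGr
  refine ⟨{s | ∃ r : ℤ, (eps s, ((2 * r : ℤ) : ℝ)) ∈ Ψ}, ?_, ?_⟩
  · intro hU
    obtain ⟨ri, hri⟩ : ∃ r : ℤ, (eps i, ((2 * r : ℤ) : ℝ)) ∈ Ψ := by
      have : i ∈ {s | ∃ r : ℤ, (eps s, ((2 * r : ℤ) : ℝ)) ∈ Ψ} := by rw [hU]; trivial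
      exact this
    obtain ⟨rj, hrj⟩ : ∃ r : ℤ, (eps j, ((2 * r : ℤ) : ℝ)) ∈ Ψ := by
      have : j ∈ {s | ∃ r : ℤ, (eps s, ((2 * r : ℤ) : ℝ)) ∈ Ψ} := by rw [hU]; trivial
      exact this
    exact Hno 1 1 pm_one pm_one _
      (close_ss' hcl pm_one pm_one hij (as1 hri) (as1 hrj) (by omega))
  · have hsubI : Ψ ⊆ PsiID2 n {s | ∃ r : ℤ, (eps s, ((2 * r : ℤ) : ℝ)) ∈ Ψ} := by
      intro x hx
      rcases mem_cases hsub hx with ⟨s, σ, a, hσ, rfl⟩ | ⟨s, t, σ, τ, r, hst, hσ, hτ, rfl⟩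
      · rcases Int.emod_two_eq a with hpar | hpar
        · refine psi_mem_short s hσ a rfl rfl (Or.inl ⟨?_, hpar⟩)
          obtain ⟨b, hpb, hb⟩ := short_norm hsub hrefl hσ hx
          refine ⟨b / 2, mem_eq hb (pair_eq rfl ?_)⟩
          exact_mod_cast congrArg (fun z : ℤ => (z : ℝ)) (show b = 2 * (b / 2) by omega)
        · refine psi_mem_short s hσ a rfl rfl (Or.inr ⟨?_, hpar⟩)
          rintro ⟨r, hr⟩
          exact no_mixed hsub hrefl hcl hij hi hj Hno hσ pm_one hx (as1 hr) (by omega)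
      · have key : ∀ (s' t' : Fin n) (σ' τ' : ℝ), s' ≠ t' → PM σ' → PM τ' →
            (σ' • eps s' + τ' • eps t', ((2 * r : ℤ) : ℝ)) ∈ Ψ →
            (∃ k : ℤ, (eps t', ((2 * k : ℤ) : ℝ)) ∈ Ψ) →
            ∃ k : ℤ, (eps s', ((2 * k : ℤ) : ℝ)) ∈ Ψ := by
          rintro s' t' σ' τ' hst' hσ' hτ' hmem ⟨k, hk⟩
          obtain ⟨e, hpe, he⟩ := transfer hsub hrefl hcl hst' hσ' hτ' hmem hk
          obtain ⟨b, hpb, hb⟩ := short_norm hsub hrefl hσ' he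
          refine ⟨b / 2, mem_eq hb (pair_eq rfl ?_)⟩
          exact_mod_cast congrArg (fun z : ℤ => (z : ℝ)) (show b = 2 * (b / 2) by omega)
        by_cases hsI : s ∈ {s | ∃ r : ℤ, (eps s, ((2 * r : ℤ) : ℝ)) ∈ Ψ} <;>
          by_cases htI : t ∈ {s | ∃ r : ℤ, (eps s, ((2 * r : ℤ) : ℝ)) ∈ Ψ}
        · exact psi_mem_long s t hst (Or.inl ⟨hsI, htI⟩) hσ hτ r rfl rfl
        · exact absurd (key t s τ σ (Ne.symm hst) hτ hσ
            (mem_eq hx (pair_eq (by module) rfl)) hsI) htI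
        · exact absurd (key s t σ τ hst hσ hτ hx htI) hsI
        · exact psi_mem_long s t hst (Or.inr ⟨hsI, htI⟩) hσ hτ r rfl rfl
    exact (hmax _ (psi_closed_subroot hn _) hsubI).symm
end
end

section
/- A subset Ψ ⊆ Φ, the affine root system of type D_4^{(3)}, is a maximal closed subroot system of Φ such that Gr(Ψ) is not closed in Gr(Φ) if and only if Gr(Ψ) = {ε_i − ε_j : 1 ≤ i ≠ j ≤ 3} and Ψ = Ψ(i,j,k;ℓ) for some permutation (i, j, k) of (1, 2, 3) and some ℓ ∈ ℤ with ℓ ≢ 0 (mod 3). -/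
noncomputable section

variable {V : Type*} [NormedAddCommGroup V] [InnerProductSpace ℝ V]

/-- The affine root system of type `D_4^{(3)}`. -/
def PhiD43 : Set (Euc 3 × ℝ) :=
  {x | (∃ i j : Fin 3, i ≠ j ∧ ∃ r : ℤ, x = (eps i - eps j, (r : ℝ))) ∨
       (∃ i j k : Fin 3, i ≠ j ∧ j ≠ k ∧ i ≠ k ∧ ∃ σ : ℝ, PM σ ∧ ∃ r : ℤ,
          x = (σ • (eps i + eps j - (2 : ℝ) • eps k), ((3 * r : ℤ) : ℝ)))}

/-- The positive part `Ψ⁺(i,j,k;ℓ)`. -/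
def PsiPlusD43 (i j k : Fin 3) (l : ℤ) : Set (Euc 3 × ℝ) :=
  {x | (∃ r : ℤ, x = (eps i - eps j, ((3 * r : ℤ) : ℝ))) ∨
       (∃ r : ℤ, x = (eps j - eps k, ((3 * r + l : ℤ) : ℝ))) ∨
       (∃ r : ℤ, x = (eps i - eps k, ((3 * r + l : ℤ) : ℝ)))}

/-- `Ψ(i,j,k;ℓ) = Ψ⁺(i,j,k;ℓ) ∪ (−Ψ⁺(i,j,k;ℓ))`. -/
def PsiD43 (i j k : Fin 3) (l : ℤ) : Set (Euc 3 × ℝ) :=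
  PsiPlusD43 i j k l ∪ (-PsiPlusD43 i j k l)


----------------------------------------------------------------
-- auxiliary definitions
----------------------------------------------------------------

/-- short root -/
def sr (a b : Fin 3) : Euc 3 := eps a - eps b
/-- long root representative -/
def lv (k : Fin 3) : Euc 3 := eps 0 + eps 1 + eps 2 - (3 : ℝ) • eps k


lemma inner_eps (i j : Fin 3) : (inner ℝ (eps i) (eps j) : ℝ) = if j = i then 1 else 0 := by
  simp [eps, EuclideanSpace.inner_single_left, EuclideanSpace.single_apply, eq_comm]

lemma esum_perm {x y z : Fin 3} (hxy : x ≠ y) (hxz : x ≠ z) (hyz : y ≠ z) :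
    eps x + eps y + eps z = eps 0 + eps 1 + eps 2 := by
  have : ∀ a b c : Fin 3, a ≠ b → a ≠ c → b ≠ c →
      ((a,b,c) = (0,1,2) ∨ (a,b,c) = (0,2,1) ∨ (a,b,c) = (1,0,2) ∨
       (a,b,c) = (1,2,0) ∨ (a,b,c) = (2,0,1) ∨ (a,b,c) = (2,1,0)) := by decide
  rcases this x y z hxy hxz hyz with h|h|h|h|h|h <;>
    (injection h with h1 h2; injection h2 with h2 h3; subst h1; subst h2; subst h3; abel)

lemma long_eq {i j k : Fin 3} (hij : i ≠ j) (hjk : j ≠ k) (hik : i ≠ k) :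
    eps i + eps j - (2 : ℝ) • eps k = lv k := by
  rw [lv, ← esum_perm hij hik hjk]
  module

lemma inner_sr_sr (a b c d : Fin 3) :
    (inner ℝ (sr a b) (sr c d) : ℝ) =
      ((if c = a then 1 else 0) - (if c = b then 1 else 0))
      - ((if d = a then 1 else 0) - (if d = b then 1 else 0)) := by
  simp only [sr, inner_sub_left, inner_sub_right, inner_eps]

lemma inner_e_eps (m : Fin 3) : (inner ℝ (eps 0 + eps 1 + eps 2 : Euc 3) (eps m) : ℝ) = 1 := by
  simp only [inner_add_left, inner_eps]
  fin_cases m <;> simp [Fin.ext_iff]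

lemma inner_lv_sr (k a b : Fin 3) :
    (inner ℝ (lv k) (sr a b) : ℝ) = -3 * ((if a = k then 1 else 0) - (if b = k then 1 else 0)) := by
  simp only [lv, sr, inner_sub_left, inner_sub_right, real_inner_smul_left, inner_e_eps, inner_eps]
  ring

lemma inner_sr_lv (a b k : Fin 3) :
    (inner ℝ (sr a b) (lv k) : ℝ) = -3 * ((if a = k then 1 else 0) - (if b = k then 1 else 0)) := by
  rw [real_inner_comm]; exact inner_lv_sr k a b

lemma inner_lv_lv (k l : Fin 3) :
    (inner ℝ (lv k) (lv l) : ℝ) = if k = l then 6 else -3 := by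
  have h3 : ∀ m : Fin 3, (inner ℝ (eps m) (eps 0 + eps 1 + eps 2 : Euc 3) : ℝ) = 1 := by
    intro m; rw [real_inner_comm]; exact inner_e_eps m
  have h2 : (inner ℝ (eps 0 + eps 1 + eps 2 : Euc 3) (eps 0 + eps 1 + eps 2 : Euc 3) : ℝ) = 3 := by
    simp only [inner_add_left, h3]; norm_num
  simp only [lv, inner_sub_left, inner_sub_right, real_inner_smul_left, real_inner_smul_right,
    inner_e_eps, h2, h3, inner_eps]
  rcases eq_or_ne k l with rfl | hkl
  · simp only [if_pos rfl]; norm_num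
  · rw [if_neg (Ne.symm hkl), if_neg hkl]; ring

lemma inner_sr_self {a b : Fin 3} (h : a ≠ b) : (inner ℝ (sr a b) (sr a b) : ℝ) = 2 := by
  rw [inner_sr_sr, if_pos rfl, if_pos rfl, if_neg h, if_neg (Ne.symm h)]; norm_num

lemma inner_lv_self (k : Fin 3) : (inner ℝ (lv k) (lv k) : ℝ) = 6 := by
  rw [inner_lv_lv, if_pos rfl]


lemma reflA_eq (u v : V) (c d : ℝ) :
    reflA (u, c) (v, d) = (reflV u v, d - cartanPair u v * c) := by
  simp [reflA, reflV, cartanPair, Prod.ext_iff, Prod.smul_def, smul_eq_mul]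

lemma reflA_self (x : V × ℝ) (h : (inner ℝ x.1 x.1 : ℝ) ≠ 0) : reflA x x = -x := by
  have : (2 * (inner ℝ x.1 x.1 : ℝ) / (inner ℝ x.1 x.1 : ℝ)) = 2 := by
    field_simp
  rw [reflA, this]
  module

lemma reflV_self (u : V) (h : (inner ℝ u u : ℝ) ≠ 0) : reflV u u = -u := by
  have : cartanPair u u = 2 := by rw [cartanPair]; field_simp
  rw [reflV, this]; module

-- cartan values
lemma cartan_sr_sr (a b c d : Fin 3) (hab : a ≠ b) :
    cartanPair (sr a b) (sr c d) =
      ((if c = a then 1 else 0) - (if c = b then 1 else 0))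
      - ((if d = a then 1 else 0) - (if d = b then 1 else 0)) := by
  rw [cartanPair, real_inner_comm, inner_sr_sr, inner_sr_self hab]; ring

lemma cartan1 {a b : Fin 3} (h : a ≠ b) : cartanPair (sr a b) (sr a b) = 2 := by
  rw [cartan_sr_sr _ _ _ _ h]
  simp [h, Ne.symm h]
  norm_num

lemma cartan2 {a b : Fin 3} (h : a ≠ b) : cartanPair (sr a b) (sr b a) = -2 := by
  rw [cartan_sr_sr _ _ _ _ h]
  simp [h, Ne.symm h]
  norm_num

lemma cartan3 {a b e : Fin 3} (hab : a ≠ b) (hae : a ≠ e) (hbe : b ≠ e) :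
    cartanPair (sr a b) (sr a e) = 1 := by
  rw [cartan_sr_sr _ _ _ _ hab]
  simp [hab, hae, hbe, Ne.symm hab, Ne.symm hae, Ne.symm hbe]

lemma cartan4 {a b e : Fin 3} (hab : a ≠ b) (hae : a ≠ e) (hbe : b ≠ e) :
    cartanPair (sr a b) (sr e b) = 1 := by
  rw [cartan_sr_sr _ _ _ _ hab]
  simp [hab, hae, hbe, Ne.symm hab, Ne.symm hae, Ne.symm hbe]

lemma cartan5 {a b e : Fin 3} (hab : a ≠ b) (hae : a ≠ e) (hbe : b ≠ e) :
    cartanPair (sr a b) (sr b e) = -1 := by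
  rw [cartan_sr_sr _ _ _ _ hab]
  simp [hab, hae, hbe, Ne.symm hab, Ne.symm hae, Ne.symm hbe]

lemma cartan6 {a b e : Fin 3} (hab : a ≠ b) (hae : a ≠ e) (hbe : b ≠ e) :
    cartanPair (sr a b) (sr e a) = -1 := by
  rw [cartan_sr_sr _ _ _ _ hab]
  simp [hab, hae, hbe, Ne.symm hab, Ne.symm hae, Ne.symm hbe]

lemma cartan_lv_sr (z x : Fin 3) (hxz : x ≠ z) : cartanPair (lv z) (sr x z) = 1 := by
  rw [cartanPair, inner_sr_lv, inner_lv_self, if_neg hxz, if_pos rfl]; norm_num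

-- reflV values
lemma reflV1 {a b : Fin 3} (h : a ≠ b) : reflV (sr a b) (sr a b) = sr b a := by
  rw [reflV, cartan1 h]; simp only [sr]; module

lemma reflV2 {a b : Fin 3} (h : a ≠ b) : reflV (sr a b) (sr b a) = sr a b := by
  rw [reflV, cartan2 h]; simp only [sr]; module

lemma reflV3 {a b e : Fin 3} (hab : a ≠ b) (hae : a ≠ e) (hbe : b ≠ e) :
    reflV (sr a b) (sr a e) = sr b e := by
  rw [reflV, cartan3 hab hae hbe]; simp only [sr]; module

lemma reflV4 {a b e : Fin 3} (hab : a ≠ b) (hae : a ≠ e) (hbe : b ≠ e) :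
    reflV (sr a b) (sr e b) = sr e a := by
  rw [reflV, cartan4 hab hae hbe]; simp only [sr]; module

lemma reflV5 {a b e : Fin 3} (hab : a ≠ b) (hae : a ≠ e) (hbe : b ≠ e) :
    reflV (sr a b) (sr b e) = sr a e := by
  rw [reflV, cartan5 hab hae hbe]; simp only [sr]; module

lemma reflV6 {a b e : Fin 3} (hab : a ≠ b) (hae : a ≠ e) (hbe : b ≠ e) :
    reflV (sr a b) (sr e a) = sr e b := by
  rw [reflV, cartan6 hab hae hbe]; simp only [sr]; module

lemma reflV_lv_sr {x y z : Fin 3} (hxy : x ≠ y) (hxz : x ≠ z) (hyz : y ≠ z) :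
    reflV (lv z) (sr x z) = sr z y := by
  rw [reflV, cartan_lv_sr z x hxz, one_smul]
  simp only [sr, lv]
  rw [← esum_perm hxy hxz hyz]
  module

-- generic "reflection is addition" lemmas
lemma reflV_add_short {u v : Euc 3} (huu : (inner ℝ u u : ℝ) = 2)
    (hvu : (inner ℝ v u : ℝ) = -1) : reflV u v = v + u := by
  rw [reflV, cartanPair, huu, hvu]; norm_num

lemma reflV_add_long {u v : Euc 3} (huu : (inner ℝ u u : ℝ) = 6)
    (hvu : (inner ℝ v u : ℝ) = -3) : reflV u v = v + u := by
  rw [reflV, cartanPair, huu, hvu]; norm_num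

----------------------------------------------------------------
-- section 3 : PhiD43 facts, PsiG
----------------------------------------------------------------

lemma fin3_cases_pair : ∀ a b c d : Fin 3, a ≠ b → c ≠ d →
    ((a = c ∧ b = d) ∨ (b = c ∧ a = d) ∨ (a = c ∧ d ≠ b ∧ d ≠ a) ∨
     (b = c ∧ d ≠ a ∧ d ≠ b) ∨ (b = d ∧ c ≠ a ∧ c ≠ b) ∨ (a = d ∧ c ≠ b ∧ c ≠ a)) := by
  decide

lemma fin3_other : ∀ k : Fin 3, ∃ i j : Fin 3, i ≠ j ∧ i ≠ k ∧ j ≠ k := by decide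

lemma fin3_third : ∀ a b : Fin 3, a ≠ b → ∃ e, e ≠ a ∧ e ≠ b := by decide

lemma zmod3_val_cast : ∀ t : ZMod 3, (((t.val : ℤ) : ZMod 3)) = t := by decide

lemma zmod3_three (x : ZMod 3) : x + x + x = 0 := by revert x; decide

lemma zcast_dvd (c : ℤ) : ((c : ZMod 3) = 0) ↔ (3:ℤ) ∣ c :=
  ZMod.intCast_zmod_eq_zero_iff_dvd c 3

lemma gsum_perm (g : Fin 3 → ZMod 3) {a b d : Fin 3} (hab : a ≠ b) (had : a ≠ d)
    (hbd : b ≠ d) : g a + g b + g d = g 0 + g 1 + g 2 := by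
  have : ∀ a b c : Fin 3, a ≠ b → a ≠ c → b ≠ c →
      ((a,b,c) = (0,1,2) ∨ (a,b,c) = (0,2,1) ∨ (a,b,c) = (1,0,2) ∨
       (a,b,c) = (1,2,0) ∨ (a,b,c) = (2,0,1) ∨ (a,b,c) = (2,1,0)) := by decide
  rcases this a b d hab had hbd with h|h|h|h|h|h <;>
    (injection h with h1 h2; injection h2 with h2 h3; subst h1; subst h2; subst h3; ring)

/-- membership of short affine roots in `PhiD43` -/
lemma phi_short {a b : Fin 3} (hab : a ≠ b) (c : ℤ) : (sr a b, (c:ℝ)) ∈ PhiD43 :=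
  Or.inl ⟨a, b, hab, c, rfl⟩

/-- membership of long affine roots in `PhiD43` -/
lemma phi_long (k : Fin 3) {σ : ℝ} (hσ : PM σ) (r : ℤ) :
    (σ • lv k, ((3 * r : ℤ) : ℝ)) ∈ PhiD43 := by
  obtain ⟨i, j, hij, hik, hjk⟩ := fin3_other k
  exact Or.inr ⟨i, j, k, hij, hjk, hik, σ, hσ, r, by rw [long_eq hij hjk hik]⟩

/-- inversion for `PhiD43` -/
lemma phi_inv {x : Euc 3 × ℝ} (hx : x ∈ PhiD43) :
    (∃ a b : Fin 3, a ≠ b ∧ ∃ c : ℤ, x = (sr a b, (c:ℝ))) ∨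
    (∃ (σ : ℝ) (k : Fin 3) (r : ℤ), PM σ ∧ x = (σ • lv k, ((3 * r : ℤ) : ℝ))) := by
  rcases hx with ⟨i, j, hij, r, hx⟩ | ⟨i, j, k, hij, hjk, hik, σ, hσ, r, hx⟩
  · exact Or.inl ⟨i, j, hij, r, hx⟩
  · exact Or.inr ⟨σ, k, r, hσ, by rwa [long_eq hij hjk hik] at hx⟩

lemma inner_smul_lv {σ : ℝ} (hσ : PM σ) (k : Fin 3) :
    (inner ℝ (σ • lv k) (σ • lv k) : ℝ) = 6 := by
  rw [real_inner_smul_left, real_inner_smul_right, inner_lv_self]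
  rcases hσ with rfl | rfl <;> norm_num

/-- the squared length of any root is 2 or 6 -/
lemma phi_q {x : Euc 3 × ℝ} (hx : x ∈ PhiD43) :
    (inner ℝ x.1 x.1 : ℝ) = 2 ∨ (inner ℝ x.1 x.1 : ℝ) = 6 := by
  rcases phi_inv hx with ⟨a, b, hab, c, rfl⟩ | ⟨σ, k, r, hσ, rfl⟩
  · exact Or.inl (inner_sr_self hab)
  · exact Or.inr (inner_smul_lv hσ k)

lemma grphi_q {v : Euc 3} (hv : v ∈ GrC PhiD43) :
    (inner ℝ v v : ℝ) = 2 ∨ (inner ℝ v v : ℝ) = 6 := by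
  obtain ⟨c, hc⟩ := hv
  exact phi_q hc

/-- the subroot systems `Ψ_g` -/
def PsiG (g : Fin 3 → ZMod 3) : Set (Euc 3 × ℝ) :=
  {x | ∃ a b : Fin 3, a ≠ b ∧ ∃ c : ℤ, ((c : ZMod 3) = g a - g b) ∧ x = (sr a b, (c : ℝ))}

lemma psiG_mem {g : Fin 3 → ZMod 3} {a b : Fin 3} (hab : a ≠ b) {c : ℤ}
    (hc : (c : ZMod 3) = g a - g b) : (sr a b, (c:ℝ)) ∈ PsiG g :=
  ⟨a, b, hab, c, hc, rfl⟩

lemma psiG_sub_phi (g : Fin 3 → ZMod 3) : PsiG g ⊆ PhiD43 := by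
  rintro x ⟨a, b, hab, c, hc, rfl⟩
  exact phi_short hab c

lemma psiG_ne_phi (g : Fin 3 → ZMod 3) : PsiG g ≠ PhiD43 := by
  intro h
  have hmem : ((1:ℝ) • lv 2, ((3 * 0 : ℤ) : ℝ)) ∈ PsiG g := by
    rw [h]; exact phi_long 2 (Or.inl rfl) 0
  obtain ⟨a, b, hab, c, hc, hx⟩ := hmem
  have h1 : (1:ℝ) • lv 2 = sr a b := congrArg Prod.fst hx
  have h2 : (inner ℝ ((1:ℝ) • lv 2) ((1:ℝ) • lv 2) : ℝ) = 6 := inner_smul_lv (Or.inl rfl) 2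
  rw [h1, inner_sr_self hab] at h2
  norm_num at h2

lemma psiG_sum_ne (g : Fin 3 → ZMod 3) (hg : g 0 + g 1 + g 2 ≠ 0) {a b d : Fin 3}
    (hab : a ≠ b) (had : a ≠ d) (hbd : b ≠ d) : (g a - g b) + (g a - g d) ≠ 0 := by
  intro h
  apply hg
  rw [← gsum_perm g hab had hbd]
  have h3 := zmod3_three (g a)
  linear_combination h3 - h

/-- `Ψ_g` is closed under reflections -/
lemma psiG_refl (g : Fin 3 → ZMod 3) :
    ∀ x ∈ PsiG g, ∀ y ∈ PsiG g, reflA x y ∈ PsiG g := by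
  rintro x ⟨a, b, hab, c, hc, rfl⟩ y ⟨a', b', ha'b', c', hc', rfl⟩
  rcases fin3_cases_pair a b a' b' hab ha'b' with
    ⟨rfl, rfl⟩ | ⟨rfl, rfl⟩ | ⟨rfl, hd1, hd2⟩ | ⟨rfl, hd1, hd2⟩ | ⟨rfl, hd1, hd2⟩ | ⟨rfl, hd1, hd2⟩
  · rw [reflA_eq, cartan1 hab, reflV1 hab]
    have : ((c':ℝ) - 2 * (c:ℝ)) = ((c' - 2*c : ℤ) : ℝ) := by push_cast; ring
    rw [this]
    exact psiG_mem (Ne.symm hab) (by push_cast; rw [hc, hc']; ring)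
  · rw [reflA_eq, cartan2 hab, reflV2 hab]
    have : ((c':ℝ) - (-2) * (c:ℝ)) = ((c' + 2*c : ℤ) : ℝ) := by push_cast; ring
    rw [this]
    exact psiG_mem hab (by push_cast; rw [hc, hc']; ring)
  · -- a' = a, e := b' with e ≠ b index relations
    rw [reflA_eq, cartan3 hab (Ne.symm hd2) (Ne.symm hd1), reflV3 hab (Ne.symm hd2) (Ne.symm hd1)]
    have : ((c':ℝ) - 1 * (c:ℝ)) = ((c' - c : ℤ) : ℝ) := by push_cast; ring
    rw [this]
    exact psiG_mem (Ne.symm hd1) (by push_cast; rw [hc, hc']; ring)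
  · -- a' = b, e := b', e ≠ a, e ≠ b
    rw [reflA_eq, cartan5 hab (Ne.symm hd1) (Ne.symm hd2), reflV5 hab (Ne.symm hd1) (Ne.symm hd2)]
    have : ((c':ℝ) - (-1) * (c:ℝ)) = ((c' + c : ℤ) : ℝ) := by push_cast; ring
    rw [this]
    exact psiG_mem (Ne.symm hd1) (by push_cast; rw [hc, hc']; ring)
  · -- b' = b, e := a', e ≠ a, e ≠ b
    rw [reflA_eq, cartan4 hab (Ne.symm hd1) (Ne.symm hd2), reflV4 hab (Ne.symm hd1) (Ne.symm hd2)]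
    have : ((c':ℝ) - 1 * (c:ℝ)) = ((c' - c : ℤ) : ℝ) := by push_cast; ring
    rw [this]
    exact psiG_mem hd1 (by push_cast; rw [hc, hc']; ring)
  · -- b' = a, e := a', e ≠ b, e ≠ a
    rw [reflA_eq, cartan6 hab (Ne.symm hd2) (Ne.symm hd1), reflV6 hab (Ne.symm hd2) (Ne.symm hd1)]
    have : ((c':ℝ) - (-1) * (c:ℝ)) = ((c' + c : ℤ) : ℝ) := by push_cast; ring
    rw [this]
    exact psiG_mem hd1 (by push_cast; rw [hc, hc']; ring)

lemma inner_sum_src {a b d : Fin 3} (hab : a ≠ b) (had : a ≠ d) (hbd : b ≠ d) :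
    (inner ℝ (sr a b + sr a d) (sr a b + sr a d) : ℝ) = 6 := by
  simp only [inner_add_left, inner_add_right, inner_sr_self hab, inner_sr_self had, inner_sr_sr]
  simp [hab, had, hbd, Ne.symm hab, Ne.symm had, Ne.symm hbd]
  norm_num

lemma inner_sum_tgt {a b d : Fin 3} (hab : a ≠ b) (had : a ≠ d) (hbd : b ≠ d) :
    (inner ℝ (sr a b + sr d b) (sr a b + sr d b) : ℝ) = 6 := by
  simp only [inner_add_left, inner_add_right, inner_sr_self hab, inner_sr_self (Ne.symm hbd),
    inner_sr_sr]
  simp [hab, had, hbd, Ne.symm hab, Ne.symm had, Ne.symm hbd]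
  norm_num

/-- a sum of two roots of squared length 6 lying in `Φ` has coefficient divisible by 3 -/
lemma phi_long_coeff {v : Euc 3} {t : ℝ} (h : (v, t) ∈ PhiD43)
    (hv : (inner ℝ v v : ℝ) = 6) : ∃ r : ℤ, t = ((3 * r : ℤ) : ℝ) := by
  rcases phi_inv h with ⟨p, q', hpq, c'', hh⟩ | ⟨σ, k, r, hσ, hh⟩
  · exfalso
    have h1 : v = sr p q' := congrArg Prod.fst hh
    rw [h1, inner_sr_self hpq] at hv; norm_num at hv
  · exact ⟨r, congrArg Prod.snd hh⟩

/-- `Ψ_g` is closed in `Φ` when `g 0 + g 1 + g 2 ≠ 0` -/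
lemma psiG_closed (g : Fin 3 → ZMod 3) (hg : g 0 + g 1 + g 2 ≠ 0) :
    IsClosedIn PhiD43 (PsiG g) := by
  rintro x ⟨a, b, hab, c, hc, rfl⟩ y ⟨a', b', ha'b', c', hc', rfl⟩ hsum
  have hsum1 : ((sr a b, (c:ℝ)) + (sr a' b', (c':ℝ)) : Euc 3 × ℝ)
      = (sr a b + sr a' b', ((c + c' : ℤ) : ℝ)) := by
    rw [Prod.mk_add_mk]; push_cast; rfl
  rw [hsum1] at hsum ⊢
  rcases fin3_cases_pair a b a' b' hab ha'b' with
    ⟨rfl, rfl⟩ | ⟨rfl, rfl⟩ | ⟨rfl, hd1, hd2⟩ | ⟨rfl, hd1, hd2⟩ | ⟨rfl, hd1, hd2⟩ | ⟨rfl, hd1, hd2⟩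
  · -- sum of equal roots: not a root
    exfalso
    have hv : sr a b + sr a b = (2:ℝ) • sr a b := by module
    have hq := phi_q hsum
    rw [hv] at hq
    simp only [real_inner_smul_left, real_inner_smul_right, inner_sr_self hab] at hq
    norm_num at hq
  · -- opposite roots: sum is zero
    exfalso
    have hv : sr a b + sr b a = (0 : Euc 3) := by simp only [sr]; module
    have hq := phi_q hsum
    rw [hv] at hq
    simp only [inner_zero_left] at hq
    norm_num at hq
  · -- (a,b) + (a,e) : long root, coefficient sum not ≡ 0 mod 3
    exfalso
    obtain ⟨r, hr⟩ := phi_long_coeff hsum (inner_sum_src hab (Ne.symm hd2) (Ne.symm hd1))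
    have h3 : c + c' = 3 * r := by exact_mod_cast hr
    have h4 : ((c + c' : ℤ) : ZMod 3) = 0 := (zcast_dvd _).mpr ⟨r, h3⟩
    rw [Int.cast_add, hc, hc'] at h4
    exact psiG_sum_ne g hg hab (Ne.symm hd2) (Ne.symm hd1) h4
  · -- (a,b) + (b,e) : short root sr a e
    have hv : sr a b + sr b b' = sr a b' := by simp only [sr]; module
    rw [hv]
    exact psiG_mem (Ne.symm hd1) (by push_cast; rw [hc, hc']; ring)
  · -- (a,b) + (e,b) : long root
    exfalso
    obtain ⟨r, hr⟩ := phi_long_coeff hsum (inner_sum_tgt hab (Ne.symm hd1) (Ne.symm hd2))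
    have h3 : c + c' = 3 * r := by exact_mod_cast hr
    have h4 : ((c + c' : ℤ) : ZMod 3) = 0 := (zcast_dvd _).mpr ⟨r, h3⟩
    rw [Int.cast_add, hc, hc'] at h4
    have h5 : (g b - g a) + (g b - g a') = 0 := by linear_combination - h4
    exact psiG_sum_ne g hg (Ne.symm hab) (Ne.symm hd2) (Ne.symm hd1) h5
  · -- (a,b) + (e,a) : short root sr e b
    have hv : sr a b + sr a' a = sr a' b := by simp only [sr]; module
    rw [hv]
    exact psiG_mem hd1 (by push_cast; rw [hc, hc']; ring)

/-- `Ψ_g` is a closed subroot system. -/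
lemma psiG_csrs (g : Fin 3 → ZMod 3) (hg : g 0 + g 1 + g 2 ≠ 0) :
    IsClosedSubrootSystem PhiD43 (PsiG g) := by
  refine ⟨⟨?_, psiG_sub_phi g, psiG_ne_phi g, psiG_refl g⟩, psiG_closed g hg⟩
  refine ⟨(sr 0 1, (((g 0 - g 1).val : ℤ) : ℝ)), psiG_mem (by decide) ?_⟩
  rw [zmod3_val_cast]

----------------------------------------------------------------
-- section 5 : generation lemmas
----------------------------------------------------------------

lemma zmod3_tri : ∀ u v t : ZMod 3, v ≠ 0 →
    (t = u + u ∨ t = u + (u + v) ∨ t = (u + v) + (u + v)) := by decide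

lemma zmod3_dichot : ∀ S m : ZMod 3, S ≠ 0 → m ≠ 0 → (m = S ∨ m + S = 0) := by decide

lemma fin3_pairs_of : ∀ x y z p q : Fin 3, x ≠ y → x ≠ z → y ≠ z → p ≠ q →
    ((p,q) = (z,y) ∨ (p,q) = (y,z) ∨ (p,q) = (x,z) ∨ (p,q) = (z,x) ∨
     (p,q) = (x,y) ∨ (p,q) = (y,x)) := by decide

lemma zmod3_val_cast' : ∀ t : ZMod 3, ((t.val : ℕ) : ZMod 3) = t := by decide

lemma cast3_zero (s : ℤ) : ((3 * s : ℤ) : ZMod 3) = 0 := (zcast_dvd _).mpr ⟨s, rfl⟩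

/-- If a closed subroot system `Δ` contains `Ψ_g` and one long root, it is all of `Φ`. -/
lemma gen_long (g : Fin 3 → ZMod 3) (hg : g 0 + g 1 + g 2 ≠ 0) (Δ : Set (Euc 3 × ℝ))
    (hsub : PsiG g ⊆ Δ)
    (hrefl : ∀ x ∈ Δ, ∀ y ∈ Δ, reflA x y ∈ Δ)
    (hclosed : IsClosedIn PhiD43 Δ)
    (z : Fin 3) (s : ℤ) (hmem : (lv z, ((3 * s : ℤ) : ℝ)) ∈ Δ) : PhiD43 ⊆ Δ := by
  obtain ⟨x, y, hxy, hxz, hyz⟩ := fin3_other z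
  set S := g 0 + g 1 + g 2 with hS
  -- class κ₁ in direction (z,y)
  have h1 : ∀ c : ℤ, ((c : ZMod 3) = g z - g y) → (sr z y, (c:ℝ)) ∈ Δ := fun c hc =>
    hsub (psiG_mem (Ne.symm hyz) hc)
  -- class κ₂ in direction (z,y)
  have h2 : ∀ c : ℤ, ((c : ZMod 3) = g x - g z) → (sr z y, (c:ℝ)) ∈ Δ := by
    intro c hc
    have hxz_mem : (sr x z, ((c + 3*s : ℤ):ℝ)) ∈ Δ := by
      refine hsub (psiG_mem hxz ?_)
      rw [Int.cast_add, cast3_zero, add_zero, hc]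
    have h := hrefl _ hmem _ hxz_mem
    rw [reflA_eq, cartan_lv_sr z x hxz, reflV_lv_sr hxy hxz hyz] at h
    have he : ((c + 3*s : ℤ):ℝ) - 1 * ((3 * s : ℤ) : ℝ) = (c : ℝ) := by push_cast; ring
    rwa [he] at h
  -- all of direction (y,z)
  have h3 : ∀ b : ℤ, (sr y z, (b:ℝ)) ∈ Δ := by
    intro b
    have key : ∀ c c' : ℤ, ((c:ZMod 3) = g z - g y ∨ (c:ZMod 3) = g x - g z) →
        ((c':ZMod 3) = g z - g y ∨ (c':ZMod 3) = g x - g z) → b = c' - 2*c →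
        (sr y z, (b:ℝ)) ∈ Δ := by
      intro c c' hcc hcc' hb
      have hcm : (sr z y, (c:ℝ)) ∈ Δ := hcc.elim (h1 c) (h2 c)
      have hcm' : (sr z y, (c':ℝ)) ∈ Δ := hcc'.elim (h1 c') (h2 c')
      have h := hrefl _ hcm _ hcm'
      rw [reflA_eq, cartan1 (Ne.symm hyz), reflV1 (Ne.symm hyz)] at h
      have he : (c':ℝ) - 2 * (c:ℝ) = (b : ℝ) := by rw [hb]; push_cast; ring
      rwa [he] at h
    -- three residue classes
    have hκ : g x - g z = (g z - g y) + S := by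
      have hgs := gsum_perm g hxy hxz hyz
      have h3z := zmod3_three (g z)
      rw [hS]
      linear_combination hgs - h3z
    rcases zmod3_tri (g z - g y) S ((b : ZMod 3)) hg with ht | ht | ht
    · -- b ≡ κ₁ + κ₁ : c in κ₁, c' = b + 2c in κ₁
      refine key (((g z - g y).val : ℤ)) (b + 2 * ((g z - g y).val : ℤ))
        (Or.inl (zmod3_val_cast _)) (Or.inl ?_) (by ring)
      push_cast
      rw [zmod3_val_cast', ht]
      linear_combination zmod3_three (g z - g y)
    · -- b ≡ κ₁ + κ₂ : c in κ₁, c' = b + 2c in κ₂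
      refine key (((g z - g y).val : ℤ)) (b + 2 * ((g z - g y).val : ℤ))
        (Or.inl (zmod3_val_cast _)) (Or.inr ?_) (by ring)
      push_cast
      rw [zmod3_val_cast', ht, hκ]
      linear_combination zmod3_three (g z - g y)
    · -- b ≡ κ₂ + κ₂ : c in κ₂, c' = b + 2c in κ₂
      refine key (((g x - g z).val : ℤ)) (b + 2 * ((g x - g z).val : ℤ))
        (Or.inr (zmod3_val_cast _)) (Or.inr ?_) (by ring)
      push_cast
      rw [zmod3_val_cast', ht, hκ]
      linear_combination zmod3_three (g z - g y + S)
  -- all of direction (z,y)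
  have h4 : ∀ b : ℤ, (sr z y, (b:ℝ)) ∈ Δ := by
    intro b
    have h := hrefl _ (h3 0) _ (h3 b)
    rw [reflA_eq, cartan1 hyz, reflV1 hyz] at h
    have he : (b:ℝ) - 2 * ((0:ℤ):ℝ) = (b:ℝ) := by push_cast; ring
    rwa [he] at h
  -- all of direction (x,z)
  have h5 : ∀ b : ℤ, (sr x z, (b:ℝ)) ∈ Δ := by
    intro b
    have hxy_mem : (sr x y, (((g x - g y).val : ℤ):ℝ)) ∈ Δ :=
      hsub (psiG_mem hxy (zmod3_val_cast _))
    have h := hrefl _ (h4 (((g x - g y).val : ℤ) - b)) _ hxy_mem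
    rw [reflA_eq, cartan4 (Ne.symm hyz) (Ne.symm hxz) (Ne.symm hxy),
      reflV4 (Ne.symm hyz) (Ne.symm hxz) (Ne.symm hxy)] at h
    have he : (((g x - g y).val : ℤ):ℝ) - 1 * ((((g x - g y).val : ℤ) - b : ℤ):ℝ) = (b:ℝ) := by
      push_cast; ring
    rwa [he] at h
  -- all of direction (z,x)
  have h6 : ∀ b : ℤ, (sr z x, (b:ℝ)) ∈ Δ := by
    intro b
    have h := hrefl _ (h5 0) _ (h5 b)
    rw [reflA_eq, cartan1 hxz, reflV1 hxz] at h
    have he : (b:ℝ) - 2 * ((0:ℤ):ℝ) = (b:ℝ) := by push_cast; ring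
    rwa [he] at h
  -- all of direction (x,y)
  have h7 : ∀ b : ℤ, (sr x y, (b:ℝ)) ∈ Δ := by
    intro b
    have h := hrefl _ (h5 0) _ (h4 b)
    rw [reflA_eq, cartan5 hxz hxy (Ne.symm hyz), reflV5 hxz hxy (Ne.symm hyz)] at h
    have he : (b:ℝ) - (-1) * ((0:ℤ):ℝ) = (b:ℝ) := by push_cast; ring
    rwa [he] at h
  -- all of direction (y,x)
  have h8 : ∀ b : ℤ, (sr y x, (b:ℝ)) ∈ Δ := by
    intro b
    have h := hrefl _ (h7 0) _ (h7 b)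
    rw [reflA_eq, cartan1 hxy, reflV1 hxy] at h
    have he : (b:ℝ) - 2 * ((0:ℤ):ℝ) = (b:ℝ) := by push_cast; ring
    rwa [he] at h
  -- all short roots
  have hall : ∀ p q : Fin 3, p ≠ q → ∀ b : ℤ, (sr p q, (b:ℝ)) ∈ Δ := by
    intro p q hpq b
    rcases fin3_pairs_of x y z p q hxy hxz hyz hpq with h|h|h|h|h|h <;>
      (injection h with e1 e2; subst e1; subst e2)
    exacts [h4 b, h3 b, h5 b, h6 b, h7 b, h8 b]
  -- all long roots
  have hlong : ∀ (k : Fin 3) (σ : ℝ), PM σ → ∀ r : ℤ, (σ • lv k, ((3*r:ℤ):ℝ)) ∈ Δ := by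
    intro k σ hσ r
    obtain ⟨u, v, huv, huk, hvk⟩ := fin3_other k
    rcases hσ with rfl | rfl
    · have hA := hall u k huk 0
      have hB := hall v k hvk (3*r)
      have hs := hclosed _ hA _ hB
      have hv : ((sr u k, ((0:ℤ):ℝ)) + (sr v k, ((3*r:ℤ):ℝ)) : Euc 3 × ℝ)
          = ((1:ℝ) • lv k, ((3*r:ℤ):ℝ)) := by
        rw [Prod.mk_add_mk, ← long_eq huv hvk huk, Prod.mk.injEq]
        exact ⟨by simp only [sr, one_smul]; module, by push_cast; ring⟩
      rw [hv] at hs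
      exact hs (phi_long k (Or.inl rfl) r)
    · have hA := hall k u (Ne.symm huk) 0
      have hB := hall k v (Ne.symm hvk) (3*r)
      have hs := hclosed _ hA _ hB
      have hv : ((sr k u, ((0:ℤ):ℝ)) + (sr k v, ((3*r:ℤ):ℝ)) : Euc 3 × ℝ)
          = ((-1:ℝ) • lv k, ((3*r:ℤ):ℝ)) := by
        rw [Prod.mk_add_mk, ← long_eq huv hvk huk, Prod.mk.injEq]
        exact ⟨by simp only [sr]; module, by push_cast; ring⟩
      rw [hv] at hs
      exact hs (phi_long k (Or.inr rfl) r)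
  -- conclude
  intro p hp
  rcases phi_inv hp with ⟨a, b, hab, c, rfl⟩ | ⟨σ, k, r, hσ, rfl⟩
  · exact hall a b hab c
  · exact hlong k σ hσ r

----------------------------------------------------------------
-- section 6 : maximality of Ψ_g
----------------------------------------------------------------

/-- `Ψ_g` is a maximal closed subroot system. -/
lemma psiG_maximal (g : Fin 3 → ZMod 3) (hg : g 0 + g 1 + g 2 ≠ 0) :
    ∀ Δ, IsClosedSubrootSystem PhiD43 Δ → PsiG g ⊆ Δ → Δ = PsiG g := by
  intro Δ hΔ hsub
  obtain ⟨⟨hne, hsubΦ, hneΦ, hrefl⟩, hclosed⟩ := hΔ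
  by_contra hne'
  have hex : ∃ p ∈ Δ, p ∉ PsiG g := by
    by_contra hc
    push_neg at hc
    exact hne' (le_antisymm hc hsub)
  obtain ⟨p, hpΔ, hpn⟩ := hex
  -- in every case we produce a long root in Δ
  have hlongσ : ∃ (σ : ℝ) (k : Fin 3) (r : ℤ), PM σ ∧ (σ • lv k, ((3 * r : ℤ) : ℝ)) ∈ Δ := by
    rcases phi_inv (hsubΦ hpΔ) with ⟨a, b, hab, c, rfl⟩ | ⟨σ, k, r, hσ, rfl⟩
    · -- short root with a wrong class
      have hcw : ((c : ZMod 3)) ≠ g a - g b := fun hcl => hpn (psiG_mem hab hcl)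
      obtain ⟨e, hea, heb⟩ := fin3_third a b hab
      set S := g 0 + g 1 + g 2 with hS
      have hgs : g a + g b + g e = S := gsum_perm g hab (Ne.symm hea) (Ne.symm heb)
      have hm : (c : ZMod 3) - (g a - g b) ≠ 0 := by
        intro h; exact hcw (by linear_combination h)
      rcases zmod3_dichot S _ hg hm with hms | hms
      · -- partner (sr a e, -c)
        have hB : (sr a e, ((-c : ℤ) : ℝ)) ∈ Δ := by
          refine hsub (psiG_mem (Ne.symm hea) ?_)
          push_cast
          linear_combination - hms + hgs - zmod3_three (g a)
        have hsum := hclosed _ hpΔ _ hB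
        have hv : ((sr a b, (c:ℝ)) + (sr a e, ((-c : ℤ) : ℝ)) : Euc 3 × ℝ)
            = ((-1:ℝ) • lv a, ((3 * 0 : ℤ) : ℝ)) := by
          rw [Prod.mk_add_mk, ← long_eq (Ne.symm heb) hea (Ne.symm hab), Prod.mk.injEq]
          refine ⟨by simp only [sr]; module, by push_cast; ring⟩
        rw [hv] at hsum
        exact ⟨-1, a, 0, Or.inr rfl, hsum (phi_long a (Or.inr rfl) 0)⟩
      · -- partner (sr e b, -c)
        have hB : (sr e b, ((-c : ℤ) : ℝ)) ∈ Δ := by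
          refine hsub (psiG_mem heb ?_)
          push_cast
          linear_combination - hms - hgs + zmod3_three (g b)
        have hsum := hclosed _ hpΔ _ hB
        have hv : ((sr a b, (c:ℝ)) + (sr e b, ((-c : ℤ) : ℝ)) : Euc 3 × ℝ)
            = ((1:ℝ) • lv b, ((3 * 0 : ℤ) : ℝ)) := by
          rw [Prod.mk_add_mk, ← long_eq (Ne.symm hea) heb hab, Prod.mk.injEq]
          refine ⟨by simp only [sr, one_smul]; module, by push_cast; ring⟩
        rw [hv] at hsum
        exact ⟨1, b, 0, Or.inl rfl, hsum (phi_long b (Or.inl rfl) 0)⟩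
    · exact ⟨σ, k, r, hσ, hpΔ⟩
  -- normalize the sign
  have hlong : ∃ (z : Fin 3) (s : ℤ), (lv z, ((3 * s : ℤ) : ℝ)) ∈ Δ := by
    obtain ⟨σ, k, r, hσ, hk⟩ := hlongσ
    rcases hσ with rfl | rfl
    · refine ⟨k, r, ?_⟩
      rwa [one_smul] at hk
    · have hnz : (inner ℝ (((-1:ℝ) • lv k, ((3 * r : ℤ) : ℝ)) : Euc 3 × ℝ).1
          (((-1:ℝ) • lv k, ((3 * r : ℤ) : ℝ)) : Euc 3 × ℝ).1 : ℝ) ≠ 0 := by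
        show (inner ℝ ((-1:ℝ) • lv k) ((-1:ℝ) • lv k) : ℝ) ≠ 0
        rw [inner_smul_lv (Or.inr rfl) k]; norm_num
      have h := hrefl _ hk _ hk
      rw [reflA_self _ hnz] at h
      refine ⟨k, -r, ?_⟩
      have he : (-(((-1:ℝ) • lv k, ((3 * r : ℤ) : ℝ))) : Euc 3 × ℝ)
          = (lv k, ((3 * (-r) : ℤ) : ℝ)) := by
        rw [Prod.neg_mk, Prod.mk.injEq]
        refine ⟨by module, by push_cast; ring⟩
      rwa [he] at h
  obtain ⟨z, s, hzs⟩ := hlong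
  have hall := gen_long g hg Δ hsub hrefl hclosed z s hzs
  exact hneΦ (le_antisymm hsubΦ hall)

----------------------------------------------------------------
-- section 7 : PsiD43 = PsiG
----------------------------------------------------------------

lemma dvd_of_cast_eq {c : ℤ} (h : (c : ZMod 3) = 0) : ∃ r : ℤ, c = 3 * r := by
  obtain ⟨r, hr⟩ := (zcast_dvd c).mp h
  exact ⟨r, hr⟩

lemma shift_of_cast_eq {c l : ℤ} (h : (c : ZMod 3) = (l : ZMod 3)) : ∃ r : ℤ, c = 3 * r + l := by
  have : ((c - l : ℤ) : ZMod 3) = 0 := by push_cast; rw [h]; ring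
  obtain ⟨r, hr⟩ := dvd_of_cast_eq this
  exact ⟨r, by omega⟩

lemma fin3_pairs_of' : ∀ x y z p q : Fin 3, x ≠ y → x ≠ z → y ≠ z → p ≠ q →
    ((z = p ∧ y = q) ∨ (y = p ∧ z = q) ∨ (x = p ∧ z = q) ∨ (z = p ∧ x = q) ∨
     (x = p ∧ y = q) ∨ (y = p ∧ x = q)) := by decide

lemma psiD_eq_psiG (i j k : Fin 3) (hij : i ≠ j) (hjk : j ≠ k) (hik : i ≠ k) (l : ℤ) :
    PsiD43 i j k l = PsiG (fun x => if x = k then (-l : ZMod 3) else 0) := by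
  set G : Fin 3 → ZMod 3 := fun x => if x = k then (-l : ZMod 3) else 0 with hG
  have hGi : G i = 0 := if_neg hik
  have hGj : G j = 0 := if_neg hjk
  have hGk : G k = (-l : ZMod 3) := if_pos rfl
  ext x
  constructor
  · rintro (h | h)
    · rcases h with ⟨r, rfl⟩ | ⟨r, rfl⟩ | ⟨r, rfl⟩
      · exact ⟨i, j, hij, 3*r, by rw [cast3_zero, hGi, hGj, sub_zero], by simp only [sr]⟩
      · refine ⟨j, k, hjk, 3*r + l, ?_, by simp only [sr]⟩
        rw [Int.cast_add, cast3_zero, zero_add, hGj, hGk]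
        ring
      · refine ⟨i, k, hik, 3*r + l, ?_, by simp only [sr]⟩
        rw [Int.cast_add, cast3_zero, zero_add, hGi, hGk]
        ring
    · rw [Set.mem_neg] at h
      rcases h with ⟨r, hx⟩ | ⟨r, hx⟩ | ⟨r, hx⟩
      · refine ⟨j, i, Ne.symm hij, -(3*r), ?_, ?_⟩
        · rw [Int.cast_neg, cast3_zero, neg_zero, hGi, hGj, sub_zero]
        · rw [neg_eq_iff_eq_neg.mp hx, Prod.neg_mk, Prod.mk.injEq]
          refine ⟨by simp only [sr]; module, by push_cast; ring⟩
      · refine ⟨k, j, Ne.symm hjk, -(3*r + l), ?_, ?_⟩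
        · rw [Int.cast_neg, Int.cast_add, cast3_zero, zero_add, hGj, hGk]; ring
        · rw [neg_eq_iff_eq_neg.mp hx, Prod.neg_mk, Prod.mk.injEq]
          refine ⟨by simp only [sr]; module, by push_cast; ring⟩
      · refine ⟨k, i, Ne.symm hik, -(3*r + l), ?_, ?_⟩
        · rw [Int.cast_neg, Int.cast_add, cast3_zero, zero_add, hGi, hGk]; ring
        · rw [neg_eq_iff_eq_neg.mp hx, Prod.neg_mk, Prod.mk.injEq]
          refine ⟨by simp only [sr]; module, by push_cast; ring⟩
  · rintro ⟨a, b, hab, c, hc, rfl⟩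
    rcases fin3_pairs_of' i j k a b hij hik hjk hab with
      ⟨rfl, rfl⟩ | ⟨rfl, rfl⟩ | ⟨rfl, rfl⟩ | ⟨rfl, rfl⟩ | ⟨rfl, rfl⟩ | ⟨rfl, rfl⟩
    · -- (k, j) : class -l ; element of -Ψ⁺ (second branch)
      rw [hGk, hGj] at hc
      have hc' : ((-c : ℤ) : ZMod 3) = (l : ZMod 3) := by push_cast; linear_combination - hc
      obtain ⟨r, hr⟩ := shift_of_cast_eq hc'
      refine Or.inr ?_
      rw [Set.mem_neg]
      refine Or.inr (Or.inl ⟨r, ?_⟩)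
      rw [Prod.neg_mk, Prod.mk.injEq]
      refine ⟨by simp only [sr]; module, by rw [← hr]; push_cast; ring⟩
    · -- (j, k) : class l ; Ψ⁺ second branch
      rw [hGj, hGk] at hc
      have hc' : ((c : ℤ) : ZMod 3) = (l : ZMod 3) := by rw [hc]; ring
      obtain ⟨r, hr⟩ := shift_of_cast_eq hc'
      refine Or.inl (Or.inr (Or.inl ⟨r, ?_⟩))
      rw [Prod.mk.injEq]
      exact ⟨by simp only [sr], by rw [hr]⟩
    · -- (i, k) : class l ; Ψ⁺ third branch
      rw [hGi, hGk] at hc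
      have hc' : ((c : ℤ) : ZMod 3) = (l : ZMod 3) := by rw [hc]; ring
      obtain ⟨r, hr⟩ := shift_of_cast_eq hc'
      refine Or.inl (Or.inr (Or.inr ⟨r, ?_⟩))
      rw [Prod.mk.injEq]
      exact ⟨by simp only [sr], by rw [hr]⟩
    · -- (k, i) : class -l ; -Ψ⁺ third branch
      rw [hGk, hGi] at hc
      have hc' : ((-c : ℤ) : ZMod 3) = (l : ZMod 3) := by push_cast; linear_combination - hc
      obtain ⟨r, hr⟩ := shift_of_cast_eq hc'
      refine Or.inr ?_
      rw [Set.mem_neg]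
      refine Or.inr (Or.inr ⟨r, ?_⟩)
      rw [Prod.neg_mk, Prod.mk.injEq]
      refine ⟨by simp only [sr]; module, by rw [← hr]; push_cast; ring⟩
    · -- (i, j) : class 0 ; Ψ⁺ first branch
      rw [hGi, hGj, sub_zero] at hc
      obtain ⟨r, hr⟩ := dvd_of_cast_eq hc
      refine Or.inl (Or.inl ⟨r, ?_⟩)
      rw [Prod.mk.injEq]
      exact ⟨by simp only [sr], by rw [hr]⟩
    · -- (j, i) : class 0 ; -Ψ⁺ first branch
      rw [hGj, hGi, sub_zero] at hc
      have hc' : ((-c : ℤ) : ZMod 3) = 0 := by push_cast; rw [hc]; ring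
      obtain ⟨r, hr⟩ := dvd_of_cast_eq hc'
      refine Or.inr ?_
      rw [Set.mem_neg]
      refine Or.inl ⟨r, ?_⟩
      rw [Prod.neg_mk, Prod.mk.injEq]
      refine ⟨by simp only [sr]; module, by rw [← hr]; push_cast; ring⟩

----------------------------------------------------------------
-- section 8 : gradient utilities and the backward direction
----------------------------------------------------------------

lemma grphi_inv {v : Euc 3} (hv : v ∈ GrC PhiD43) :
    (∃ a b : Fin 3, a ≠ b ∧ v = sr a b) ∨ (∃ (σ : ℝ) (k : Fin 3), PM σ ∧ v = σ • lv k) := by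
  obtain ⟨c, hc⟩ := hv
  rcases phi_inv hc with ⟨a, b, hab, c', h⟩ | ⟨σ, k, r, hσ, h⟩
  · exact Or.inl ⟨a, b, hab, congrArg Prod.fst h⟩
  · exact Or.inr ⟨σ, k, hσ, congrArg Prod.fst h⟩

lemma neg_sr (a b : Fin 3) : -sr a b = sr b a := by simp only [sr]; module

lemma sum_eq_neg_lv {a b d : Fin 3} (hab : a ≠ b) (had : a ≠ d) (hbd : b ≠ d) :
    sr a b + sr a d = (-1 : ℝ) • lv a := by
  rw [← long_eq hbd (Ne.symm had) (Ne.symm hab)]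
  simp only [sr]; module

/-- the sum of the two given short roots in the key configuration is not a short root -/
lemma sum_notin_shorts {a b d : Fin 3} (hab : a ≠ b) (had : a ≠ d) (hbd : b ≠ d) :
    sr a b + sr a d ∉ {v : Euc 3 | ∃ i j : Fin 3, i ≠ j ∧ v = eps i - eps j} := by
  rintro ⟨p, q, hpq, heq⟩
  have h6 : (inner ℝ (sr a b + sr a d) (sr a b + sr a d) : ℝ) = 6 := inner_sum_src hab had hbd
  rw [heq, show eps p - eps q = sr p q from rfl, inner_sr_self hpq] at h6
  norm_num at h6

/-- Backward direction of the theorem. -/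
lemma backward_dir (i j k : Fin 3) (l : ℤ) (hij : i ≠ j) (hjk : j ≠ k) (hik : i ≠ k)
    (h3 : ¬ ((3:ℤ) ∣ l))
    (hGr : GrC (PsiD43 i j k l) = {v : Euc 3 | ∃ a b : Fin 3, a ≠ b ∧ v = eps a - eps b}) :
    IsMaximalClosedSubrootSystem PhiD43 (PsiD43 i j k l) ∧
      ¬ (∀ u ∈ GrC (PsiD43 i j k l), ∀ v ∈ GrC (PsiD43 i j k l),
          u + v ∈ GrC PhiD43 → u + v ∈ GrC (PsiD43 i j k l)) := by
  set G : Fin 3 → ZMod 3 := fun x => if x = k then (-l : ZMod 3) else 0 with hGdef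
  have hGi : G i = 0 := if_neg hik
  have hGj : G j = 0 := if_neg hjk
  have hGk : G k = (-l : ZMod 3) := if_pos rfl
  have hE : PsiD43 i j k l = PsiG G := psiD_eq_psiG i j k hij hjk hik l
  have hlne : (l : ZMod 3) ≠ 0 := fun h => h3 ((zcast_dvd l).mp h)
  have hg : G 0 + G 1 + G 2 ≠ 0 := by
    rw [← gsum_perm G hij hik hjk, hGi, hGj, hGk]
    simpa using hlne
  constructor
  · rw [hE]
    exact ⟨psiG_csrs G hg, psiG_maximal G hg⟩
  · intro hcl
    have hu : sr i j ∈ GrC (PsiD43 i j k l) := by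
      rw [hE]
      exact ⟨((0:ℤ):ℝ), psiG_mem hij (by rw [hGi, hGj]; simp)⟩
    have hv : sr i k ∈ GrC (PsiD43 i j k l) := by
      rw [hE]
      exact ⟨((l:ℤ):ℝ), psiG_mem hik (by rw [hGi, hGk]; ring)⟩
    have hsum : sr i j + sr i k ∈ GrC PhiD43 := by
      rw [sum_eq_neg_lv hij hik hjk]
      exact ⟨((3*0:ℤ):ℝ), phi_long i (Or.inr rfl) 0⟩
    have := hcl _ hu _ hv hsum
    rw [hGr] at this
    exact sum_notin_shorts hij hik hjk this

----------------------------------------------------------------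
-- section 9 : forward direction
----------------------------------------------------------------

lemma inner_add_add (u v : Euc 3) :
    (inner ℝ (u+v) (u+v) : ℝ) = (inner ℝ u u : ℝ) + 2 * (inner ℝ u v : ℝ) + (inner ℝ v v : ℝ) := by
  rw [inner_add_left, inner_add_right, inner_add_right, real_inner_comm v u]
  ring

lemma reflV_sr_lv {kk aa : Fin 3} (h : kk ≠ aa) (σ : ℝ) :
    reflV (sr kk aa) (σ • lv kk) = σ • lv aa := by
  rw [reflV, cartanPair, real_inner_smul_left, inner_lv_sr, inner_sr_self h,
    if_pos rfl, if_neg (Ne.symm h)]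
  have hs : 2 * (σ * (-3 * ((1:ℝ) - 0))) / 2 = -3*σ := by ring
  rw [hs]
  simp only [lv, sr]
  module

lemma fin3_all : ∀ i j k : Fin 3, i ≠ j → j ≠ k → i ≠ k → ∀ x : Fin 3, x = i ∨ x = j ∨ x = k := by
  decide

lemma forward_dir (Ψ : Set (Euc 3 × ℝ))
    (hmax : IsMaximalClosedSubrootSystem PhiD43 Ψ)
    (hng : ¬ (∀ u ∈ GrC Ψ, ∀ v ∈ GrC Ψ, u + v ∈ GrC PhiD43 → u + v ∈ GrC Ψ)) :
    GrC Ψ = {v | ∃ i j : Fin 3, i ≠ j ∧ v = eps i - eps j} ∧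
      ∃ (i j k : Fin 3) (l : ℤ), i ≠ j ∧ j ≠ k ∧ i ≠ k ∧ ¬ ((3 : ℤ) ∣ l) ∧
        Ψ = PsiD43 i j k l := by
  obtain ⟨⟨⟨hne, hΨΦ, hΨne, hrefl⟩, hclosed⟩, hmaxi⟩ := hmax
  push_neg at hng
  obtain ⟨u, hu, v, hv, hsumΦ, hns⟩ := hng
  have GrΨΦ : GrC Ψ ⊆ GrC PhiD43 := by
    rintro w ⟨c, hc⟩; exact ⟨c, hΨΦ hc⟩
  have grrefl : ∀ w1 ∈ GrC Ψ, ∀ w2 ∈ GrC Ψ, reflV w1 w2 ∈ GrC Ψ := by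
    rintro w1 ⟨c1, h1⟩ w2 ⟨c2, h2⟩
    refine ⟨c2 - cartanPair w1 w2 * c1, ?_⟩
    have := hrefl _ h1 _ h2
    rwa [reflA_eq] at this
  have grneg : ∀ w ∈ GrC Ψ, (inner ℝ w w : ℝ) ≠ 0 → -w ∈ GrC Ψ := by
    rintro w ⟨c, hc⟩ hw
    have := hrefl _ hc _ hc
    rw [reflA_self _ hw] at this
    exact ⟨-c, by rwa [Prod.neg_mk] at this⟩
  -- closure under reflections for short+long configurations
  have short_long : ∀ (a b : Fin 3), a ≠ b → ∀ (σ : ℝ), PM σ → ∀ kk : Fin 3,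
      sr a b ∈ GrC Ψ → (σ • lv kk) ∈ GrC Ψ → sr a b + σ • lv kk ∈ GrC PhiD43 →
      sr a b + σ • lv kk ∈ GrC Ψ := by
    intro a b hab σ hσ kk hus hvs hsum
    have hin : (inner ℝ (sr a b) (σ • lv kk) : ℝ)
        = σ * (-3 * ((if a = kk then 1 else 0) - (if b = kk then 1 else 0))) := by
      rw [real_inner_smul_right, inner_sr_lv]
    have hqs : (inner ℝ (sr a b + σ • lv kk) (sr a b + σ • lv kk) : ℝ)
        = 8 + 2 * (inner ℝ (sr a b) (σ • lv kk) : ℝ) := by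
      rw [inner_add_add, inner_sr_self hab, inner_smul_lv hσ]; ring
    rcases hσ with rfl | rfl
    · by_cases hka : kk = a
      · subst hka
        have hcl := grrefl _ hvs _ hus
        rw [reflV_add_long (inner_smul_lv (Or.inl rfl) kk)
          (by rw [real_inner_smul_right, inner_sr_lv, if_pos rfl, if_neg (Ne.symm hab)]
              norm_num)] at hcl
        exact hcl
      · exfalso
        rcases grphi_q hsum with hq | hq <;>
        · rw [hqs, hin, if_neg (show ¬ (a = kk) from fun h => hka h.symm)] at hq
          by_cases hkb : kk = b
          · rw [if_pos (show b = kk from hkb.symm)] at hq; norm_num at hq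
          · rw [if_neg (show ¬ (b = kk) from fun h => hkb h.symm)] at hq; norm_num at hq
    · by_cases hkb : kk = b
      · subst hkb
        have hcl := grrefl _ hvs _ hus
        rw [reflV_add_long (inner_smul_lv (Or.inr rfl) kk)
          (by rw [real_inner_smul_right, inner_sr_lv, if_neg hab, if_pos rfl]
              norm_num)] at hcl
        exact hcl
      · exfalso
        rcases grphi_q hsum with hq | hq <;>
        · rw [hqs, hin, if_neg (show ¬ (b = kk) from fun h => hkb h.symm)] at hq
          by_cases hka : kk = a
          · rw [if_pos (show a = kk from hka.symm)] at hq; norm_num at hq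
          · rw [if_neg (show ¬ (a = kk) from fun h => hka h.symm)] at hq; norm_num at hq
  -- extraction of the key configuration
  have key : ∃ a b d : Fin 3, a ≠ b ∧ a ≠ d ∧ b ≠ d ∧ sr a b ∈ GrC Ψ ∧ sr a d ∈ GrC Ψ ∧
      sr a b + sr a d ∉ GrC Ψ := by
    rcases grphi_inv (GrΨΦ hu) with ⟨a, b, hab, rfl⟩ | ⟨σ, kk, hσ, rfl⟩
    · rcases grphi_inv (GrΨΦ hv) with ⟨c, d, hcd, rfl⟩ | ⟨τ, pp, hτ, rfl⟩
      · -- short-short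
        rcases fin3_cases_pair a b c d hab hcd with
          ⟨rfl, rfl⟩ | ⟨rfl, rfl⟩ | ⟨rfl, hd1, hd2⟩ | ⟨rfl, hd1, hd2⟩ | ⟨rfl, hd1, hd2⟩ |
          ⟨rfl, hd1, hd2⟩
        · exfalso
          have hveq : sr a b + sr a b = (2:ℝ) • sr a b := by module
          rcases grphi_q hsumΦ with hq | hq <;>
          · rw [hveq, real_inner_smul_left, real_inner_smul_right, inner_sr_self hab] at hq
            norm_num at hq
        · exfalso
          have hveq : sr a b + sr b a = (0 : Euc 3) := by simp only [sr]; module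
          rcases grphi_q hsumΦ with hq | hq <;>
          · rw [hveq, inner_zero_left] at hq; norm_num at hq
        · exact ⟨a, b, d, hab, Ne.symm hd2, Ne.symm hd1, hu, hv, hns⟩
        · -- v = sr b d : sum is short, closed by reflection
          exfalso
          have hcl := grrefl _ hu _ hv
          rw [reflV_add_short (inner_sr_self hab)
            (by rw [inner_sr_sr, if_neg hab, if_neg (fun h : a = d => hd1 h.symm), if_pos rfl,
                if_neg (fun h : b = d => hd2 h.symm)]
                norm_num)] at hcl
          rw [add_comm] at hcl
          exact hns hcl
        · -- v = sr c b : reduce to key by negating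
          refine ⟨b, a, c, Ne.symm hab, Ne.symm hd2, Ne.symm hd1, ?_, ?_, ?_⟩
          · have := grneg _ hu (by rw [inner_sr_self hab]; norm_num)
            rwa [neg_sr] at this
          · have := grneg _ hv (by rw [inner_sr_self hd2]; norm_num)
            rwa [neg_sr] at this
          · intro hmem
            have hnz : (inner ℝ (sr b a + sr b c) (sr b a + sr b c) : ℝ) ≠ 0 := by
              rw [inner_sum_src (Ne.symm hab) (Ne.symm hd2) (Ne.symm hd1)]; norm_num
            have := grneg _ hmem hnz
            rw [neg_add, neg_sr, neg_sr] at this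
            exact hns this
        · -- v = sr c a : sum is short
          exfalso
          have hcl := grrefl _ hu _ hv
          rw [reflV_add_short (inner_sr_self hab)
            (by rw [inner_sr_sr, if_neg (show ¬(a = c) from fun h => hd2 h.symm), if_pos rfl,
                if_neg (show ¬(b = c) from fun h => hd1 h.symm),
                if_neg (show ¬(b = a) from fun h => hab h.symm)]
                norm_num)] at hcl
          rw [add_comm] at hcl
          exact hns hcl
      · -- short-long
        exact absurd (short_long a b hab τ hτ pp hu hv hsumΦ) hns
    · rcases grphi_inv (GrΨΦ hv) with ⟨c, d, hcd, rfl⟩ | ⟨τ, pp, hτ, rfl⟩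
      · -- long-short
        have := short_long c d hcd σ hσ kk hv hu (by rwa [add_comm] at hsumΦ)
        rw [add_comm] at this
        exact absurd this hns
      · -- long-long
        exfalso
        have hin : (inner ℝ (σ • lv kk) (τ • lv pp) : ℝ)
            = σ * τ * (if kk = pp then 6 else -3) := by
          rw [real_inner_smul_left, real_inner_smul_right, inner_lv_lv]; ring
        by_cases hkp : kk = pp
        · subst hkp
          rcases hσ with rfl | rfl <;> rcases hτ with rfl | rfl
          · rcases grphi_q hsumΦ with hq | hq <;>
            · rw [inner_add_add, hin, if_pos rfl] at hq; norm_num at hq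
          · rcases grphi_q hsumΦ with hq | hq <;>
            · rw [inner_add_add, hin, if_pos rfl, inner_smul_lv (Or.inl rfl) kk,
                inner_smul_lv (Or.inr rfl) kk] at hq
              norm_num at hq
          · rcases grphi_q hsumΦ with hq | hq <;>
            · rw [inner_add_add, hin, if_pos rfl, inner_smul_lv (Or.inr rfl) kk,
                inner_smul_lv (Or.inl rfl) kk] at hq
              norm_num at hq
          · rcases grphi_q hsumΦ with hq | hq <;>
            · rw [inner_add_add, hin, if_pos rfl] at hq; norm_num at hq
        · rcases hσ with rfl | rfl <;> rcases hτ with rfl | rfl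
          · -- (1,1) : closure
            have hcl := grrefl _ hu _ hv
            rw [reflV_add_long (inner_smul_lv (Or.inl rfl) kk)
              (by rw [real_inner_smul_left, real_inner_smul_right, inner_lv_lv,
                  if_neg (fun h : pp = kk => hkp h.symm)]; ring)] at hcl
            rw [add_comm] at hcl
            exact hns hcl
          · rcases grphi_q hsumΦ with hq | hq <;>
            · rw [inner_add_add, hin, if_neg hkp, inner_smul_lv (Or.inl rfl) kk,
                inner_smul_lv (Or.inr rfl) pp] at hq
              norm_num at hq
          · rcases grphi_q hsumΦ with hq | hq <;>
            · rw [inner_add_add, hin, if_neg hkp, inner_smul_lv (Or.inr rfl) kk,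
                inner_smul_lv (Or.inl rfl) pp] at hq
              norm_num at hq
          · -- (-1,-1) : closure
            have hcl := grrefl _ hu _ hv
            rw [reflV_add_long (inner_smul_lv (Or.inr rfl) kk)
              (by rw [real_inner_smul_left, real_inner_smul_right, inner_lv_lv,
                  if_neg (fun h : pp = kk => hkp h.symm)]; ring)] at hcl
            rw [add_comm] at hcl
            exact hns hcl
  obtain ⟨a, b, d, hab, had, hbd, hsab, hsad, hkns⟩ := key
  -- all short roots lie in the gradient
  have hneg1 : ∀ p q : Fin 3, p ≠ q → sr p q ∈ GrC Ψ → sr q p ∈ GrC Ψ := by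
    intro p q hpq h
    have := grneg _ h (by rw [inner_sr_self hpq]; norm_num)
    rwa [neg_sr] at this
  have hAll : ∀ p q : Fin 3, p ≠ q → sr p q ∈ GrC Ψ := by
    have h1 : sr b d ∈ GrC Ψ := by
      have := grrefl _ hsab _ hsad
      rwa [reflV3 hab had hbd] at this
    intro p q hpq
    rcases fin3_pairs_of' b d a p q hbd (Ne.symm hab) (Ne.symm had) hpq with
      ⟨rfl, rfl⟩ | ⟨rfl, rfl⟩ | ⟨rfl, rfl⟩ | ⟨rfl, rfl⟩ | ⟨rfl, rfl⟩ | ⟨rfl, rfl⟩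
    exacts [hsad, hneg1 a d had hsad, hneg1 a b hab hsab, hsab, h1, hneg1 b d hbd h1]
  -- no long roots in the gradient
  have hNoLong : ∀ (σ : ℝ), PM σ → ∀ kk : Fin 3, σ • lv kk ∉ GrC Ψ := by
    intro σ hσ kk hw
    have hstep : σ • lv a ∈ GrC Ψ := by
      by_cases hka : kk = a
      · subst hka; exact hw
      · have := grrefl _ (hAll kk a hka) _ hw
        rwa [reflV_sr_lv hka σ] at this
    have hfin : (-1:ℝ) • lv a ∈ GrC Ψ := by
      rcases hσ with rfl | rfl
      · have := grneg _ hstep (by rw [inner_smul_lv (Or.inl rfl)]; norm_num)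
        rwa [show -((1:ℝ) • lv a) = (-1:ℝ) • lv a from by module] at this
      · exact hstep
    exact hkns (by rwa [← sum_eq_neg_lv hab had hbd] at hfin)
  -- the gradient is exactly the short roots
  have hGr : GrC Ψ = {v : Euc 3 | ∃ i j : Fin 3, i ≠ j ∧ v = eps i - eps j} := by
    ext w
    constructor
    · intro hw
      rcases grphi_inv (GrΨΦ hw) with ⟨p, q, hpq, rfl⟩ | ⟨σ, kk, hσ, rfl⟩
      · exact ⟨p, q, hpq, rfl⟩
      · exact absurd hw (hNoLong σ hσ kk)
    · rintro ⟨p, q, hpq, rfl⟩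
      exact hAll p q hpq
  refine ⟨hGr, ?_⟩
  -- every short direction contains an integral root of Ψ
  have hZ : ∀ p q : Fin 3, p ≠ q → ∃ c : ℤ, (sr p q, (c:ℝ)) ∈ Ψ := by
    intro p q hpq
    obtain ⟨t, ht⟩ := hAll p q hpq
    rcases phi_inv (hΨΦ ht) with ⟨p', q', hp'q', c, hh⟩ | ⟨σ, kk, r, hσ, hh⟩
    · have h2 : t = (c:ℝ) := congrArg Prod.snd hh
      exact ⟨c, by rwa [h2] at ht⟩
    · exfalso
      have h1 : sr p q = σ • lv kk := congrArg Prod.fst hh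
      have h2 := inner_sr_self hpq
      rw [h1, inner_smul_lv hσ] at h2
      norm_num at h2
  -- reflection in direction (p,q)
  have hZrefl : ∀ p q : Fin 3, p ≠ q → ∀ c c' : ℤ, (sr p q, (c:ℝ)) ∈ Ψ → (sr p q, (c':ℝ)) ∈ Ψ →
      (sr q p, ((c' - 2*c : ℤ):ℝ)) ∈ Ψ := by
    intro p q hpq c c' h1 h2
    have h := hrefl _ h1 _ h2
    rw [reflA_eq, cartan1 hpq, reflV1 hpq] at h
    have he : (c':ℝ) - 2 * (c:ℝ) = ((c' - 2*c : ℤ):ℝ) := by push_cast; ring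
    rwa [he] at h
  -- addition of adjacent short roots
  have hZadd : ∀ p q w : Fin 3, p ≠ q → p ≠ w → q ≠ w →
      ∀ c c' : ℤ, (sr p q, (c:ℝ)) ∈ Ψ → (sr q w, (c':ℝ)) ∈ Ψ →
      (sr p w, ((c + c' : ℤ):ℝ)) ∈ Ψ := by
    intro p q w hpq hpw hqw c c' h1 h2
    have h := hclosed _ h1 _ h2
    have he : ((sr p q, (c:ℝ)) + (sr q w, (c':ℝ)) : Euc 3 × ℝ) = (sr p w, ((c + c' : ℤ):ℝ)) := by
      rw [Prod.mk_add_mk, Prod.mk.injEq]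
      exact ⟨by simp only [sr]; module, by push_cast; ring⟩
    rw [he] at h
    exact h (phi_short hpw _)
  -- no two source-sharing coefficients sum to a multiple of 3
  have hZnl : ∀ p q w : Fin 3, p ≠ q → p ≠ w → q ≠ w →
      ∀ c c' : ℤ, (sr p q, (c:ℝ)) ∈ Ψ → (sr p w, (c':ℝ)) ∈ Ψ → ¬ ((3:ℤ) ∣ (c + c')) := by
    intro p q w hpq hpw hqw c c' h1 h2 ⟨r, hr⟩
    have h := hclosed _ h1 _ h2
    have he : ((sr p q, (c:ℝ)) + (sr p w, (c':ℝ)) : Euc 3 × ℝ)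
        = ((-1:ℝ) • lv p, ((3 * r : ℤ):ℝ)) := by
      rw [Prod.mk_add_mk, Prod.mk.injEq]
      refine ⟨by rw [sum_eq_neg_lv hpq hpw hqw], by rw [← hr]; push_cast; ring⟩
    rw [he] at h
    exact hNoLong (-1) (Or.inr rfl) p ⟨_, h (phi_long p (Or.inr rfl) r)⟩
  -- each direction has a single residue class
  have hSingle : ∀ p q : Fin 3, p ≠ q → ∀ c c' : ℤ, (sr p q, (c:ℝ)) ∈ Ψ → (sr p q, (c':ℝ)) ∈ Ψ →
      (c : ZMod 3) = (c' : ZMod 3) := by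
    intro p q hpq c c' h1 h2
    by_contra hcc
    obtain ⟨w, hw1, hw2⟩ := fin3_third p q hpq
    obtain ⟨c₀, h₀⟩ := hZ q w (fun h => hw2 h.symm)
    have tri : ∀ u v t : ZMod 3, u ≠ v → (t = u + u ∨ t = u + v ∨ t = v + v) := by decide
    have hdvd : ∀ t : ℤ, (sr q p, (t:ℝ)) ∈ Ψ → ((t : ZMod 3) + (c₀ : ZMod 3) = 0) → False := by
      intro t ht h0
      refine hZnl q p w (Ne.symm hpq) (fun h => hw2 h.symm) (fun h => hw1 h.symm) t c₀ ht h₀ ?_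
      rw [← zcast_dvd]
      push_cast
      exact h0
    rcases tri (c : ZMod 3) (c' : ZMod 3) (-(c₀ : ZMod 3)) hcc with htr | htr | htr
    · refine hdvd (c - 2*c) (hZrefl p q hpq c c h1 h1) ?_
      push_cast
      linear_combination - htr - zmod3_three ((c : ZMod 3))
    · refine hdvd (c' - 2*c) (hZrefl p q hpq c c' h1 h2) ?_
      push_cast
      linear_combination - htr - zmod3_three ((c : ZMod 3))
    · refine hdvd (c' - 2*c') (hZrefl p q hpq c' c' h2 h2) ?_
      push_cast
      linear_combination - htr - zmod3_three ((c' : ZMod 3))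
  -- construct g
  obtain ⟨c01, h01⟩ := hZ 0 1 (by decide)
  obtain ⟨c02, h02⟩ := hZ 0 2 (by decide)
  set g : Fin 3 → ZMod 3 :=
    fun x => if x = 1 then -((c01 : ZMod 3)) else if x = 2 then -((c02 : ZMod 3)) else 0 with hgdef
  have hg0 : g 0 = 0 := by simp [hgdef]
  have hg1 : g 1 = -((c01 : ZMod 3)) := by simp [hgdef]
  have hg2 : g 2 = -((c02 : ZMod 3)) := by simp [hgdef]
  have h10 : (sr 1 0, ((c01 - 2*c01 : ℤ):ℝ)) ∈ Ψ := hZrefl 0 1 (by decide) c01 c01 h01 h01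
  have h20 : (sr 2 0, ((c02 - 2*c02 : ℤ):ℝ)) ∈ Ψ := hZrefl 0 2 (by decide) c02 c02 h02 h02
  have h12 : (sr 1 2, (((c01 - 2*c01) + c02 : ℤ):ℝ)) ∈ Ψ :=
    hZadd 1 0 2 (by decide) (by decide) (by decide) _ _ h10 h02
  have h21 : (sr 2 1, (((c02 - 2*c02) + c01 : ℤ):ℝ)) ∈ Ψ :=
    hZadd 2 0 1 (by decide) (by decide) (by decide) _ _ h20 h01
  have hgsum : g 0 + g 1 + g 2 ≠ 0 := by
    rw [hg0, hg1, hg2]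
    intro h0
    refine hZnl 0 1 2 (by decide) (by decide) (by decide) c01 c02 h01 h02 ?_
    rw [← zcast_dvd]
    push_cast
    linear_combination - h0
  -- Ψ is contained in Ψ_g
  have hΨsub : Ψ ⊆ PsiG g := by
    intro x hx
    rcases phi_inv (hΨΦ hx) with ⟨p, q, hpq, c, rfl⟩ | ⟨σ, kk, r, hσ, rfl⟩
    · refine psiG_mem hpq ?_
      rcases fin3_pairs_of' 0 1 2 p q (by decide) (by decide) (by decide) hpq with
        ⟨rfl, rfl⟩ | ⟨rfl, rfl⟩ | ⟨rfl, rfl⟩ | ⟨rfl, rfl⟩ | ⟨rfl, rfl⟩ | ⟨rfl, rfl⟩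
      · -- (2,1)
        rw [hSingle 2 1 (by decide) c _ hx h21, hg2, hg1]
        push_cast; ring
      · -- (1,2)
        rw [hSingle 1 2 (by decide) c _ hx h12, hg1, hg2]
        push_cast; ring
      · -- (0,2)
        rw [hSingle 0 2 (by decide) c c02 hx h02, hg0, hg2]
        ring
      · -- (2,0)
        rw [hSingle 2 0 (by decide) c _ hx h20, hg2, hg0]
        push_cast; ring
      · -- (0,1)
        rw [hSingle 0 1 (by decide) c c01 hx h01, hg0, hg1]
        ring
      · -- (1,0)
        rw [hSingle 1 0 (by decide) c _ hx h10, hg1, hg0]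
        push_cast; ring
    · exact absurd ⟨_, hx⟩ (hNoLong σ hσ kk)
  have hΨeq : PsiG g = Ψ := hmaxi (PsiG g) (psiG_csrs g hgsum) hΨsub
  -- find a permutation with two equal values of g
  have hperm : ∃ i j k : Fin 3, i ≠ j ∧ j ≠ k ∧ i ≠ k ∧ g i = g j := by
    by_cases h01' : g 0 = g 1
    · exact ⟨0, 1, 2, by decide, by decide, by decide, h01'⟩
    · by_cases h02' : g 0 = g 2
      · exact ⟨0, 2, 1, by decide, by decide, by decide, h02'⟩
      · by_cases h12' : g 1 = g 2
        · exact ⟨1, 2, 0, by decide, by decide, by decide, h12'⟩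
        · exfalso
          have : ∀ x y z : ZMod 3, x ≠ y → x ≠ z → y ≠ z → x + y + z = 0 := by decide
          exact hgsum (this _ _ _ h01' h02' h12')
  obtain ⟨i, j, k, hij, hjk, hik, hgij⟩ := hperm
  have hgjk : g j - g k ≠ 0 := by
    intro h0
    apply hgsum
    have hjk' : g j = g k := by linear_combination h0
    have hall3 : g i + g j + g k = g 0 + g 1 + g 2 := gsum_perm g hij hik hjk
    rw [← hall3, hgij, hjk']
    exact zmod3_three (g k)
  set l : ℤ := (((g j - g k).val : ℕ) : ℤ) with hldef
  have hlc : (l : ZMod 3) = g j - g k := by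
    rw [hldef]
    push_cast
    rw [zmod3_val_cast']
  have hl3 : ¬ ((3:ℤ) ∣ l) := by
    intro hdl
    exact hgjk (by rw [← hlc]; exact (zcast_dvd l).mpr hdl)
  refine ⟨i, j, k, l, hij, hjk, hik, hl3, ?_⟩
  rw [← hΨeq, psiD_eq_psiG i j k hij hjk hik l]
  -- PsiG g = PsiG G'
  have hGx : ∀ x : Fin 3, (if x = k then (-l : ZMod 3) else 0) = g x - g i := by
    have hxtr : ∀ x : Fin 3, x = i ∨ x = j ∨ x = k := fin3_all i j k hij hjk hik
    intro x
    rcases hxtr x with rfl | rfl | rfl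
    · rw [if_neg hik, sub_self]
    · rw [if_neg hjk, hgij, sub_self]
    · rw [if_pos rfl, hlc, hgij]
      ring
  ext x
  constructor
  · rintro ⟨p, q, hpq, c, hc, rfl⟩
    refine psiG_mem hpq ?_
    rw [hc]
    simp only [hGx]
    ring
  · rintro ⟨p, q, hpq, c, hc, rfl⟩
    refine psiG_mem hpq ?_
    rw [hc]
    simp only [hGx]
    ring

/-- `Ψ` is a maximal closed subroot system of the affine root
system of type `D_4^{(3)}` with gradient not closed in the gradient root system iff
`Gr(Ψ) = {ε_i − ε_j : i ≠ j}` and `Ψ = Ψ(i,j,k;ℓ)` for a permutation `(i,j,k)` of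
`(1,2,3)` and some `ℓ ≢ 0 (mod 3)`. -/
theorem statement15 (Ψ : Set (Euc 3 × ℝ)) :
    (IsMaximalClosedSubrootSystem PhiD43 Ψ ∧
      ¬ (∀ u ∈ GrC Ψ, ∀ v ∈ GrC Ψ, u + v ∈ GrC PhiD43 → u + v ∈ GrC Ψ)) ↔
      (GrC Ψ = {v | ∃ i j : Fin 3, i ≠ j ∧ v = eps i - eps j} ∧
        ∃ (i j k : Fin 3) (l : ℤ), i ≠ j ∧ j ≠ k ∧ i ≠ k ∧ ¬ ((3 : ℤ) ∣ l) ∧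
          Ψ = PsiD43 i j k l) := by
  constructor
  · rintro ⟨hmax, hng⟩
    exact forward_dir Ψ hmax hng
  · rintro ⟨hGr, i, j, k, l, hij, hjk, hik, h3, rfl⟩
    exact backward_dir i j k l hij hjk hik h3 hGr
end
end

section
/- If p : 𝒟_4 → ℤ is ℤ-linear and exactly two of the four integers p(ε_1), p(ε_2), p(ε_3), p(ε_4) are even, then Ψ_p is a maximal closed subroot system of Φ, the affine root system of type E_6^{(2)}. -/
noncomputable section

variable {V : Type*} [NormedAddCommGroup V] [InnerProductSpace ℝ V]

/-- The affine root system of type `E_6^{(2)}`. -/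
def PhiE62 : Set (Euc 4 × ℝ) :=
  {x | (∃ i : Fin 4, ∃ σ : ℝ, PM σ ∧ ∃ r : ℤ, x = (σ • eps i, (r : ℝ))) ∨
       (∃ i j : Fin 4, i ≠ j ∧ ∃ σ τ : ℝ, PM σ ∧ PM τ ∧ ∃ r : ℤ,
          x = (σ • eps i + τ • eps j, ((2 * r : ℤ) : ℝ))) ∨
       (∃ lam : Fin 4 → ℝ, (∀ i, PM (lam i)) ∧ ∃ r : ℤ,
          x = ((2⁻¹ : ℝ) • ∑ i, lam i • eps i, (r : ℝ)))}

/-- The root system `𝒟_4` of type `D_4` inside `F_4`. -/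
def D4set : Set (Euc 4) :=
  {v | (∃ i : Fin 4, ∃ σ : ℝ, PM σ ∧ v = σ • eps i) ∨
       (∃ lam : Fin 4 → ℝ, (∀ i, PM (lam i)) ∧
          v = (2⁻¹ : ℝ) • ∑ i, lam i • eps i)}

/-- The subset `Ψ_p` of `E_6^{(2)}` attached to a `ℤ`-linear `p : 𝒟_4 → ℤ`. -/
def PsiPE62 (p : Euc 4 → ℤ) : Set (Euc 4 × ℝ) :=
  {x | (∃ v ∈ D4set, ∃ r : ℤ, x = (v, ((p v + 2 * r : ℤ) : ℝ))) ∨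
       (∃ i j : Fin 4, i ≠ j ∧ Int.ModEq 2 (p (eps i)) (p (eps j)) ∧
          ∃ σ τ : ℝ, PM σ ∧ PM τ ∧ ∃ r : ℤ,
            x = (σ • eps i + τ • eps j, ((2 * r : ℤ) : ℝ)))}

/-- Exactly two of `p(ε_1), …, p(ε_4)` are even. -/
def ExactlyTwoEven (p : Euc 4 → ℤ) : Prop :=
  (Finset.univ.filter fun i : Fin 4 => p (eps i) % 2 = 0).card = 2
namespace St16

/-! ### Integer-level combinatorics -/

def shortZ (b : Fin 4 → ℤ) : Prop := ∃ i, (b i = 2 ∨ b i = -2) ∧ ∀ k, k ≠ i → b k = 0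
def longZ (b : Fin 4 → ℤ) : Prop := ∃ i j, i ≠ j ∧ (b i = 2 ∨ b i = -2) ∧ (b j = 2 ∨ b j = -2) ∧
    ∀ k, k ≠ i → k ≠ j → b k = 0
def halfZ (b : Fin 4 → ℤ) : Prop := ∀ k, b k = 1 ∨ b k = -1
def memG (b : Fin 4 → ℤ) : Prop := shortZ b ∨ longZ b ∨ halfZ b
instance : DecidablePred shortZ := fun b => by unfold shortZ; infer_instance
instance : DecidablePred longZ := fun b => by unfold longZ; infer_instance
instance : DecidablePred halfZ := fun b => by unfold halfZ; infer_instance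
instance : DecidablePred memG := fun b => by unfold memG; infer_instance

def dz (b c : Fin 4 → ℤ) : ℤ := ∑ k, b k * c k
def nz (g h : Fin 4 → ℤ) : ℤ := 2 * dz h g / dz g g
def rz (g h : Fin 4 → ℤ) : Fin 4 → ℤ := fun k => h k - nz g h * g k

def sv (i : Fin 4) (a : ℤ) : Fin 4 → ℤ := fun k => if k = i then a else 0
def lv (i j : Fin 4) (a c : ℤ) : Fin 4 → ℤ := fun k => if k = i then a else if k = j then c else 0

def PhiZ (b : Fin 4 → ℤ) (m : ℤ) : Prop := (shortZ b ∨ halfZ b) ∨ (longZ b ∧ 2 ∣ m)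
def PsiZ (P : Fin 4 → ℤ) (b : Fin 4 → ℤ) (m : ℤ) : Prop := PhiZ b m ∧ 4 ∣ 2*m - dz b P

def LG : List (Fin 4 → ℤ) := [![2,0,0,0], ![-2,0,0,0], ![0,2,0,0], ![0,-2,0,0], ![0,0,2,0], ![0,0,-2,0], ![0,0,0,2], ![0,0,0,-2], ![2,2,0,0], ![2,-2,0,0], ![-2,2,0,0], ![-2,-2,0,0], ![2,0,2,0], ![2,0,-2,0], ![-2,0,2,0], ![-2,0,-2,0], ![2,0,0,2], ![2,0,0,-2], ![-2,0,0,2], ![-2,0,0,-2], ![0,2,2,0], ![0,2,-2,0], ![0,-2,2,0], ![0,-2,-2,0], ![0,2,0,2], ![0,2,0,-2], ![0,-2,0,2], ![0,-2,0,-2], ![0,0,2,2], ![0,0,2,-2], ![0,0,-2,2], ![0,0,-2,-2], ![1,1,1,1], ![1,1,1,-1], ![1,1,-1,1], ![1,1,-1,-1], ![1,-1,1,1], ![1,-1,1,-1], ![1,-1,-1,1], ![1,-1,-1,-1], ![-1,1,1,1], ![-1,1,1,-1], ![-1,1,-1,1], ![-1,1,-1,-1], ![-1,-1,1,1], ![-1,-1,1,-1],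 ![-1,-1,-1,1], ![-1,-1,-1,-1]]

set_option maxRecDepth 100000 in
set_option maxHeartbeats 4000000 in
lemma geomL : ∀ g ∈ LG, (dz g g = 4 ∨ dz g g = 8) ∧ ∀ h ∈ LG,
    dz g g ∣ 2 * dz h g ∧ memG (rz g h) ∧
    (longZ (rz g h) → longZ h ∧ (nz g h % 2 = 0 ∨ longZ g)) := by decide

lemma shortZ_eq {b : Fin 4 → ℤ} (h : shortZ b) :
    ∃ i a, (a = 2 ∨ a = -2) ∧ b = sv i a := by
  obtain ⟨i, hi, h0⟩ := h
  exact ⟨i, b i, hi, funext fun k => by by_cases hk : k = i <;> simp [sv, hk, h0 k]⟩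

lemma longZ_eq {b : Fin 4 → ℤ} (h : longZ b) :
    ∃ i j a c, i ≠ j ∧ (a = 2 ∨ a = -2) ∧ (c = 2 ∨ c = -2) ∧ b = lv i j a c := by
  obtain ⟨i, j, hij, hi, hj, h0⟩ := h
  refine ⟨i, j, b i, b j, hij, hi, hj, funext fun k => ?_⟩
  show b k = if k = i then b i else if k = j then b j else 0
  split_ifs with h1 h2
  · rw [h1]
  · rw [h2]
  · exact h0 k h1 h2

lemma funext4 (b : Fin 4 → ℤ) : b = ![b 0, b 1, b 2, b 3] := by
  funext k; fin_cases k <;> rfl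

lemma mem_LG {b : Fin 4 → ℤ} (h : memG b) : b ∈ LG := by
  rcases h with h | h | h
  · obtain ⟨i, a, ha, rfl⟩ := shortZ_eq h
    fin_cases i <;> rcases ha with rfl | rfl <;> decide
  · obtain ⟨i, j, a, c, hij, ha, hc, rfl⟩ := longZ_eq h
    fin_cases i <;> fin_cases j <;> rcases ha with rfl | rfl <;> rcases hc with rfl | rfl <;>
      revert hij <;> decide
  · rw [funext4 b]
    rcases h 0 with h0 | h0 <;> rcases h 1 with h1 | h1 <;> rcases h 2 with h2 | h2 <;>
      rcases h 3 with h3 | h3 <;> rw [h0, h1, h2, h3] <;> decide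

lemma dz_comm (b c : Fin 4 → ℤ) : dz b c = dz c b := by
  simp [dz, mul_comm]

lemma dz_add_left (b c P : Fin 4 → ℤ) : dz (b + c) P = dz b P + dz c P := by
  simp [dz, add_mul, Finset.sum_add_distrib]

lemma dz_rz (g h P : Fin 4 → ℤ) : dz (rz g h) P = dz h P - nz g h * dz g P := by
  simp [dz, rz, sub_mul, mul_assoc, Finset.sum_sub_distrib, Finset.mul_sum]

lemma dz_sv (i : Fin 4) (a : ℤ) (c : Fin 4 → ℤ) : dz (sv i a) c = a * c i := by
  simp [dz, sv, ite_mul, Finset.sum_ite_eq']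

lemma lv_eq_add {i j : Fin 4} (hij : i ≠ j) (a c : ℤ) : lv i j a c = sv i a + sv j c := by
  funext k
  show (if k = i then a else if k = j then c else 0) = (if k = i then a else 0) + (if k = j then c else 0)
  split_ifs with h1 h2
  · exact absurd (h1.symm.trans h2) hij
  · ring
  · ring
  · ring

lemma dz_lv {i j : Fin 4} (hij : i ≠ j) (a c : ℤ) (P : Fin 4 → ℤ) :
    dz (lv i j a c) P = a * P i + c * P j := by
  rw [lv_eq_add hij, dz_add_left, dz_sv, dz_sv]

lemma memG_dz_self {g : Fin 4 → ℤ} (h : memG g) : dz g g = 4 ∨ dz g g = 8 :=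
  (geomL g (mem_LG h)).1

lemma memG_dvd {g h : Fin 4 → ℤ} (hg : memG g) (hh : memG h) : dz g g ∣ 2 * dz h g :=
  ((geomL g (mem_LG hg)).2 h (mem_LG hh)).1

lemma memG_rz {g h : Fin 4 → ℤ} (hg : memG g) (hh : memG h) : memG (rz g h) :=
  ((geomL g (mem_LG hg)).2 h (mem_LG hh)).2.1

lemma longZ_rz {g h : Fin 4 → ℤ} (hg : memG g) (hh : memG h) (hl : longZ (rz g h)) :
    longZ h ∧ (nz g h % 2 = 0 ∨ longZ g) :=
  ((geomL g (mem_LG hg)).2 h (mem_LG hh)).2.2 hl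

lemma nz_self {g : Fin 4 → ℤ} (hg : memG g) : nz g g = 2 := by
  have h4 := memG_dz_self hg
  unfold nz
  rcases h4 with h | h <;> rw [h] <;> decide

lemma nz_mul (g h : Fin 4 → ℤ) (hg : memG g) (hh : memG h) :
    nz g h * dz g g = 2 * dz h g := by
  obtain ⟨c, hc⟩ := memG_dvd hg hh
  have h0 : dz g g ≠ 0 := by rcases memG_dz_self hg with h | h <;> omega
  rw [nz, hc, Int.mul_ediv_cancel_left _ h0, mul_comm]


/-! ### Real-side vectors -/

def hv (b : Fin 4 → ℤ) : Euc 4 := WithLp.toLp 2 (fun k => (b k : ℝ)/2)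

lemma hv_apply (b : Fin 4 → ℤ) (k : Fin 4) : hv b k = (b k : ℝ)/2 := rfl
lemma eps_apply {n : ℕ} (i k : Fin n) : eps i k = if k = i then 1 else 0 :=
  EuclideanSpace.single_apply i 1 k

lemma hv_inj {b c : Fin 4 → ℤ} (h : hv b = hv c) : b = c := by
  funext k
  have h1 := congrFun (congrArg WithLp.ofLp h) k
  simp only [hv_apply] at h1
  have h2 : (b k : ℝ) = c k := by linarith
  exact_mod_cast h2

lemma hv_add (b c : Fin 4 → ℤ) : hv b + hv c = hv (b + c) := by
  ext k
  show hv b k + hv c k = _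
  simp only [hv_apply, Pi.add_apply]
  push_cast
  ring

lemma inner_hv (b c : Fin 4 → ℤ) : (inner ℝ (hv b) (hv c) : ℝ) = (dz b c : ℝ)/4 := by
  simp only [PiLp.inner_apply, RCLike.inner_apply, starRingEnd_apply, star_trivial,
    hv_apply, dz]
  push_cast
  rw [Finset.sum_div]
  congr 1; funext k; ring

lemma sum_eps_apply (lam : Fin 4 → ℝ) (k : Fin 4) : (∑ i, lam i • eps i) k = lam k := by
  rw [show ((∑ i, lam i • eps i) k) = ∑ i, (lam i • eps i) k by rw [WithLp.ofLp_sum, Finset.sum_apply]]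
  simp [eps_apply]

lemma hv_sv (i : Fin 4) (e : ℤ) : hv (sv i (2*e)) = (e : ℝ) • eps i := by
  ext k
  show hv (sv i (2*e)) k = (e : ℝ) * eps i k
  simp only [hv_apply, sv, eps_apply]
  split_ifs <;> push_cast <;> ring

lemma hv_lv {i j : Fin 4} (hij : i ≠ j) (e f : ℤ) :
    hv (lv i j (2*e) (2*f)) = (e : ℝ) • eps i + (f : ℝ) • eps j := by
  ext k
  show hv (lv i j (2*e) (2*f)) k = (e : ℝ) * eps i k + (f : ℝ) * eps j k
  simp only [hv_apply, lv, eps_apply]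
  split_ifs with h1 h2
  · exact absurd (h1.symm.trans h2) hij
  · push_cast; ring
  · push_cast; ring
  · push_cast; ring

lemma hv_half (b : Fin 4 → ℤ) : hv b = (2⁻¹ : ℝ) • ∑ i, ((b i : ℝ)) • eps i := by
  ext k
  show hv b k = 2⁻¹ * ((∑ i, ((b i : ℝ)) • eps i) k)
  rw [sum_eps_apply]
  simp [hv_apply]
  ring

lemma pmInt {σ : ℝ} (h : PM σ) : ∃ e : ℤ, (e = 1 ∨ e = -1) ∧ σ = (e : ℝ) := by
  rcases h with rfl | rfl
  · exact ⟨1, Or.inl rfl, by norm_num⟩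
  · exact ⟨-1, Or.inr rfl, by norm_num⟩

lemma pm2 {a : ℤ} (ha : a = 2 ∨ a = -2) : ∃ e : ℤ, (e = 1 ∨ e = -1) ∧ a = 2*e := by
  rcases ha with rfl | rfl
  · exact ⟨1, Or.inl rfl, rfl⟩
  · exact ⟨-1, Or.inr rfl, rfl⟩

lemma reflA_hv {g h : Fin 4 → ℤ} (hg : memG g) (hh : memG h) (m m' : ℤ) :
    reflA (hv g, (m : ℝ)) (hv h, (m' : ℝ)) = (hv (rz g h), ((m' - nz g h * m : ℤ) : ℝ)) := by
  have h4 : dz g g ≠ 0 := by rcases memG_dz_self hg with h | h <;> omega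
  have h4' : (dz g g : ℝ) ≠ 0 := Int.cast_ne_zero.2 h4
  have hmul := nz_mul g h hg hh
  have hcoef : 2 * (inner ℝ (hv h) (hv g) : ℝ) / (inner ℝ (hv g) (hv g) : ℝ) = (nz g h : ℝ) := by
    rw [inner_hv, inner_hv]
    have : (nz g h : ℝ) * (dz g g : ℝ) = 2 * (dz h g : ℝ) := by exact_mod_cast hmul
    field_simp
    linarith [this]
  show (hv h, (m' : ℝ)) - (2 * (inner ℝ (hv h) (hv g) : ℝ) / (inner ℝ (hv g) (hv g) : ℝ)) • (hv g, (m : ℝ)) = _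
  rw [hcoef]
  have h1 : hv h - (nz g h : ℝ) • hv g = hv (rz g h) := by
    ext k
    show hv h k - (nz g h : ℝ) * hv g k = hv (rz g h) k
    simp only [hv_apply, rz]
    push_cast
    ring
  have h2 : (m' : ℝ) - (nz g h : ℝ) * (m : ℝ) = ((m' - nz g h * m : ℤ) : ℝ) := by push_cast; ring
  rw [Prod.smul_mk, Prod.mk_sub_mk, h1, smul_eq_mul, h2]

/-! ### Bridge to `PhiE62` -/

lemma phi_decode {x : Euc 4 × ℝ} (hx : x ∈ PhiE62) :
    ∃ b m, PhiZ b m ∧ x = (hv b, (m : ℝ)) := by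
  rcases hx with ⟨i, σ, hσ, r, rfl⟩ | ⟨i, j, hij, σ, τ, hσ, hτ, r, rfl⟩ | ⟨lam, hlam, r, rfl⟩
  · obtain ⟨e, he, rfl⟩ := pmInt hσ
    refine ⟨sv i (2*e), r, Or.inl (Or.inl ⟨i, by simp [sv]; omega, fun k hk => by simp [sv, hk]⟩), ?_⟩
    rw [hv_sv]
  · obtain ⟨e, he, rfl⟩ := pmInt hσ
    obtain ⟨f, hf, rfl⟩ := pmInt hτ
    refine ⟨lv i j (2*e) (2*f), 2*r, Or.inr ⟨⟨i, j, hij, ?_, ?_, fun k hk hk' => by simp [lv, hk, hk']⟩, ⟨r, rfl⟩⟩, ?_⟩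
    · simp [lv]; omega
    · simp [lv, Ne.symm hij]; omega
    · rw [hv_lv hij]
  · refine ⟨fun k => if lam k = 1 then 1 else -1, r,
      Or.inl (Or.inr fun k => by dsimp only; split_ifs <;> simp), ?_⟩
    have hbi : ∀ k : Fin 4, (((if lam k = 1 then (1:ℤ) else -1) : ℤ) : ℝ) = lam k := by
      intro k
      rcases hlam k with h | h
      · rw [h]; norm_num
      · rw [h]
        have : ¬ (lam k = 1) := by rw [h]; norm_num
        rw [h] at this
        simp [this]
    have hx : (2⁻¹ : ℝ) • ∑ i, lam i • eps i = hv (fun k => if lam k = 1 then 1 else -1) := by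
      rw [hv_half]
      congr 1
      exact Finset.sum_congr rfl fun k _ => by rw [hbi k]
    simp only [Prod.mk.injEq]
    exact ⟨hx, trivial⟩

lemma phi_encode {b : Fin 4 → ℤ} {m : ℤ} (h : PhiZ b m) : (hv b, (m : ℝ)) ∈ PhiE62 := by
  rcases h with (h | h) | ⟨h, hm⟩
  · obtain ⟨i, a, ha, rfl⟩ := shortZ_eq h
    obtain ⟨e, he', rfl⟩ := pm2 ha
    exact Or.inl ⟨i, (e : ℝ), by rcases he' with rfl | rfl <;> simp [PM], m, by rw [hv_sv]⟩
  · refine Or.inr (Or.inr ⟨fun k => (b k : ℝ), fun k => by dsimp only; rcases h k with h' | h' <;> rw [h'] <;> norm_num [PM], m, ?_⟩)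
    simp only [Prod.mk.injEq]
    exact ⟨hv_half b, trivial⟩
  · obtain ⟨i, j, a, c, hij, ha, hc, rfl⟩ := longZ_eq h
    obtain ⟨e, he, rfl⟩ := pm2 ha
    obtain ⟨f, hf, rfl⟩ := pm2 hc
    obtain ⟨r, rfl⟩ := hm
    refine Or.inr (Or.inl ⟨i, j, hij, (e : ℝ), (f : ℝ), by rcases he with rfl | rfl <;> simp [PM],
      by rcases hf with rfl | rfl <;> simp [PM], r, ?_⟩)
    rw [hv_lv hij]

/-! ### The `ℤ`-linear function -/

lemma eps_mem_D4 (i : Fin 4) : eps i ∈ D4set :=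
  Or.inl ⟨i, 1, Or.inl rfl, (one_smul ℝ (eps i)).symm⟩

lemma hv_mem_D4 {b : Fin 4 → ℤ} (h : shortZ b ∨ halfZ b) : hv b ∈ D4set := by
  rcases h with h | h
  · obtain ⟨i, a, ha, rfl⟩ := shortZ_eq h
    obtain ⟨e, he, rfl⟩ := pm2 ha
    exact Or.inl ⟨i, (e : ℝ), by rcases he with rfl | rfl <;> norm_num [PM], hv_sv i e⟩
  · exact Or.inr ⟨fun k => (b k : ℝ),
      fun k => by dsimp only; rcases h k with h' | h' <;> rw [h'] <;> norm_num [PM], hv_half b⟩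

lemma d4_decode {v : Euc 4} (hv' : v ∈ D4set) :
    ∃ b, (shortZ b ∨ halfZ b) ∧ v = hv b := by
  rcases hv' with ⟨i, σ, hσ, rfl⟩ | ⟨lam, hlam, rfl⟩
  · obtain ⟨e, he, rfl⟩ := pmInt hσ
    refine ⟨sv i (2*e), Or.inl ⟨i, by simp [sv]; omega, fun k hk => by simp [sv, hk]⟩, (hv_sv i e).symm⟩
  · refine ⟨fun k => if lam k = 1 then 1 else -1,
      Or.inr fun k => by dsimp only; split_ifs <;> simp, ?_⟩
    have hbi : ∀ k : Fin 4, (((if lam k = 1 then (1:ℤ) else -1) : ℤ) : ℝ) = lam k := by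
      intro k
      rcases hlam k with h | h
      · rw [h]; norm_num
      · rw [h]
        have h2 : ¬ ((-1 : ℝ) = 1) := by norm_num
        rw [if_neg h2]
        norm_num
    rw [hv_half]
    congr 1
    exact Finset.sum_congr rfl fun k _ => by rw [hbi k]

section P

variable (p : Euc 4 → ℤ)

def Pv : Fin 4 → ℤ := fun i => p (eps i)

lemma two_p_hv (f : AddSubgroup.closure D4set →+ ℤ)
    (hf : ∀ α, ∀ h : α ∈ D4set, p α = f ⟨α, AddSubgroup.subset_closure h⟩) {b : Fin 4 → ℤ}
    (h : shortZ b ∨ halfZ b) :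
    2 * p (hv b) = dz b (Pv p) := by
  have hmem := hv_mem_D4 h
  have hsum : (⟨hv b, AddSubgroup.subset_closure hmem⟩ : AddSubgroup.closure D4set) +
      ⟨hv b, AddSubgroup.subset_closure hmem⟩ =
      ∑ k, (b k) • (⟨eps k, AddSubgroup.subset_closure (eps_mem_D4 k)⟩ : AddSubgroup.closure D4set) := by
    apply Subtype.ext
    push_cast
    ext k
    show hv b k + hv b k = (∑ x, (b x) • eps x) k
    rw [show ((∑ x, (b x) • eps x) k) = ∑ x, ((b x) • eps x) k by rw [WithLp.ofLp_sum, Finset.sum_apply]]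
    have hpt : ∀ x : Fin 4, ((b x) • eps x) k = (b x : ℝ) * eps x k := fun x => by
      show (b x) • (eps x k) = _
      rw [zsmul_eq_mul]
    simp only [hpt, eps_apply, mul_ite, mul_one, mul_zero]
    rw [Finset.sum_ite_eq]
    simp [hv_apply]
  have h2 := congrArg f hsum
  rw [map_add, map_sum] at h2
  simp only [map_zsmul, smul_eq_mul] at h2
  rw [← hf (hv b) hmem] at h2
  have hek : ∀ k : Fin 4, f ⟨eps k, AddSubgroup.subset_closure (eps_mem_D4 k)⟩ = p (eps k) :=
    fun k => (hf (eps k) (eps_mem_D4 k)).symm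
  simp only [hek] at h2
  show 2 * p (hv b) = dz b (Pv p)
  have hdz : dz b (Pv p) = ∑ k, b k * p (eps k) := rfl
  rw [hdz, two_mul]
  exact h2

lemma sumP_even (f : AddSubgroup.closure D4set →+ ℤ)
    (hf : ∀ α, ∀ h : α ∈ D4set, p α = f ⟨α, AddSubgroup.subset_closure h⟩) : 2 ∣ ∑ i, Pv p i := by
  have h := two_p_hv p f hf (b := fun _ => 1) (Or.inr fun k => Or.inl rfl)
  have hdz : dz (fun _ => 1) (Pv p) = ∑ i, Pv p i := by simp [dz]
  exact ⟨p (hv fun _ => 1), by omega⟩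

lemma psi_decode (f : AddSubgroup.closure D4set →+ ℤ)
    (hf : ∀ α, ∀ h : α ∈ D4set, p α = f ⟨α, AddSubgroup.subset_closure h⟩) {x : Euc 4 × ℝ} (hx : x ∈ PsiPE62 p) :
    ∃ b m, PsiZ (Pv p) b m ∧ x = (hv b, (m : ℝ)) := by
  rcases hx with ⟨v, hvD, r, rfl⟩ | ⟨i, j, hij, hmod, σ, τ, hσ, hτ, r, rfl⟩
  · obtain ⟨b, hb, rfl⟩ := d4_decode hvD
    refine ⟨b, p (hv b) + 2*r, ⟨Or.inl hb, ?_⟩, rfl⟩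
    have := two_p_hv p f hf hb
    omega
  · obtain ⟨e, he, rfl⟩ := pmInt hσ
    obtain ⟨f', hf', rfl⟩ := pmInt hτ
    have hmod' : p (eps i) % 2 = p (eps j) % 2 := hmod
    refine ⟨lv i j (2*e) (2*f'), 2*r, ⟨Or.inr ⟨⟨i, j, hij, ?_, ?_, fun k hk hk' => by simp [lv, hk, hk']⟩, ⟨r, rfl⟩⟩, ?_⟩, ?_⟩
    · simp [lv]; omega
    · simp [lv, Ne.symm hij]; omega
    · rw [dz_lv hij]
      have hPi : Pv p i = p (eps i) := rfl
      have hPj : Pv p j = p (eps j) := rfl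
      rcases he with rfl | rfl <;> rcases hf' with rfl | rfl <;> omega
    · rw [hv_lv hij]

lemma psi_encode (f : AddSubgroup.closure D4set →+ ℤ)
    (hf : ∀ α, ∀ h : α ∈ D4set, p α = f ⟨α, AddSubgroup.subset_closure h⟩) {b : Fin 4 → ℤ} {m : ℤ} (h : PsiZ (Pv p) b m) :
    (hv b, (m : ℝ)) ∈ PsiPE62 p := by
  obtain ⟨hphi, hdvd⟩ := h
  rcases hphi with h | ⟨hl, hm⟩
  · have htp := two_p_hv p f hf h
    obtain ⟨r, hr⟩ : ∃ r : ℤ, m = p (hv b) + 2*r := ⟨(m - p (hv b))/2, by omega⟩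
    refine Or.inl ⟨hv b, hv_mem_D4 h, r, ?_⟩
    rw [hr]
  · obtain ⟨i, j, a, c, hij, ha, hc, rfl⟩ := longZ_eq hl
    obtain ⟨e, he, rfl⟩ := pm2 ha
    obtain ⟨f', hf'', rfl⟩ := pm2 hc
    rw [dz_lv hij] at hdvd
    have hPi : Pv p i = p (eps i) := rfl
    have hPj : Pv p j = p (eps j) := rfl
    obtain ⟨r, rfl⟩ := hm
    have hmod : Int.ModEq 2 (p (eps i)) (p (eps j)) := by
      show p (eps i) % 2 = p (eps j) % 2
      rcases he with rfl | rfl <;> rcases hf'' with rfl | rfl <;> omega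
    refine Or.inr ⟨i, j, hij, hmod, (e : ℝ), (f' : ℝ),
      by rcases he with rfl | rfl <;> norm_num [PM],
      by rcases hf'' with rfl | rfl <;> norm_num [PM], r, ?_⟩
    rw [hv_lv hij]


end P

/-! ### helper vector identities -/

lemma neg_sv (k : Fin 4) (a : ℤ) : -(sv k a) = sv k (-a) := by
  funext l
  show -(if l = k then a else 0) = (if l = k then -a else 0)
  split_ifs <;> ring

lemma shortZ_sv (k : Fin 4) {a : ℤ} (ha : a = 2 ∨ a = -2) : shortZ (sv k a) :=
  ⟨k, by simpa [sv] using ha, fun l hl => by simp [sv, hl]⟩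

lemma longZ_lv {i j : Fin 4} (hij : i ≠ j) {a c : ℤ} (ha : a = 2 ∨ a = -2)
    (hc : c = 2 ∨ c = -2) : longZ (lv i j a c) :=
  ⟨i, j, hij, by simpa [lv] using ha, by simp [lv, Ne.symm hij]; omega,
    fun l hl hl' => by simp [lv, hl, hl']⟩

lemma lv_add_svi {i j : Fin 4} (hij : i ≠ j) (s t : ℤ) :
    lv i j s t + sv i (-s) = sv j t := by
  funext k
  show (if k = i then s else if k = j then t else 0) + (if k = i then -s else 0)
      = (if k = j then t else 0)
  by_cases h1 : k = i
  · subst h1; rw [if_pos rfl, if_pos rfl, if_neg hij]; ring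
  · rw [if_neg h1, if_neg h1]; ring

lemma lv_add_svj {i j : Fin 4} (hij : i ≠ j) (s t : ℤ) :
    lv i j s t + sv j (-t) = sv i s := by
  funext k
  show (if k = i then s else if k = j then t else 0) + (if k = j then -t else 0)
      = (if k = i then s else 0)
  by_cases h1 : k = i
  · subst h1; rw [if_pos rfl, if_pos rfl, if_neg hij]; ring
  · by_cases h2 : k = j
    · subst h2; rw [if_neg h1, if_pos rfl, if_pos rfl, if_neg h1]; ring
    · rw [if_neg h1, if_neg h2, if_neg h2, if_neg h1]; ring

lemma dz_expand (b P : Fin 4 → ℤ) : dz b P = b 0 * P 0 + b 1 * P 1 + b 2 * P 2 + b 3 * P 3 := by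
  simp [dz, Fin.sum_univ_four]

lemma half_dz_even {b P : Fin 4 → ℤ} (hb : halfZ b)
    (hP : 2 ∣ (P 0 + P 1 + P 2 + P 3)) : 2 ∣ dz b P := by
  rw [dz_expand]
  rcases hb 0 with h0 | h0 <;> rcases hb 1 with h1 | h1 <;> rcases hb 2 with h2 | h2 <;>
    rcases hb 3 with h3 | h3 <;> rw [h0, h1, h2, h3] <;> omega

/-! ### The generating chain for maximality -/

section Chain

variable {P : Fin 4 → ℤ} {D : (Fin 4 → ℤ) → ℤ → Prop}
variable (hP : 2 ∣ (P 0 + P 1 + P 2 + P 3))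
variable (hDpsi : ∀ b m, PsiZ P b m → D b m)
variable (hDsum : ∀ b m b' m', D b m → D b' m' → PhiZ (b + b') (m + m') → D (b + b') (m + m'))
variable (hDneg : ∀ b m, D b m → D (-b) (-m))

include hP hDpsi hDsum hDneg

lemma stepB {i j : Fin 4} {s t mL : ℤ} (hij : i ≠ j) (hs : s = 2 ∨ s = -2)
    (ht : t = 2 ∨ t = -2) (hmL : 2 ∣ mL) (hbad : (P i + P j) % 2 = 1)
    (hD : D (lv i j s t) mL) : ∀ b m', PhiZ b m' → D b m' := by
  -- all levels at short root (j, t)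
  have hCj1 : ∀ c : ℤ, D (sv j t) c := by
    intro c
    by_cases hc : (c + P j) % 2 = 0
    · exact hDpsi _ _ ⟨Or.inl (Or.inl (shortZ_sv j ht)), by rw [dz_sv]; rcases ht with rfl | rfl <;> omega⟩
    · have hy : D (sv i (-s)) (c - mL) := by
        refine hDpsi _ _ ⟨Or.inl (Or.inl (shortZ_sv i (by omega))), ?_⟩
        rw [dz_sv]
        rcases hs with rfl | rfl <;> omega
      have hsum := hDsum _ _ _ _ hD hy (by
        rw [lv_add_svi hij]
        exact Or.inl (Or.inl (shortZ_sv j ht)))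
      rw [lv_add_svi hij, show mL + (c - mL) = c by ring] at hsum
      exact hsum
  -- all levels, both signs, at index j
  have hCj : ∀ a c : ℤ, (a = 2 ∨ a = -2) → D (sv j a) c := by
    intro a c ha
    have hat : a = t ∨ a = -t := by omega
    rcases hat with rfl | rfl
    · exact hCj1 c
    · have := hDneg _ _ (hCj1 (-c))
      rw [neg_sv, neg_neg] at this
      exact this
  -- all levels, both signs, at index i
  have hCi : ∀ a c : ℤ, (a = 2 ∨ a = -2) → D (sv i a) c := by
    have hCi1 : ∀ c : ℤ, D (sv i s) c := by
      intro c
      have hsum := hDsum _ _ _ _ hD (hCj (-t) (c - mL) (by omega)) (by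
        rw [lv_add_svj hij]
        exact Or.inl (Or.inl (shortZ_sv i hs)))
      rw [lv_add_svj hij, show mL + (c - mL) = c by ring] at hsum
      exact hsum
    intro a c ha
    have has : a = s ∨ a = -s := by omega
    rcases has with rfl | rfl
    · exact hCi1 c
    · have := hDneg _ _ (hCi1 (-c))
      rw [neg_sv, neg_neg] at this
      exact this
  -- all half roots at all levels
  have hChalf : ∀ h : Fin 4 → ℤ, halfZ h → ∀ c : ℤ, D h c := by
    intro h hh c
    set h' : Fin 4 → ℤ := fun k => if k = j then -(h j) else h k with hh'def
    have hh' : halfZ h' := by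
      intro k
      dsimp only [h']
      split_ifs
      · rcases hh j with h1 | h1 <;> rw [h1] <;> simp
      · exact hh k
    obtain ⟨u, hu⟩ := half_dz_even hh' hP
    have hy : D h' u := hDpsi _ _ ⟨Or.inl (Or.inr hh'), by omega⟩
    have hz : D (sv j (2 * h j)) (c - u) := hCj (2 * h j) (c - u) (by rcases hh j with h1 | h1 <;> rw [h1] <;> omega)
    have hadd : h' + sv j (2 * h j) = h := by
      funext k
      show (if k = j then -(h j) else h k) + (if k = j then 2 * h j else 0) = h k
      by_cases hk : k = j
      · subst hk; rw [if_pos rfl, if_pos rfl]; ring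
      · rw [if_neg hk, if_neg hk]; ring
    have hsum := hDsum _ _ _ _ hy hz (by
      rw [hadd]
      exact Or.inl (Or.inr hh))
    rw [hadd, show u + (c - u) = c by ring] at hsum
    exact hsum
  -- all short roots at all levels
  have hCshort : ∀ (k : Fin 4) (a c : ℤ), (a = 2 ∨ a = -2) → D (sv k a) c := by
    intro k a c ha
    obtain ⟨e, he, rfl⟩ := pm2 ha
    set h1 : Fin 4 → ℤ := fun l => if l = k then e else 1 with hh1
    set h2 : Fin 4 → ℤ := fun l => if l = k then e else -1 with hh2
    have hhalf1 : halfZ h1 := fun l => by dsimp only [h1]; split_ifs <;> omega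
    have hhalf2 : halfZ h2 := fun l => by dsimp only [h2]; split_ifs <;> omega
    have hadd : h1 + h2 = sv k (2 * e) := by
      funext l
      show (if l = k then e else 1) + (if l = k then e else -1) = (if l = k then 2 * e else 0)
      split_ifs <;> ring
    have hsum := hDsum _ _ _ _ (hChalf h1 hhalf1 c) (hChalf h2 hhalf2 0) (by
      rw [hadd]
      exact Or.inl (Or.inl (shortZ_sv k (by omega))))
    rw [hadd, add_zero] at hsum
    exact hsum
  -- all long roots at all even levels
  have hClong : ∀ (k l : Fin 4) (a a' c : ℤ), k ≠ l → (a = 2 ∨ a = -2) → (a' = 2 ∨ a' = -2) →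
      2 ∣ c → D (lv k l a a') c := by
    intro k l a a' c hkl ha ha' hc
    have hsum := hDsum _ _ _ _ (hCshort k a c ha) (hCshort l a' 0 ha') (by
      rw [← lv_eq_add hkl]
      exact Or.inr ⟨longZ_lv hkl ha ha', by omega⟩)
    rw [← lv_eq_add hkl, add_zero] at hsum
    exact hsum
  -- conclusion
  intro b m' hphi
  rcases hphi with (hb | hb) | ⟨hb, hev⟩
  · obtain ⟨k, a, ha, rfl⟩ := shortZ_eq hb
    exact hCshort k a m' ha
  · exact hChalf b hb m'
  · obtain ⟨k, l, a, a', hkl, ha, ha', rfl⟩ := longZ_eq hb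
    exact hClong k l a a' m' hkl ha ha' hev

lemma chain (hodd : ∀ i, ∃ j, (P i + P j) % 2 = 1) {g : Fin 4 → ℤ} {m : ℤ}
    (hg : D g m) (hgphi : PhiZ g m) (hgbad : ¬ PsiZ P g m) :
    ∀ b m', PhiZ b m' → D b m' := by
  have hdvd : ¬ (4 ∣ 2 * m - dz g P) := fun h => hgbad ⟨hgphi, h⟩
  rcases hgphi with (hb | hb) | ⟨hb, hev⟩
  · -- short
    obtain ⟨i, a, ha, rfl⟩ := shortZ_eq hb
    rw [dz_sv] at hdvd
    obtain ⟨j, hj⟩ := hodd i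
    have hij : i ≠ j := by
      intro h
      rw [h] at hj
      omega
    have hy : D (sv j 2) (P j) := hDpsi _ _ ⟨Or.inl (Or.inl (shortZ_sv j (Or.inl rfl))), by rw [dz_sv]; omega⟩
    have hL : 2 ∣ m + P j := by rcases ha with rfl | rfl <;> omega
    have hsum := hDsum _ _ _ _ hg hy (by
      rw [← lv_eq_add hij]
      exact Or.inr ⟨longZ_lv hij ha (Or.inl rfl), hL⟩)
    rw [← lv_eq_add hij] at hsum
    exact stepB hP hDpsi hDsum hDneg hij ha (Or.inl rfl) hL hj hsum
  · -- half
    obtain ⟨j, hj⟩ := hodd 0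
    have h0j : (0 : Fin 4) ≠ j := by
      intro h
      rw [← h] at hj
      omega
    set h' : Fin 4 → ℤ := fun k => if k = 0 ∨ k = j then g k else -(g k) with hh'
    have hh'half : halfZ h' := by
      intro k
      dsimp only [h']
      split_ifs
      · exact hb k
      · rcases hb k with h1 | h1 <;> rw [h1] <;> simp
    obtain ⟨u, hu⟩ := half_dz_even hh'half hP
    have hy : D h' u := hDpsi _ _ ⟨Or.inl (Or.inr hh'half), by omega⟩
    have hadd : g + h' = lv 0 j (2 * g 0) (2 * g j) := by
      funext k
      show g k + (if k = 0 ∨ k = j then g k else -(g k))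
          = (if k = 0 then 2 * g 0 else if k = j then 2 * g j else 0)
      by_cases hk0 : k = 0
      · subst hk0; rw [if_pos (Or.inl rfl), if_pos rfl]; ring
      · by_cases hkj : k = j
        · subst hkj; rw [if_pos (Or.inr rfl), if_neg hk0, if_pos rfl]; ring
        · rw [if_neg (by tauto), if_neg hk0, if_neg hkj]; ring
    have hgdz : 2 ∣ dz g P := half_dz_even hb hP
    have hdsum : dz g P + dz h' P = 2 * g 0 * P 0 + 2 * g j * P j := by
      rw [← dz_add_left, hadd, dz_lv h0j]
    have hL : 2 ∣ m + u := by
      rcases hb 0 with h1 | h1 <;> rcases hb j with h2 | h2 <;> rw [h1, h2] at hdsum <;> omega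
    have hsum := hDsum _ _ _ _ hg hy (by
      rw [hadd]
      exact Or.inr ⟨longZ_lv h0j (by rcases hb 0 with h1 | h1 <;> omega)
        (by rcases hb j with h1 | h1 <;> omega), hL⟩)
    rw [hadd] at hsum
    exact stepB hP hDpsi hDsum hDneg h0j (by rcases hb 0 with h1 | h1 <;> omega)
      (by rcases hb j with h1 | h1 <;> omega) hL hj hsum
  · -- long
    obtain ⟨i, j, a, c, hij, ha, hc, rfl⟩ := longZ_eq hb
    rw [dz_lv hij] at hdvd
    have hbad : (P i + P j) % 2 = 1 := by rcases ha with rfl | rfl <;> rcases hc with rfl | rfl <;> omega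
    exact stepB hP hDpsi hDsum hDneg hij ha hc hev hbad hg

end Chain

/-! ### remaining glue -/

lemma phiZ_memG {b : Fin 4 → ℤ} {m : ℤ} (h : PhiZ b m) : memG b := by
  rcases h with (h | h) | ⟨h, _⟩
  · exact Or.inl h
  · exact Or.inr (Or.inr h)
  · exact Or.inr (Or.inl h)

lemma longLG : ∀ b ∈ LG, ¬(longZ b ∧ (shortZ b ∨ halfZ b)) := by decide

lemma long_excl {b : Fin 4 → ℤ} (hl : longZ b) (hsh : shortZ b ∨ halfZ b) : False :=
  longLG b (mem_LG (Or.inr (Or.inl hl))) ⟨hl, hsh⟩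

lemma exists_odd_pair (p : Euc 4 → ℤ) (h2 : ExactlyTwoEven p) :
    ∀ i, ∃ j, (Pv p i + Pv p j) % 2 = 1 := by
  intro i
  have hcard : (Finset.univ.filter fun i : Fin 4 => p (eps i) % 2 = 0).card = 2 := h2
  obtain ⟨a, ha⟩ : ∃ a, a ∈ (Finset.univ.filter fun i : Fin 4 => p (eps i) % 2 = 0) := by
    have h0 : 0 < (Finset.univ.filter fun i : Fin 4 => p (eps i) % 2 = 0).card := by omega
    obtain ⟨a, ha⟩ := Finset.card_pos.mp h0
    exact ⟨a, ha⟩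
  obtain ⟨b, hb⟩ : ∃ b, b ∉ (Finset.univ.filter fun i : Fin 4 => p (eps i) % 2 = 0) := by
    by_contra hcon
    push_neg at hcon
    have huniv := Finset.eq_univ_iff_forall.mpr hcon
    rw [huniv, Finset.card_univ] at hcard
    simp at hcard
  have hpa : p (eps a) % 2 = 0 := (Finset.mem_filter.mp ha).2
  have hpb : ¬ (p (eps b) % 2 = 0) := fun h => hb (Finset.mem_filter.mpr ⟨Finset.mem_univ _, h⟩)
  have hPi : Pv p i = p (eps i) := rfl
  have hPa : Pv p a = p (eps a) := rfl
  have hPb : Pv p b = p (eps b) := rfl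
  by_cases hi : p (eps i) % 2 = 0
  · exact ⟨b, by omega⟩
  · exact ⟨a, by omega⟩

lemma pair_add (b b' : Fin 4 → ℤ) (m m' : ℤ) :
    (hv b, (m : ℝ)) + (hv b', (m' : ℝ)) = (hv (b + b'), ((m + m' : ℤ) : ℝ)) := by
  rw [Prod.mk_add_mk, hv_add]
  norm_num

end St16

open St16



/-- If `p : 𝒟_4 → ℤ` is `ℤ`-linear and exactly two of the
`p(ε_i)` are even, then `Ψ_p` is a maximal closed subroot system of the affine root
system of type `E_6^{(2)}`. -/
theorem statement16 (p : Euc 4 → ℤ) (hp : IsZLinearOn D4set p)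
    (h2 : ExactlyTwoEven p) :
    IsMaximalClosedSubrootSystem PhiE62 (PsiPE62 p) := by
  classical
  obtain ⟨f, hf⟩ := hp
  have hP4 : 2 ∣ (Pv p 0 + Pv p 1 + Pv p 2 + Pv p 3) := by
    have h := sumP_even p f hf
    rwa [Fin.sum_univ_four] at h
  have hodd := exists_odd_pair p h2
  have hsubΦ : PsiPE62 p ⊆ PhiE62 := by
    intro x hx
    obtain ⟨b, m, hz, rfl⟩ := psi_decode p f hf hx
    exact phi_encode hz.1
  -- reflection closure
  have hreflΨ : ∀ x ∈ PsiPE62 p, ∀ y ∈ PsiPE62 p, reflA x y ∈ PsiPE62 p := by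
    intro x hx y hy
    obtain ⟨g, m, hzg, rfl⟩ := psi_decode p f hf hx
    obtain ⟨h, m', hzh, rfl⟩ := psi_decode p f hf hy
    have hmg : memG g := phiZ_memG hzg.1
    have hmh : memG h := phiZ_memG hzh.1
    rw [reflA_hv hmg hmh]
    apply psi_encode p f hf
    constructor
    · rcases memG_rz hmg hmh with hs | hl | hh
      · exact Or.inl (Or.inl hs)
      · refine Or.inr ⟨hl, ?_⟩
        obtain ⟨hlh, hev⟩ := longZ_rz hmg hmh hl
        have hm' : 2 ∣ m' := by
          rcases hzh.1 with hsh | ⟨_, hd⟩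
          · exact absurd hsh (fun hsh' => long_excl hlh hsh')
          · exact hd
        rcases hev with hnev | hlg
        · have : 2 ∣ nz g h * m := Dvd.dvd.mul_right (Int.dvd_of_emod_eq_zero hnev) m
          exact dvd_sub hm' this
        · have hm : 2 ∣ m := by
            rcases hzg.1 with hsg | ⟨_, hd⟩
            · exact absurd hsg (fun hsg' => long_excl hlg hsg')
            · exact hd
          exact dvd_sub hm' (Dvd.dvd.mul_left hm (nz g h))
      · exact Or.inl (Or.inr hh)
    · rw [dz_rz]
      have heq : 2 * (m' - nz g h * m) - (dz h (Pv p) - nz g h * dz g (Pv p))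
          = (2 * m' - dz h (Pv p)) - nz g h * (2 * m - dz g (Pv p)) := by ring
      rw [heq]
      exact dvd_sub hzh.2 (Dvd.dvd.mul_left hzg.2 (nz g h))
  -- sum closure
  have hsumΨ : IsClosedIn PhiE62 (PsiPE62 p) := by
    intro x hx y hy hxy
    obtain ⟨b, m, hz, rfl⟩ := psi_decode p f hf hx
    obtain ⟨b', m', hz', rfl⟩ := psi_decode p f hf hy
    rw [pair_add] at hxy ⊢
    obtain ⟨b2, m2, hphi2, heq2⟩ := phi_decode hxy
    have hb2 : b + b' = b2 := hv_inj (congrArg Prod.fst heq2)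
    have hm2 : (m + m' : ℤ) = m2 := by
      rw [Prod.mk.injEq] at heq2
      exact_mod_cast heq2.2
    rw [hb2, hm2]
    apply psi_encode p f hf
    refine ⟨hphi2, ?_⟩
    rw [← hb2, ← hm2, dz_add_left]
    have heq : 2 * (m + m') - (dz b (Pv p) + dz b' (Pv p))
        = (2 * m - dz b (Pv p)) + (2 * m' - dz b' (Pv p)) := by ring
    rw [heq]
    exact dvd_add hz.2 hz'.2
  -- properness
  have hneΨ : PsiPE62 p ≠ PhiE62 := by
    obtain ⟨j, hj⟩ := hodd 0
    have h0j : (0 : Fin 4) ≠ j := by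
      intro h
      rw [← h] at hj
      omega
    have hxin : (hv (lv 0 j 2 2), ((0 : ℤ) : ℝ)) ∈ PhiE62 :=
      phi_encode (Or.inr ⟨longZ_lv h0j (Or.inl rfl) (Or.inl rfl), ⟨0, rfl⟩⟩)
    have hxout : (hv (lv 0 j 2 2), ((0 : ℤ) : ℝ)) ∉ PsiPE62 p := by
      intro hx
      obtain ⟨b, m, hz, heq⟩ := psi_decode p f hf hx
      have hb : lv 0 j 2 2 = b := hv_inj (congrArg Prod.fst heq)
      have hm : (0 : ℤ) = m := by
        rw [Prod.mk.injEq] at heq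
        exact_mod_cast heq.2
      have hd := hz.2
      rw [← hb, ← hm, dz_lv h0j] at hd
      omega
    intro hEq
    exact hxout (hEq ▸ hxin)
  refine ⟨⟨⟨⟨(eps 0, ((p (eps 0) + 2*0 : ℤ) : ℝ)), Or.inl ⟨eps 0, eps_mem_D4 0, 0, rfl⟩⟩,
    hsubΦ, hneΨ, hreflΨ⟩, hsumΨ⟩, ?_⟩
  -- maximality
  intro Δ hΔ hsub
  obtain ⟨⟨hΔne, hΔsub, hΔneq, hΔrefl⟩, hΔclosed⟩ := hΔ
  refine Set.Subset.antisymm ?_ hsub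
  by_contra hns
  obtain ⟨x, hxΔ, hxΨ⟩ := Set.not_subset.1 hns
  obtain ⟨g, mg, hgphi, rfl⟩ := phi_decode (hΔsub hxΔ)
  have hmemOf : ∀ (b : Fin 4 → ℤ) (m : ℤ), (hv b, (m : ℝ)) ∈ Δ → memG b := by
    intro b m hb
    obtain ⟨b2, m2, hphi2, heq⟩ := phi_decode (hΔsub hb)
    rw [hv_inj (congrArg Prod.fst heq)]
    exact phiZ_memG hphi2
  have hDpsi : ∀ b m, PsiZ (Pv p) b m → (hv b, (m : ℝ)) ∈ Δ :=
    fun b m hz => hsub (psi_encode p f hf hz)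
  have hDsum : ∀ (b : Fin 4 → ℤ) (m : ℤ) (b' : Fin 4 → ℤ) (m' : ℤ), (hv b, (m : ℝ)) ∈ Δ → (hv b', (m' : ℝ)) ∈ Δ →
      PhiZ (b + b') (m + m') → (hv (b + b'), ((m + m' : ℤ) : ℝ)) ∈ Δ := by
    intro b m b' m' hb hb' hphi
    have h1 := hΔclosed _ hb _ hb' (by rw [pair_add]; exact phi_encode hphi)
    rw [pair_add] at h1
    exact h1
  have hDneg : ∀ (b : Fin 4 → ℤ) (m : ℤ), (hv b, (m : ℝ)) ∈ Δ → (hv (-b), ((-m : ℤ) : ℝ)) ∈ Δ := by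
    intro b m hb
    have hmemb : memG b := hmemOf b m hb
    have h1 := hΔrefl _ hb _ hb
    rw [reflA_hv hmemb hmemb] at h1
    have hrzz : rz b b = -b := funext fun k => by
      show b k - nz b b * b k = -(b k)
      rw [nz_self hmemb]
      ring
    rw [hrzz, show m - nz b b * m = -m by rw [nz_self hmemb]; ring] at h1
    exact h1
  have hgbad : ¬ PsiZ (Pv p) g mg := fun hz => hxΨ (psi_encode p f hf hz)
  have hall := chain hP4 hDpsi hDsum hDneg hodd hxΔ hgphi hgbad
  have hΦΔ : PhiE62 ⊆ Δ := by
    intro y hy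
    obtain ⟨b, m, hphi, rfl⟩ := phi_decode hy
    exact hall b m hphi
  exact absurd (Set.Subset.antisymm hΔsub hΦΔ) hΔneq
end
end
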